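/- arXiv:2409.13849 — 7 statements merged into one kernel-verified Lean document; each statement's English description precedes it below -/
import Mathlib

section
/- Let p ≠ r be real numbers and let f, g : [0,∞) → ℝ be continuous functions such that, for some θ₀ ≥ 0, the Laplace transforms Lf(θ) = ∫_0^∞ e^{−θx} f(x) dx and Lg(θ) = ∫_0^∞ e^{−θx} g(x) dx converge absolutely for all θ > θ₀ and satisfy (r − p)·Lf(θ)·Lg(θ) = Lg(θ) − Lf(θ) for all θ > θ₀. Then for every x ≥ 0, ∫_0^x f(x−y) g(y) dy = (g(x) − f(x))/(r − p). -/
open MeasureTheory Set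
open scoped Convolution

namespace Stmt0Aux

lemma bdd_mul_integrableOn {w u : ℝ → ℝ} (hw : IntegrableOn w (Ioi 0))
    (hu : Continuous u) {C : ℝ} (hbd : ∀ x ∈ Ioi (0:ℝ), |u x| ≤ C) :
    IntegrableOn (fun x => u x * w x) (Ioi 0) := by
  have hmeas : AEStronglyMeasurable (fun x => u x * w x) (volume.restrict (Ioi 0)) :=
    hu.aestronglyMeasurable.mul hw.aestronglyMeasurable
  refine Integrable.mono (hw.const_mul C) hmeas ?_
  refine (ae_restrict_iff' measurableSet_Ioi).2 (Filter.Eventually.of_forall fun x hx => ?_)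
  have h1 : |u x| ≤ C := hbd x hx
  have h0 : (0:ℝ) ≤ C := le_trans (abs_nonneg _) h1
  calc ‖u x * w x‖ = |u x| * |w x| := by rw [Real.norm_eq_abs, abs_mul]
    _ ≤ C * |w x| := by gcongr
    _ = ‖C * w x‖ := by rw [Real.norm_eq_abs, abs_mul, abs_of_nonneg h0]

lemma pos_case {w : ℝ → ℝ} (hw_cont : Continuous w) (hw_int : IntegrableOn w (Ioi 0))
    (hu0 : ∀ u : ℝ → ℝ, Continuous u → ∫ x in Ioi (0:ℝ), u (Real.exp (-x)) * w x = 0)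
    {x₀ : ℝ} (hx₀ : 0 < x₀) (hpos : 0 < w x₀) : False := by
  obtain ⟨δ₀, hδ₀0, hδ₀⟩ : ∃ δ > 0, ∀ x : ℝ, dist x x₀ < δ → 0 < w x := by
    have hev : ∀ᶠ x in nhds x₀, 0 < w x :=
      (hw_cont.tendsto x₀).eventually (eventually_gt_nhds hpos)
    obtain ⟨δ, hδ, h⟩ := Metric.eventually_nhds_iff.1 hev
    exact ⟨δ, hδ, fun x hx => h hx⟩
  set δ : ℝ := min δ₀ x₀ with hδ_def
  have hδpos : 0 < δ := lt_min hδ₀0 hx₀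
  have hδle : δ ≤ x₀ := min_le_right _ _
  have hδle' : δ ≤ δ₀ := min_le_left _ _
  set a : ℝ := Real.exp (-(x₀ + δ)) with ha_def
  set b : ℝ := Real.exp (-(x₀ - δ)) with hb_def
  have hab : a < b := Real.exp_lt_exp.2 (by linarith)
  set u : ℝ → ℝ := fun t => max 0 (min (t - a) (b - t)) with hu_def
  have hu_cont : Continuous u := by fun_prop
  have huint0 : ∫ x in Ioi (0:ℝ), u (Real.exp (-x)) * w x = 0 := hu0 u hu_cont
  set η : ℝ → ℝ := fun x => u (Real.exp (-x)) * w x with hη_def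
  have hη_nonneg : ∀ x ∈ Ioi (0:ℝ), 0 ≤ η x := by
    intro x _
    rcases le_or_gt (Real.exp (-x)) a with h | h
    · have hz : u (Real.exp (-x)) = 0 :=
        max_eq_left (le_trans (min_le_left _ _) (by linarith))
      simp [hη_def, hz]
    rcases le_or_gt b (Real.exp (-x)) with h' | h'
    · have hz : u (Real.exp (-x)) = 0 :=
        max_eq_left (le_trans (min_le_right _ _) (by linarith))
      simp [hη_def, hz]
    · have hx1 : x < x₀ + δ := by
        have := Real.exp_lt_exp.1 h; linarith
      have hx2 : x₀ - δ < x := by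
        have := Real.exp_lt_exp.1 h'; linarith
      have hwx : 0 < w x := hδ₀ x (by rw [Real.dist_eq, abs_lt]; constructor <;> linarith)
      exact mul_nonneg (le_max_left _ _) hwx.le
  have hu_bd : ∀ x ∈ Ioi (0:ℝ), |u (Real.exp (-x))| ≤ (b - a) / 2 := by
    intro x _
    set t := Real.exp (-x)
    have h1 : min (t - a) (b - t) ≤ (b - a) / 2 := by
      rcases le_total (t - a) (b - t) with h | h
      · rw [min_eq_left h]; linarith
      · rw [min_eq_right h]; linarith
    rw [abs_of_nonneg (le_max_left _ _)]
    exact max_le (by linarith) h1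
  have hη_int : IntegrableOn η (Ioi 0) :=
    Stmt0Aux.bdd_mul_integrableOn hw_int (by fun_prop) hu_bd
  set c : ℝ := x₀ - δ / 2 with hc_def
  set d : ℝ := x₀ + δ / 2 with hd_def
  have hc0 : 0 < c := by rw [hc_def]; linarith
  have hcd : c < d := by rw [hc_def, hd_def]; linarith
  have hpos_on : ∀ x ∈ Ioo c d, 0 < η x := by
    intro x hx
    obtain ⟨hx1, hx2⟩ := hx
    have hx1' : x₀ - δ / 2 < x := by rw [hc_def] at hx1; exact hx1
    have hx2' : x < x₀ + δ / 2 := by rw [hd_def] at hx2; exact hx2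
    have h1 : a < Real.exp (-x) := Real.exp_lt_exp.2 (by linarith)
    have h2 : Real.exp (-x) < b := Real.exp_lt_exp.2 (by linarith)
    have huu : a < Real.exp (-x) ∧ Real.exp (-x) < b := ⟨h1, h2⟩
    have hu_pos : 0 < u (Real.exp (-x)) :=
      lt_of_lt_of_le (lt_min (by linarith [huu.1]) (by linarith [huu.2])) (le_max_right _ _)
    have hwx : 0 < w x := by
      apply hδ₀ x
      rw [Real.dist_eq, abs_lt]
      constructor <;> linarith
    exact mul_pos hu_pos hwx
  have hii : IntervalIntegrable η volume c d := by
    rw [intervalIntegrable_iff_integrableOn_Ioc_of_le hcd.le]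
    exact hη_int.mono_set (fun x hx => mem_Ioi.2 (hc0.trans hx.1))
  have h1 : 0 < ∫ x in c..d, η x := intervalIntegral.intervalIntegral_pos_of_pos_on hii hpos_on hcd
  have h2 : ∫ x in c..d, η x ≤ ∫ x in Ioi (0:ℝ), η x := by
    rw [intervalIntegral.integral_of_le hcd.le]
    refine setIntegral_mono_set hη_int
      ((ae_restrict_iff' measurableSet_Ioi).2 (Filter.Eventually.of_forall hη_nonneg)) ?_
    exact HasSubset.Subset.eventuallyLE (fun x hx => mem_Ioi.2 (hc0.trans hx.1))
  rw [huint0] at h2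
  linarith

lemma lap_unique (θ₀ : ℝ) (hθ₀ : 0 ≤ θ₀) (k : ℝ → ℝ) (hk : Continuous k)
    (hki : ∀ θ > θ₀, IntegrableOn (fun x => Real.exp (-θ * x) * k x) (Ioi 0))
    (hk0 : ∀ θ > θ₀, ∫ x in Ioi (0:ℝ), Real.exp (-θ * x) * k x = 0) :
    ∀ x ≥ (0:ℝ), k x = 0 := by
  set θ₁ : ℝ := θ₀ + 1 with hθ₁_def
  set w : ℝ → ℝ := fun x => Real.exp (-θ₁ * x) * k x with hw_def
  have hw_cont : Continuous w := by fun_prop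
  have hw_int : IntegrableOn w (Ioi 0) := hki θ₁ (by rw [hθ₁_def]; linarith)
  have hmom : ∀ n : ℕ, ∫ x in Ioi (0:ℝ), Real.exp (-x) ^ n * w x = 0 := by
    intro n
    have h1 : ∀ x : ℝ, Real.exp (-x) ^ n * w x = Real.exp (-(θ₁ + n) * x) * k x := by
      intro x
      rw [hw_def]
      rw [← Real.exp_nat_mul, ← mul_assoc, ← Real.exp_add]
      ring_nf
    simp_rw [h1]
    exact hk0 (θ₁ + n) (by rw [hθ₁_def]; have := Nat.cast_nonneg (α := ℝ) n; linarith)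
  have hexp_bd : ∀ i : ℕ, ∀ x ∈ Ioi (0:ℝ), |Real.exp (-x) ^ i| ≤ 1 := by
    intro i x hx
    rw [abs_pow, abs_of_nonneg (Real.exp_pos _).le]
    exact pow_le_one₀ (Real.exp_pos _).le (Real.exp_le_one_iff.2 (by simp [le_of_lt (mem_Ioi.1 hx)]))
  have hint : ∀ i : ℕ, IntegrableOn (fun x => Real.exp (-x) ^ i * w x) (Ioi 0) := fun i =>
    Stmt0Aux.bdd_mul_integrableOn hw_int (by fun_prop) (hexp_bd i)
  have hpoly : ∀ P : Polynomial ℝ,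
      ∫ x in Ioi (0:ℝ), Polynomial.eval (Real.exp (-x)) P * w x = 0 := by
    intro P
    have hexpand : ∀ x : ℝ, Polynomial.eval (Real.exp (-x)) P * w x =
        ∑ i ∈ Finset.range (P.natDegree + 1), P.coeff i * (Real.exp (-x) ^ i * w x) := by
      intro x
      rw [Polynomial.eval_eq_sum_range, Finset.sum_mul]
      exact Finset.sum_congr rfl (fun i _ => by ring)
    simp_rw [hexpand]
    rw [integral_finset_sum _ (fun i _ => ((hint i).const_mul _))]
    refine Finset.sum_eq_zero (fun i _ => ?_)
    rw [integral_const_mul, hmom i, mul_zero]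
  have hmem : ∀ x : ℝ, x ∈ Ioi (0:ℝ) → Real.exp (-x) ∈ Icc (0:ℝ) 1 := fun x hx =>
    ⟨(Real.exp_pos _).le, Real.exp_le_one_iff.2 (by simp [le_of_lt (mem_Ioi.1 hx)])⟩
  have hucont : ∀ u : ℝ → ℝ, Continuous u →
      ∫ x in Ioi (0:ℝ), u (Real.exp (-x)) * w x = 0 := by
    intro u hu
    set I : ℝ := ∫ x in Ioi (0:ℝ), u (Real.exp (-x)) * w x with hI_def
    set M : ℝ := ∫ x in Ioi (0:ℝ), |w x| with hM_def
    have hM0 : 0 ≤ M := setIntegral_nonneg measurableSet_Ioi (fun x _ => abs_nonneg _)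
    obtain ⟨C, hC⟩ := isCompact_Icc.exists_bound_of_continuousOn
      (hu.continuousOn (s := Icc (0:ℝ) 1))
    have hIint : IntegrableOn (fun x => u (Real.exp (-x)) * w x) (Ioi 0) :=
      Stmt0Aux.bdd_mul_integrableOn hw_int (by fun_prop) (fun x hx => hC _ (hmem x hx))
    have key : ∀ ε > (0:ℝ), |I| ≤ ε * M := by
      intro ε hε
      obtain ⟨P, hP⟩ :=
        exists_polynomial_near_of_continuousOn 0 1 u (hu.continuousOn) ε hε
      obtain ⟨D, hD⟩ := isCompact_Icc.exists_bound_of_continuousOn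
        ((Polynomial.continuous P).continuousOn (s := Icc (0:ℝ) 1))
      have hPint : IntegrableOn (fun x => Polynomial.eval (Real.exp (-x)) P * w x) (Ioi 0) :=
        Stmt0Aux.bdd_mul_integrableOn hw_int (by fun_prop) (fun x hx => hD _ (hmem x hx))
      have hIeq : I = ∫ x in Ioi (0:ℝ),
          (u (Real.exp (-x)) - Polynomial.eval (Real.exp (-x)) P) * w x := by
        rw [show (fun x => (u (Real.exp (-x)) - Polynomial.eval (Real.exp (-x)) P) * w x) =
            fun x => u (Real.exp (-x)) * w x - Polynomial.eval (Real.exp (-x)) P * w x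
            from funext fun x => by ring]
        rw [integral_sub hIint hPint, hpoly P, sub_zero, hI_def]
      rw [hIeq]
      have hb : ∀ᵐ x ∂(volume.restrict (Ioi (0:ℝ))),
          ‖(u (Real.exp (-x)) - Polynomial.eval (Real.exp (-x)) P) * w x‖ ≤ ε * |w x| := by
        refine (ae_restrict_iff' measurableSet_Ioi).2 (Filter.Eventually.of_forall fun x hx => ?_)
        rw [Real.norm_eq_abs, abs_mul]
        have := hP _ (hmem x hx)
        have h2 : |u (Real.exp (-x)) - Polynomial.eval (Real.exp (-x)) P| ≤ ε := by
          rw [abs_sub_comm]; exact this.le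
        exact mul_le_mul_of_nonneg_right h2 (abs_nonneg _) |>.trans (le_refl _)
      calc |∫ x in Ioi (0:ℝ), (u (Real.exp (-x)) - Polynomial.eval (Real.exp (-x)) P) * w x|
          ≤ ∫ x in Ioi (0:ℝ), ε * |w x| := by
            rw [← Real.norm_eq_abs]
            exact norm_integral_le_of_norm_le (hw_int.abs.const_mul ε) hb
        _ = ε * M := by rw [integral_const_mul, hM_def]
    by_contra hne
    have h0 : 0 < |I| := abs_pos.2 hne
    have h1 := key (|I| / (2 * (M + 1))) (by positivity)
    have hlt : |I| / (2 * (M + 1)) * M < |I| := by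
      rw [div_mul_eq_mul_div, div_lt_iff₀ (by positivity)]
      nlinarith
    linarith
  have hw0 : ∀ x ∈ Ioi (0:ℝ), w x = 0 := by
    intro x₀ hx₀
    by_contra hne
    rcases lt_or_gt_of_ne hne with h | h
    · refine pos_case (w := fun x => -w x) (by fun_prop) hw_int.neg ?_ (mem_Ioi.1 hx₀)
        (by simpa using h)
      intro u hu
      simp only [mul_neg]
      rw [integral_neg, hucont u hu, neg_zero]
    · exact pos_case hw_cont hw_int hucont (mem_Ioi.1 hx₀) h
  have hk_zero_Ioi : ∀ x ∈ Ioi (0:ℝ), k x = 0 := by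
    intro x hx
    have h := hw0 x hx
    rw [hw_def] at h
    rcases mul_eq_zero.1 h with h' | h'
    · exact absurd h' (Real.exp_pos _).ne'
    · exact h'
  intro x hx
  rcases eq_or_lt_of_le hx with h0 | h0
  · have h1 : Filter.Tendsto k (nhdsWithin 0 (Ioi 0)) (nhds (k 0)) :=
      (hk.tendsto 0).mono_left nhdsWithin_le_nhds
    have h2 : Filter.Tendsto k (nhdsWithin 0 (Ioi 0)) (nhds 0) := by
      refine Filter.Tendsto.congr' ?_ tendsto_const_nhds
      filter_upwards [self_mem_nhdsWithin] with y hy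
      exact (hk_zero_Ioi y hy).symm
    rw [← h0]
    exact tendsto_nhds_unique h1 h2
  · exact hk_zero_Ioi x h0

end Stmt0Aux

/-- abstract Laplace-transform form of the scale-function
convolution identity `∫_0^x f(x-y) g(y) dy = (g(x) - f(x))/(r - p)`. -/
theorem stmt0 (p r : ℝ) (hpr : p ≠ r) (f g : ℝ → ℝ)
    (hf : ContinuousOn f (Ici 0)) (hg : ContinuousOn g (Ici 0))
    (θ₀ : ℝ) (hθ₀ : 0 ≤ θ₀)
    (hfint : ∀ θ > θ₀, IntegrableOn (fun x => Real.exp (-θ * x) * f x) (Ioi 0))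
    (hgint : ∀ θ > θ₀, IntegrableOn (fun x => Real.exp (-θ * x) * g x) (Ioi 0))
    (hLap : ∀ θ > θ₀,
      (r - p) * (∫ x in Ioi (0:ℝ), Real.exp (-θ * x) * f x) *
        (∫ x in Ioi (0:ℝ), Real.exp (-θ * x) * g x) =
      (∫ x in Ioi (0:ℝ), Real.exp (-θ * x) * g x) -
        (∫ x in Ioi (0:ℝ), Real.exp (-θ * x) * f x)) :
    ∀ x ≥ (0:ℝ), (∫ y in (0:ℝ)..x, f (x - y) * g y) = (g x - f x) / (r - p) := by
  have hrp : r - p ≠ 0 := sub_ne_zero.2 (Ne.symm hpr)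
  set F : ℝ → ℝ := fun x => f (max x 0) with hF_def
  set G : ℝ → ℝ := fun x => g (max x 0) with hG_def
  have hFc : Continuous F :=
    hf.comp_continuous (continuous_id.max continuous_const) (fun x => le_max_right x 0)
  have hGc : Continuous G :=
    hg.comp_continuous (continuous_id.max continuous_const) (fun x => le_max_right x 0)
  have hFeq' : ∀ x : ℝ, 0 ≤ x → F x = f x := fun x hx => by
    rw [hF_def]; simp [max_eq_left hx]
  have hGeq' : ∀ x : ℝ, 0 ≤ x → G x = g x := fun x hx => by
    rw [hG_def]; simp [max_eq_left hx]
  have hFint : ∀ θ > θ₀, IntegrableOn (fun x => Real.exp (-θ * x) * F x) (Ioi 0) := fun θ hθ =>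
    (hfint θ hθ).congr_fun (fun x hx => by rw [hFeq' x (le_of_lt hx)]) measurableSet_Ioi
  have hGint : ∀ θ > θ₀, IntegrableOn (fun x => Real.exp (-θ * x) * G x) (Ioi 0) := fun θ hθ =>
    (hgint θ hθ).congr_fun (fun x hx => by rw [hGeq' x (le_of_lt hx)]) measurableSet_Ioi
  have hFL : ∀ θ : ℝ, ∫ x in Ioi (0:ℝ), Real.exp (-θ * x) * F x
      = ∫ x in Ioi (0:ℝ), Real.exp (-θ * x) * f x := fun θ =>
    setIntegral_congr_fun measurableSet_Ioi (fun x hx => by rw [hFeq' x (le_of_lt hx)])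
  have hGL : ∀ θ : ℝ, ∫ x in Ioi (0:ℝ), Real.exp (-θ * x) * G x
      = ∫ x in Ioi (0:ℝ), Real.exp (-θ * x) * g x := fun θ =>
    setIntegral_congr_fun measurableSet_Ioi (fun x hx => by rw [hGeq' x (le_of_lt hx)])
  set conv : ℝ → ℝ := fun x => ∫ t in (0:ℝ)..x, F t * G (x - t) with hconv_def
  have hconv_cont : Continuous conv := by
    exact intervalIntegral.continuous_parametric_intervalIntegral_of_continuous
      (by fun_prop) continuous_id
  set k : ℝ → ℝ := fun x => (r - p) * conv x - (G x - F x) with hk_def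
  have hkc : Continuous k := by fun_prop
  set L : ℝ →L[ℝ] ℝ →L[ℝ] ℝ := ContinuousLinearMap.mul ℝ ℝ with hL_def
  have key : ∀ θ > θ₀, IntegrableOn (fun x => Real.exp (-θ * x) * conv x) (Ioi 0) ∧
      ∫ x in Ioi (0:ℝ), Real.exp (-θ * x) * conv x =
        (∫ x in Ioi (0:ℝ), Real.exp (-θ * x) * F x) *
          (∫ x in Ioi (0:ℝ), Real.exp (-θ * x) * G x) := by
    intro θ hθ
    set F₁ : ℝ → ℝ := (Ioi (0:ℝ)).indicator (fun x => Real.exp (-θ * x) * F x) with hF₁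
    set G₁ : ℝ → ℝ := (Ioi (0:ℝ)).indicator (fun x => Real.exp (-θ * x) * G x) with hG₁
    have hF₁i : Integrable F₁ := (integrable_indicator_iff measurableSet_Ioi).2 (hFint θ hθ)
    have hG₁i : Integrable G₁ := (integrable_indicator_iff measurableSet_Ioi).2 (hGint θ hθ)
    have hcv : ∀ x ∈ Ioi (0:ℝ), (F₁ ⋆[L] G₁) x = Real.exp (-θ * x) * conv x := by
      intro x hx
      have hx' : (0:ℝ) < x := hx
      rw [convolution_def]
      have hpt : ∀ t : ℝ, L (F₁ t) (G₁ (x - t)) =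
          (Ioo (0:ℝ) x).indicator (fun t => Real.exp (-θ * x) * (F t * G (x - t))) t := by
        intro t
        simp only [hL_def, ContinuousLinearMap.mul_apply']
        by_cases ht : t ∈ Ioo (0:ℝ) x
        · have h1 : t ∈ Ioi (0:ℝ) := ht.1
          have h2 : x - t ∈ Ioi (0:ℝ) := mem_Ioi.2 (by linarith [ht.2])
          rw [indicator_of_mem ht, hF₁, hG₁, indicator_of_mem h1, indicator_of_mem h2]
          rw [show Real.exp (-θ * t) * F t * (Real.exp (-θ * (x - t)) * G (x - t)) =
              Real.exp (-θ * t) * Real.exp (-θ * (x - t)) * (F t * G (x - t)) from by ring,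
            ← Real.exp_add, show -θ * t + -θ * (x - t) = -θ * x from by ring]
        · rw [indicator_of_notMem ht]
          by_cases h1 : 0 < t
          · have h2 : x - t ∉ Ioi (0:ℝ) := by
              simp only [mem_Ioi, not_lt]
              linarith [(show 0 < t → x ≤ t by simpa [mem_Ioo] using ht) h1]
            rw [hG₁, indicator_of_notMem h2, mul_zero]
          · rw [hF₁, indicator_of_notMem (by simpa using h1), zero_mul]
      simp_rw [hpt]
      rw [integral_indicator measurableSet_Ioo, integral_const_mul]
      congr 1
      simp only [hconv_def]
      rw [intervalIntegral.integral_of_le hx'.le, integral_Ioc_eq_integral_Ioo]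
    have hcv0 : ∀ x : ℝ, x ≤ 0 → (F₁ ⋆[L] G₁) x = 0 := by
      intro x hx
      rw [convolution_def]
      have hz : ∀ t : ℝ, L (F₁ t) (G₁ (x - t)) = 0 := by
        intro t
        simp only [hL_def, ContinuousLinearMap.mul_apply']
        by_cases h1 : 0 < t
        · have h2 : x - t ∉ Ioi (0:ℝ) := by simp only [mem_Ioi, not_lt]; linarith
          rw [hG₁, indicator_of_notMem h2, mul_zero]
        · rw [hF₁, indicator_of_notMem (by simpa using h1), zero_mul]
      simp only [hz, integral_zero]
    have hconv_int : Integrable (F₁ ⋆[L] G₁) := hF₁i.integrable_convolution L hG₁i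
    have hIoi : IntegrableOn (fun x => Real.exp (-θ * x) * conv x) (Ioi 0) :=
      hconv_int.integrableOn.congr_fun (fun x hx => hcv x hx) measurableSet_Ioi
    refine ⟨hIoi, ?_⟩
    have h1 : ∫ x in Ioi (0:ℝ), Real.exp (-θ * x) * conv x = ∫ x in Ioi (0:ℝ), (F₁ ⋆[L] G₁) x :=
      setIntegral_congr_fun measurableSet_Ioi (fun x hx => (hcv x hx).symm)
    have h2 : ∫ x in Ioi (0:ℝ), (F₁ ⋆[L] G₁) x = ∫ x, (F₁ ⋆[L] G₁) x :=
      setIntegral_eq_integral_of_forall_compl_eq_zero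
        (fun x hx => hcv0 x (by simpa using hx))
    have h3 := integral_convolution L hF₁i hG₁i
    rw [h1, h2, h3]
    simp only [hL_def, ContinuousLinearMap.mul_apply']
    rw [hF₁, hG₁, integral_indicator measurableSet_Ioi, integral_indicator measurableSet_Ioi]
  have hki : ∀ θ > θ₀, IntegrableOn (fun x => Real.exp (-θ * x) * k x) (Ioi 0) := by
    intro θ hθ
    have h1 := (key θ hθ).1
    rw [show (fun x => Real.exp (-θ * x) * k x) =
        fun x => (r - p) * (Real.exp (-θ * x) * conv x) -
          (Real.exp (-θ * x) * G x - Real.exp (-θ * x) * F x)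
        from funext fun x => by rw [hk_def]; ring]
    exact (h1.const_mul _).sub ((hGint θ hθ).sub (hFint θ hθ))
  have hk0 : ∀ θ > θ₀, ∫ x in Ioi (0:ℝ), Real.exp (-θ * x) * k x = 0 := by
    intro θ hθ
    obtain ⟨h1, h2⟩ := key θ hθ
    rw [show (fun x => Real.exp (-θ * x) * k x) =
        fun x => (r - p) * (Real.exp (-θ * x) * conv x) -
          (Real.exp (-θ * x) * G x - Real.exp (-θ * x) * F x)
        from funext fun x => by rw [hk_def]; ring]
    have hcm : IntegrableOn (fun x => (r - p) * (Real.exp (-θ * x) * conv x)) (Ioi 0) :=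
      h1.const_mul _
    have hsub : IntegrableOn
        (fun x => Real.exp (-θ * x) * G x - Real.exp (-θ * x) * F x) (Ioi 0) :=
      (hGint θ hθ).sub (hFint θ hθ)
    rw [integral_sub hcm hsub, integral_const_mul,
      integral_sub (hGint θ hθ) (hFint θ hθ), h2, hFL θ, hGL θ]
    have hl := hLap θ hθ
    rw [← mul_assoc]
    linarith
  have hkz := Stmt0Aux.lap_unique θ₀ hθ₀ k hkc hki hk0
  intro x hx
  have h1 : k x = 0 := hkz x hx
  simp only [hk_def] at h1
  have h2 : conv x = (G x - F x) / (r - p) := by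
    field_simp
    linear_combination h1
  have h3 : (∫ y in (0:ℝ)..x, f (x - y) * g y) = conv x := by
    have e1 : EqOn (fun y => f (x - y) * g y) (fun y => F (x - y) * G y) (uIcc (0:ℝ) x) := by
      intro y hy
      rw [uIcc_of_le hx] at hy
      simp only
      rw [hFeq' _ (by rcases hy with ⟨h1', h2'⟩; linarith), hGeq' _ hy.1]
    rw [intervalIntegral.integral_congr e1]
    have e2 := intervalIntegral.integral_comp_sub_left (a := 0) (b := x)
      (fun t => F t * G (x - t)) x
    simp only [sub_self, sub_zero, sub_sub_cancel] at e2
    rw [e2]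
  rw [h3, h2, hFeq' x hx, hGeq' x hx]
end

section
/- Let p, r, s be real numbers with p ≠ r, s ≠ p, s ≠ r, and let λ > 0. Let f, g : ℝ → ℝ vanish on (−∞,0) and be continuous on [0,∞), and assume: (i) for all x ≥ 0, ∫_0^x f(x−y) g(y) dy = (g(x) − f(x))/(r − p); (ii) ∫_0^∞ e^{−λy} g(y) dy = 1/(s − r); and (iii) for every x ≥ 0 the integrals ∫_0^∞ e^{−λz} |f(x+z)| dz and ∫_0^∞ e^{−λz} |g(x+z)| dz are finite. Define Z_p(x) = (s − p) ∫_0^∞ e^{−λz} f(x+z) dz and Z_r(x) = (s − r) ∫_0^∞ e^{−λz} g(x+z) dz for x ∈ ℝ. Then for all x ≥ 0, ∫_0^x f(x−y) Z_r(y) dy = (Z_r(x) − Z_p(x))/(r − p). -/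
open MeasureTheory Set

private lemma aux_aemeas {g : ℝ → ℝ} (hg0 : ∀ x < (0:ℝ), g x = 0)
    (hgc : ContinuousOn g (Ici 0)) : AEMeasurable g (volume : Measure ℝ) := by
  have h1 : AEMeasurable g ((volume : Measure ℝ).restrict (Iio 0)) := by
    refine (aemeasurable_const (b := (0:ℝ))).congr ?_
    filter_upwards [ae_restrict_mem measurableSet_Iio] with t ht
    exact (hg0 t ht).symm
  have h2 : AEMeasurable g ((volume : Measure ℝ).restrict (Ici 0)) :=
    hgc.aemeasurable measurableSet_Ici
  have h3 := h1.add_measure h2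
  rwa [← Measure.restrict_union (Iio_disjoint_Ici le_rfl) measurableSet_Ici,
    Iio_union_Ici, Measure.restrict_univ] at h3

private lemma aux_shift_integral (h : ℝ → ℝ) (a : ℝ) :
    ∫ z in Ioi a, h z = ∫ w in Ioi (0:ℝ), h (w + a) := by
  have A : MeasurableEmbedding (fun w : ℝ => w + a) :=
    (Homeomorph.addRight a).isClosedEmbedding.measurableEmbedding
  calc ∫ z in Ioi a, h z
      = ∫ z in Ioi a, h z ∂(Measure.map (fun w => w + a) volume) := by
        rw [map_add_right_eq_self]
    _ = ∫ w in (fun w => w + a) ⁻¹' (Ioi a), h (w + a) := A.setIntegral_map h (Ioi a)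
    _ = ∫ w in Ioi (0:ℝ), h (w + a) := by
        congr 1
        ext w; simp

private lemma aux_shift_integrableOn {h : ℝ → ℝ} {a : ℝ}
    (hi : IntegrableOn (fun w => h (w + a)) (Ioi (0:ℝ))) : IntegrableOn h (Ioi a) := by
  have A : MeasurableEmbedding (fun w : ℝ => w + a) :=
    (Homeomorph.addRight a).isClosedEmbedding.measurableEmbedding
  have h1 := (A.integrableOn_map_iff (f := h) (s := Ioi a) (μ := volume))
  rw [map_add_right_eq_self] at h1
  rw [h1]
  have h2 : (fun w : ℝ => w + a) ⁻¹' (Ioi a) = Ioi 0 := by ext w; simp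
  rw [h2]
  exact hi

/-- abstract form of the identity
`∫_a^x W_p(x-y) Z_r(y-a;Φ(s)) dy = (Z_r(x-a;Φ(s)) - Z_p(x-a;Φ(s)))/(r-p)`,
where `Z_p(x) = (s-p) ∫_0^∞ e^{-λ z} f(x+z) dz` and
`Z_r(x) = (s-r) ∫_0^∞ e^{-λ z} g(x+z) dz`. -/
theorem stmt1 (p r s lam : ℝ) (hpr : p ≠ r) (hsp : s ≠ p) (hsr : s ≠ r) (hlam : 0 < lam)
    (f g : ℝ → ℝ)
    (hf0 : ∀ x < (0:ℝ), f x = 0) (hg0 : ∀ x < (0:ℝ), g x = 0)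
    (hfc : ContinuousOn f (Ici 0)) (hgc : ContinuousOn g (Ici 0))
    (hconv : ∀ x ≥ (0:ℝ), (∫ y in (0:ℝ)..x, f (x - y) * g y) = (g x - f x) / (r - p))
    (hgLap : (∫ y in Ioi (0:ℝ), Real.exp (-lam * y) * g y) = 1 / (s - r))
    (hfint : ∀ x ≥ (0:ℝ), IntegrableOn (fun z => Real.exp (-lam * z) * |f (x + z)|) (Ioi 0))
    (hgint : ∀ x ≥ (0:ℝ), IntegrableOn (fun z => Real.exp (-lam * z) * |g (x + z)|) (Ioi 0)) :
    ∀ x ≥ (0:ℝ),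
      (∫ y in (0:ℝ)..x,
          f (x - y) * ((s - r) * ∫ z in Ioi (0:ℝ), Real.exp (-lam * z) * g (y + z))) =
        (((s - r) * ∫ z in Ioi (0:ℝ), Real.exp (-lam * z) * g (x + z)) -
            ((s - p) * ∫ z in Ioi (0:ℝ), Real.exp (-lam * z) * f (x + z))) / (r - p) := by
  intro x hx
  have hrp : r - p ≠ 0 := sub_ne_zero_of_ne (Ne.symm hpr)
  have hsr' : s - r ≠ 0 := sub_ne_zero_of_ne hsr
  have hfm : AEMeasurable f (volume : Measure ℝ) := aux_aemeas hf0 hfc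
  have hgm : AEMeasurable g (volume : Measure ℝ) := aux_aemeas hg0 hgc
  have hEc : Continuous fun z : ℝ => Real.exp (-lam * z) :=
    Real.continuous_exp.comp (continuous_const.mul continuous_id)
  have hEm : Measurable fun z : ℝ => Real.exp (-lam * z) := hEc.measurable
  have hEadd : ∀ a b : ℝ,
      Real.exp (-lam * (a + b)) = Real.exp (-lam * a) * Real.exp (-lam * b) := by
    intro a b; rw [← Real.exp_add]; congr 1; ring
  -- integrability (without absolute values) of shifted functions
  have hIg : ∀ a : ℝ, 0 ≤ a →
      IntegrableOn (fun z => Real.exp (-lam * z) * g (a + z)) (Ioi 0) := by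
    intro a ha
    have hm : AEStronglyMeasurable (fun z => Real.exp (-lam * z) * g (a + z))
        ((volume : Measure ℝ).restrict (Ioi 0)) := by
      have hcomp : AEMeasurable (fun z => g (a + z)) (volume : Measure ℝ) :=
        hgm.comp_quasiMeasurePreserving
          (measurePreserving_add_left volume a).quasiMeasurePreserving
      exact ((hEm.aemeasurable.mul hcomp).aestronglyMeasurable).restrict
    refine (hgint a ha).mono' hm ?_
    filter_upwards with z
    rw [norm_mul, Real.norm_eq_abs, Real.norm_eq_abs, abs_of_pos (Real.exp_pos _)]
  have hIf : ∀ a : ℝ, 0 ≤ a →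
      IntegrableOn (fun z => Real.exp (-lam * z) * f (a + z)) (Ioi 0) := by
    intro a ha
    have hm : AEStronglyMeasurable (fun z => Real.exp (-lam * z) * f (a + z))
        ((volume : Measure ℝ).restrict (Ioi 0)) := by
      have hcomp : AEMeasurable (fun z => f (a + z)) (volume : Measure ℝ) :=
        hfm.comp_quasiMeasurePreserving
          (measurePreserving_add_left volume a).quasiMeasurePreserving
      exact ((hEm.aemeasurable.mul hcomp).aestronglyMeasurable).restrict
    refine (hfint a ha).mono' hm ?_
    filter_upwards with z
    rw [norm_mul, Real.norm_eq_abs, Real.norm_eq_abs, abs_of_pos (Real.exp_pos _)]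
  -- abbreviations
  set F : ℝ := ∫ z in Ioi (0:ℝ), Real.exp (-lam * z) * f (x + z) with hF
  set G : ℝ := ∫ z in Ioi (0:ℝ), Real.exp (-lam * z) * g (x + z) with hG
  -- integrability of |g| at 0
  have hg0int : IntegrableOn (fun z => Real.exp (-lam * z) * |g z|) (Ioi 0) := by
    have := hgint 0 le_rfl
    simpa using this
  have hf0int : IntegrableOn (fun z => Real.exp (-lam * z) * |f (x + z)|) (Ioi 0) :=
    hfint x hx
  set C0 : ℝ := ∫ z in Ioi (0:ℝ), Real.exp (-lam * z) * |g z| with hC0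
  set Cf : ℝ := ∫ z in Ioi (0:ℝ), Real.exp (-lam * z) * |f (x + z)| with hCf
  have hC0nn : 0 ≤ C0 := by
    rw [hC0]
    refine integral_nonneg fun z => ?_
    positivity
  -- the exponential bound for the shifted g-integral
  have hgbound : ∀ y : ℝ, 0 ≤ y → y ≤ x →
      (∫ z in Ioi (0:ℝ), Real.exp (-lam * z) * |g (y + z)|) ≤ Real.exp (lam * x) * C0 := by
    intro y hy hyx
    have e1 : (∫ z in Ioi (0:ℝ), Real.exp (-lam * z) * |g (y + z)|)
        = Real.exp (lam * y) * ∫ z in Ioi (0:ℝ),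
            Real.exp (-lam * (y + z)) * |g (y + z)| := by
      have key : ∀ z : ℝ, Real.exp (-lam * z) * |g (y + z)|
          = Real.exp (lam * y) * (Real.exp (-lam * (y + z)) * |g (y + z)|) := by
        intro z
        rw [← mul_assoc, ← Real.exp_add]
        congr 2
        ring
      rw [← integral_const_mul]
      exact integral_congr_ae (Filter.Eventually.of_forall fun z => key z)
    have e2 : (∫ z in Ioi (0:ℝ), Real.exp (-lam * (y + z)) * |g (y + z)|)
        = ∫ u in Ioi y, Real.exp (-lam * u) * |g u| := by
      rw [aux_shift_integral (fun u => Real.exp (-lam * u) * |g u|) y]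
      refine integral_congr_ae (Filter.Eventually.of_forall fun w => ?_)
      simp [add_comm]
    have e3 : (∫ u in Ioi y, Real.exp (-lam * u) * |g u|) ≤ C0 := by
      rw [hC0]
      refine setIntegral_mono_set hg0int ?_ ?_
      · filter_upwards with u; positivity
      · exact HasSubset.Subset.eventuallyLE (Ioi_subset_Ioi hy)
    have e4 : (0:ℝ) ≤ ∫ u in Ioi y, Real.exp (-lam * u) * |g u| :=
      integral_nonneg fun u => by positivity
    rw [e1, e2]
    exact mul_le_mul (Real.exp_le_exp.mpr (mul_le_mul_of_nonneg_left hyx hlam.le)) e3 e4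
      (Real.exp_pos _).le
  -- bound for f on [0, x]
  obtain ⟨M, hM⟩ := (isCompact_Icc (a := (0:ℝ)) (b := x)).exists_bound_of_continuousOn
    (hfc.mono (fun u hu => hu.1))
  have hM'nn : (0:ℝ) ≤ max M 0 := le_max_right _ _
  have hMle : ∀ u ∈ Icc (0:ℝ) x, |f u| ≤ max M 0 := fun u hu =>
    le_trans (le_of_eq (Real.norm_eq_abs _).symm) ((hM u hu).trans (le_max_left _ _))
  -- the first Fubini argument
  set H1 : ℝ × ℝ → ℝ :=
    fun q => f (x - q.1) * (Real.exp (-lam * q.2) * g (q.1 + q.2)) with hH1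
  have hH1mfull : AEStronglyMeasurable H1 ((volume : Measure ℝ).prod volume) := by
    have q1 : Measure.QuasiMeasurePreserving (fun q : ℝ × ℝ => x - q.1)
        ((volume : Measure ℝ).prod volume) volume :=
      ((Measure.measurePreserving_sub_left volume x).quasiMeasurePreserving).comp
        Measure.quasiMeasurePreserving_fst
    have q2 : Measure.QuasiMeasurePreserving (fun q : ℝ × ℝ => q.1 + q.2)
        ((volume : Measure ℝ).prod volume) volume :=
      Measure.quasiMeasurePreserving_snd.comp
        (measurePreserving_prod_add volume volume).quasiMeasurePreserving
    have a1 : AEMeasurable (fun q : ℝ × ℝ => f (x - q.1)) ((volume : Measure ℝ).prod volume) :=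
      hfm.comp_quasiMeasurePreserving q1
    have a2 : AEMeasurable (fun q : ℝ × ℝ => g (q.1 + q.2)) ((volume : Measure ℝ).prod volume) :=
      hgm.comp_quasiMeasurePreserving q2
    exact (a1.mul ((hEm.comp measurable_snd).aemeasurable.mul a2)).aestronglyMeasurable
  have hprodmeas : ((volume : Measure ℝ).restrict (Ioc 0 x)).prod
        ((volume : Measure ℝ).restrict (Ioi 0))
      = ((volume : Measure ℝ).prod volume).restrict ((Ioc 0 x) ×ˢ (Ioi 0)) :=
    Measure.prod_restrict _ _
  have hH1m : AEStronglyMeasurable H1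
      (((volume : Measure ℝ).restrict (Ioc 0 x)).prod
        ((volume : Measure ℝ).restrict (Ioi 0))) := by
    rw [hprodmeas]; exact hH1mfull.restrict
  have hH1i : Integrable H1
      (((volume : Measure ℝ).restrict (Ioc 0 x)).prod
        ((volume : Measure ℝ).restrict (Ioi 0))) := by
    refine (integrable_prod_iff hH1m).mpr ⟨?_, ?_⟩
    · filter_upwards [ae_restrict_mem measurableSet_Ioc] with y hy
      exact (hIg y hy.1.le).const_mul (f (x - y))
    · have hmeas := (hH1m.norm).integral_prod_right'
      refine Integrable.mono'
        (g := fun _ => (max M 0) * (Real.exp (lam * x) * C0)) ?_ hmeas ?_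
      · exact integrableOn_const (hs := measure_Ioc_lt_top.ne)
      · filter_upwards [ae_restrict_mem measurableSet_Ioc] with y hy
        have hxy : x - y ∈ Icc (0:ℝ) x := ⟨by linarith [hy.2], by linarith [hy.1]⟩
        have e5 : (fun z => ‖H1 (y, z)‖)
            = fun z => |f (x - y)| * (Real.exp (-lam * z) * |g (y + z)|) := by
          funext z
          simp [hH1, Real.norm_eq_abs, abs_mul, abs_of_pos (Real.exp_pos _)]
        rw [Real.norm_eq_abs, abs_of_nonneg (integral_nonneg fun z => norm_nonneg _)]
        calc (∫ z in Ioi (0:ℝ), ‖H1 (y, z)‖)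
            = |f (x - y)| * ∫ z in Ioi (0:ℝ), Real.exp (-lam * z) * |g (y + z)| := by
              rw [e5, integral_const_mul]
          _ ≤ (max M 0) * (Real.exp (lam * x) * C0) :=
              mul_le_mul (hMle _ hxy) (hgbound y hy.1.le hy.2)
                (integral_nonneg fun z => by positivity) hM'nn
  have fub1 : (∫ y in Ioc (0:ℝ) x, ∫ z in Ioi (0:ℝ), H1 (y, z))
      = ∫ z in Ioi (0:ℝ), ∫ y in Ioc (0:ℝ) x, H1 (y, z) :=
    integral_integral_swap (f := fun y z => H1 (y, z)) hH1i
  have hIz_int : Integrable (fun z => ∫ y in Ioc (0:ℝ) x, H1 (y, z))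
      ((volume : Measure ℝ).restrict (Ioi 0)) := hH1i.integral_prod_right
  have hinner : ∀ z : ℝ, (∫ y in Ioc (0:ℝ) x, H1 (y, z))
      = Real.exp (-lam * z) * ∫ y in (0:ℝ)..x, f (x - y) * g (y + z) := by
    intro z
    rw [intervalIntegral.integral_of_le hx, ← integral_const_mul]
    refine integral_congr_ae (Filter.Eventually.of_forall fun y => ?_)
    show H1 (y, z) = _
    simp only [hH1]
    ring
  -- split of the convolution identity
  have hC : ∀ z : ℝ, 0 ≤ z →
      (∫ y in (0:ℝ)..x, f (x - y) * g (y + z))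
        = (g (x + z) - f (x + z)) / (r - p) - ∫ u in (0:ℝ)..z, f (x + z - u) * g u := by
    intro z hz
    have hxz : (0:ℝ) ≤ x + z := by linarith
    have hcont1 : ContinuousOn (fun u => f (x + z - u) * g u) (Icc 0 (x + z)) := by
      refine ContinuousOn.mul ?_ (hgc.mono fun u hu => hu.1)
      refine hfc.comp ((continuous_const.sub continuous_id).continuousOn) ?_
      intro u hu
      have : (0:ℝ) ≤ x + z - u := by linarith [hu.2]
      simpa [mem_Ici] using this
    have hi1 : IntervalIntegrable (fun u => f (x + z - u) * g u) volume 0 z := by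
      apply ContinuousOn.intervalIntegrable
      rw [uIcc_of_le hz]
      exact hcont1.mono (Icc_subset_Icc le_rfl (by linarith))
    have hi2 : IntervalIntegrable (fun u => f (x + z - u) * g u) volume z (x + z) := by
      apply ContinuousOn.intervalIntegrable
      rw [uIcc_of_le (by linarith : z ≤ x + z)]
      exact hcont1.mono (Icc_subset_Icc hz le_rfl)
    have hsplit := intervalIntegral.integral_add_adjacent_intervals hi1 hi2
    have hfull := hconv (x + z) hxz
    have hsub : (∫ y in (0:ℝ)..x, f (x - y) * g (y + z))
        = ∫ u in z..(x + z), f (x + z - u) * g u := by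
      have h := intervalIntegral.integral_comp_add_right
        (a := (0:ℝ)) (b := x) (fun u => f (x + z - u) * g u) z
      rw [zero_add] at h
      rw [← h]
      refine intervalIntegral.integral_congr fun y hy => ?_
      show f (x - y) * g (y + z) = f (x + z - (y + z)) * g (y + z)
      congr 2
      ring
    rw [hsub]
    linarith [hsplit, hfull]
  -- integrability bookkeeping
  have hintEI : Integrable
      (fun z => Real.exp (-lam * z) * ∫ y in (0:ℝ)..x, f (x - y) * g (y + z))
      ((volume : Measure ℝ).restrict (Ioi 0)) :=
    hIz_int.congr (Filter.Eventually.of_forall hinner)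
  have hcomb1 : Integrable
      (fun z => (Real.exp (-lam * z) * g (x + z) - Real.exp (-lam * z) * f (x + z)) / (r - p))
      ((volume : Measure ℝ).restrict (Ioi 0)) := ((hIg x hx).sub (hIf x hx)).div_const _
  have hT3int : Integrable
      (fun z => Real.exp (-lam * z) * ∫ u in (0:ℝ)..z, f (x + z - u) * g u)
      ((volume : Measure ℝ).restrict (Ioi 0)) := by
    refine (hcomb1.sub hintEI).congr ?_
    filter_upwards [ae_restrict_mem measurableSet_Ioi] with z hz
    simp only [Pi.sub_apply]
    rw [hC z (le_of_lt hz)]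
    ring
  have key : (∫ z in Ioi (0:ℝ), Real.exp (-lam * z) * ∫ y in (0:ℝ)..x, f (x - y) * g (y + z))
      = (G - F) / (r - p)
        - ∫ z in Ioi (0:ℝ), Real.exp (-lam * z) * ∫ u in (0:ℝ)..z, f (x + z - u) * g u := by
    have e6 : ∀ᵐ z ∂((volume : Measure ℝ).restrict (Ioi 0)),
        Real.exp (-lam * z) * (∫ y in (0:ℝ)..x, f (x - y) * g (y + z))
          = (Real.exp (-lam * z) * g (x + z) - Real.exp (-lam * z) * f (x + z)) / (r - p)
            - Real.exp (-lam * z) * ∫ u in (0:ℝ)..z, f (x + z - u) * g u := by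
      filter_upwards [ae_restrict_mem measurableSet_Ioi] with z hz
      rw [hC z (le_of_lt hz)]
      ring
    rw [integral_congr_ae e6, integral_sub hcomb1 hT3int, integral_div,
      integral_sub (hIg x hx) (hIf x hx), ← hF, ← hG]
  -- the triangular Fubini argument
  set K : ℝ × ℝ → ℝ := fun q =>
    ({q : ℝ × ℝ | q.2 ≤ q.1}).indicator
      (fun q => Real.exp (-lam * q.1) * (f (x + q.1 - q.2) * g q.2)) q with hK
  have hTset : MeasurableSet {q : ℝ × ℝ | q.2 ≤ q.1} :=
    measurableSet_le measurable_snd measurable_fst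
  have hKmfull : AEStronglyMeasurable K ((volume : Measure ℝ).prod volume) := by
    have qsub : Measure.QuasiMeasurePreserving (fun q : ℝ × ℝ => q.1 - q.2)
        ((volume : Measure ℝ).prod volume) volume := by
      have h1 : Measure.QuasiMeasurePreserving (fun q : ℝ × ℝ => q.2 - q.1)
          ((volume : Measure ℝ).prod volume) volume :=
        Measure.quasiMeasurePreserving_snd.comp
          (measurePreserving_prod_sub volume volume).quasiMeasurePreserving
      have h2 := h1.comp
        (Measure.measurePreserving_swap (μ := (volume : Measure ℝ))
          (ν := volume)).quasiMeasurePreserving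
      simpa [Function.comp_def] using h2
    have q1 : Measure.QuasiMeasurePreserving (fun q : ℝ × ℝ => x + q.1 - q.2)
        ((volume : Measure ℝ).prod volume) volume := by
      have h3 := ((measurePreserving_add_left volume x).quasiMeasurePreserving).comp qsub
      convert h3 using 2 with q
      simp [Function.comp]
      ring
    have a3 : AEMeasurable (fun q : ℝ × ℝ => f (x + q.1 - q.2))
        ((volume : Measure ℝ).prod volume) := hfm.comp_quasiMeasurePreserving q1
    have a4 : AEMeasurable (fun q : ℝ × ℝ => g q.2) ((volume : Measure ℝ).prod volume) :=
      hgm.comp_quasiMeasurePreserving Measure.quasiMeasurePreserving_snd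
    exact (((hEm.comp measurable_fst).aemeasurable.mul
      (a3.mul a4)).aestronglyMeasurable).indicator hTset
  have hKm : AEStronglyMeasurable K
      (((volume : Measure ℝ).restrict (Ioi 0)).prod
        ((volume : Measure ℝ).restrict (Ioi 0))) := by
    rw [Measure.prod_restrict]; exact hKmfull.restrict
  have hIciIoi : ∀ u : ℝ, u ∈ Ioi (0:ℝ) → Ioi (0:ℝ) ∩ Ici u = Ici u := fun u hu =>
    inter_eq_self_of_subset_right (Ici_subset_Ioi.mpr hu)
  have hKi : Integrable K
      (((volume : Measure ℝ).restrict (Ioi 0)).prod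
        ((volume : Measure ℝ).restrict (Ioi 0))) := by
    refine (integrable_prod_iff' hKm).mpr ⟨?_, ?_⟩
    · filter_upwards [ae_restrict_mem measurableSet_Ioi] with u hu
      have hrep : (fun z => K (z, u))
          = fun z => (Ici u).indicator
              (fun z => Real.exp (-lam * z) * (f (x + z - u) * g u)) z :=
        funext fun z => by by_cases h : u ≤ z <;> simp [hK, Set.indicator, h]
      rw [hrep, integrable_indicator_iff measurableSet_Ici, IntegrableOn,
        Measure.restrict_restrict measurableSet_Ici,
        show Ici u ∩ Ioi (0:ℝ) = Ici u from
          inter_eq_self_of_subset_left fun z hz => mem_Ioi.mpr (lt_of_lt_of_le hu hz)]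
      have hIoiu : IntegrableOn
          (fun z => Real.exp (-lam * z) * (f (x + z - u) * g u)) (Ioi u) volume := by
        refine aux_shift_integrableOn ?_
        refine ((hIf x hx).const_mul (Real.exp (-lam * u) * g u)).congr
          (Filter.Eventually.of_forall fun w => ?_)
        show Real.exp (-lam * u) * g u * (Real.exp (-lam * w) * f (x + w))
          = Real.exp (-lam * (w + u)) * (f (x + (w + u) - u) * g u)
        rw [hEadd, show x + (w + u) - u = x + w by ring]
        ring
      exact (integrableOn_Ici_iff_integrableOn_Ioi).mpr hIoiu
    · refine Integrable.congr
        (f := fun u => Real.exp (-lam * u) * |g u| * Cf) (hg0int.mul_const Cf) ?_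
      filter_upwards [ae_restrict_mem measurableSet_Ioi] with u hu
      have hrepn : ∀ z : ℝ, ‖K (z, u)‖
          = (Ici u).indicator
              (fun z => Real.exp (-lam * z) * (|f (x + z - u)| * |g u|)) z := fun z => by
        by_cases h : u ≤ z <;>
          simp [hK, Set.indicator, h, Real.norm_eq_abs, abs_mul,
            abs_of_pos (Real.exp_pos _)]
      have hcalc : (∫ z in Ioi (0:ℝ), ‖K (z, u)‖)
          = Real.exp (-lam * u) * |g u| * Cf := by
        rw [integral_congr_ae (Filter.Eventually.of_forall hrepn),
          setIntegral_indicator measurableSet_Ici, hIciIoi u hu,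
          integral_Ici_eq_integral_Ioi,
          aux_shift_integral
            (fun z => Real.exp (-lam * z) * (|f (x + z - u)| * |g u|)) u]
        have h9 : ∀ w : ℝ, Real.exp (-lam * (w + u)) * (|f (x + (w + u) - u)| * |g u|)
            = Real.exp (-lam * u) * |g u| * (Real.exp (-lam * w) * |f (x + w)|) := by
          intro w
          rw [hEadd, show x + (w + u) - u = x + w by ring]
          ring
        rw [integral_congr_ae (Filter.Eventually.of_forall h9), integral_const_mul, ← hCf]
      exact hcalc.symm
  have fub2 : (∫ z in Ioi (0:ℝ), ∫ u in Ioi (0:ℝ), K (z, u))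
      = ∫ u in Ioi (0:ℝ), ∫ z in Ioi (0:ℝ), K (z, u) :=
    integral_integral_swap (f := fun z u => K (z, u)) hKi
  have hEinner1 : ∀ z ∈ Ioi (0:ℝ),
      Real.exp (-lam * z) * (∫ u in (0:ℝ)..z, f (x + z - u) * g u)
        = ∫ u in Ioi (0:ℝ), K (z, u) := by
    intro z hz
    have hrep : ∀ u : ℝ, K (z, u)
        = (Iic z).indicator (fun u => Real.exp (-lam * z) * (f (x + z - u) * g u)) u :=
      fun u => by by_cases h : u ≤ z <;> simp [hK, Set.indicator, h]
    rw [integral_congr_ae (Filter.Eventually.of_forall hrep),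
      setIntegral_indicator measurableSet_Iic, Ioi_inter_Iic,
      intervalIntegral.integral_of_le (le_of_lt hz), ← integral_const_mul]
  have hEinner2 : ∀ u ∈ Ioi (0:ℝ),
      (∫ z in Ioi (0:ℝ), K (z, u)) = (Real.exp (-lam * u) * g u) * F := by
    intro u hu
    have hrep : ∀ z : ℝ, K (z, u)
        = (Ici u).indicator (fun z => Real.exp (-lam * z) * (f (x + z - u) * g u)) z :=
      fun z => by by_cases h : u ≤ z <;> simp [hK, Set.indicator, h]
    rw [integral_congr_ae (Filter.Eventually.of_forall hrep),
      setIntegral_indicator measurableSet_Ici, hIciIoi u hu,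
      integral_Ici_eq_integral_Ioi,
      aux_shift_integral (fun z => Real.exp (-lam * z) * (f (x + z - u) * g u)) u]
    have h9 : ∀ w : ℝ, Real.exp (-lam * (w + u)) * (f (x + (w + u) - u) * g u)
        = (Real.exp (-lam * u) * g u) * (Real.exp (-lam * w) * f (x + w)) := by
      intro w
      rw [hEadd, show x + (w + u) - u = x + w by ring]
      ring
    rw [integral_congr_ae (Filter.Eventually.of_forall h9), integral_const_mul, ← hF]
  have hT3 : (∫ z in Ioi (0:ℝ),
      Real.exp (-lam * z) * ∫ u in (0:ℝ)..z, f (x + z - u) * g u) = F * (1 / (s - r)) := by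
    have e7 : (∫ z in Ioi (0:ℝ),
        Real.exp (-lam * z) * ∫ u in (0:ℝ)..z, f (x + z - u) * g u)
        = ∫ z in Ioi (0:ℝ), ∫ u in Ioi (0:ℝ), K (z, u) :=
      setIntegral_congr_fun measurableSet_Ioi fun z hz => hEinner1 z hz
    have e8 : (∫ u in Ioi (0:ℝ), ∫ z in Ioi (0:ℝ), K (z, u))
        = ∫ u in Ioi (0:ℝ), (Real.exp (-lam * u) * g u) * F :=
      setIntegral_congr_fun measurableSet_Ioi fun u hu => hEinner2 u hu
    rw [e7, fub2, e8, integral_mul_const, hgLap]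
    ring
  -- final assembly
  have stepA : (∫ y in (0:ℝ)..x,
        f (x - y) * ((s - r) * ∫ z in Ioi (0:ℝ), Real.exp (-lam * z) * g (y + z)))
      = (s - r) * ∫ y in (0:ℝ)..x,
          f (x - y) * ∫ z in Ioi (0:ℝ), Real.exp (-lam * z) * g (y + z) := by
    rw [← intervalIntegral.integral_const_mul]
    refine intervalIntegral.integral_congr fun y hy => ?_
    ring
  have stepB : (∫ y in (0:ℝ)..x,
        f (x - y) * ∫ z in Ioi (0:ℝ), Real.exp (-lam * z) * g (y + z))
      = ∫ y in Ioc (0:ℝ) x, ∫ z in Ioi (0:ℝ), H1 (y, z) := by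
    rw [intervalIntegral.integral_of_le hx]
    refine integral_congr_ae (Filter.Eventually.of_forall fun y => ?_)
    simp only [hH1]
    rw [integral_const_mul]
  calc (∫ y in (0:ℝ)..x,
        f (x - y) * ((s - r) * ∫ z in Ioi (0:ℝ), Real.exp (-lam * z) * g (y + z)))
      = (s - r) * ∫ y in (0:ℝ)..x,
          f (x - y) * ∫ z in Ioi (0:ℝ), Real.exp (-lam * z) * g (y + z) := stepA
    _ = (s - r) * ∫ y in Ioc (0:ℝ) x, ∫ z in Ioi (0:ℝ), H1 (y, z) := by rw [stepB]
    _ = (s - r) * ∫ z in Ioi (0:ℝ), ∫ y in Ioc (0:ℝ) x, H1 (y, z) := by rw [fub1]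
    _ = (s - r) * ∫ z in Ioi (0:ℝ),
          Real.exp (-lam * z) * ∫ y in (0:ℝ)..x, f (x - y) * g (y + z) := by
        rw [integral_congr_ae (Filter.Eventually.of_forall hinner)]
    _ = (s - r) * ((G - F) / (r - p) - F * (1 / (s - r))) := by rw [key, hT3]
    _ = ((s - r) * G - (s - p) * F) / (r - p) := by
        field_simp
        ring
end

section
/- Let p ≠ φ be real numbers, λ ≥ 0 and a ≤ 0. Let W_p, W_φ : ℝ → ℝ vanish on (−∞,0), be continuous on [0,∞), and satisfy ∫_0^x W_p(x−y) W_φ(y) dy = (W_φ(x) − W_p(x))/(φ − p) for all x ≥ 0. Define Z_p(x) = e^{λx} − (φ − p) ∫_0^x e^{λ(x−y)} W_p(y) dy for x ≥ 0 and Z_p(x) = e^{λx} for x < 0. Let ω : ℝ → ℝ be bounded and measurable, and let H : ℝ → ℝ be a locally bounded measurable function satisfying H(x) = e^{λ(x−a)} + ∫_a^x W_φ(x−y)(ω(y) − φ) H(y) dy for all x ∈ ℝ. Then H(x) = Z_p(x−a) + ∫_a^x W_p(x−y)(ω(y) − p) H(y) dy for all x ∈ ℝ. -/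
open MeasureTheory Set

lemma vol_meas {f : ℝ → ℝ} (h0 : ∀ x < (0:ℝ), f x = 0) (hc : ContinuousOn f (Ici 0)) :
    Measurable f := by
  classical
  have hf : f = (Ici (0:ℝ)).piecewise f (fun _ => 0) := by
    funext x
    by_cases hx : x ∈ Ici (0:ℝ)
    · simp [Set.piecewise, hx]
    · simp [Set.piecewise, hx, h0 x (lt_of_not_ge (by simpa using hx))]
  rw [hf]
  exact hc.measurable_piecewise continuousOn_const measurableSet_Ici

lemma ii_of_bdd {f : ℝ → ℝ} (hf : Measurable f) {u v C : ℝ} (huv : u ≤ v)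
    (hC : ∀ y ∈ Ioc u v, |f y| ≤ C) : IntervalIntegrable f volume u v := by
  rw [intervalIntegrable_iff, uIoc_of_le huv]
  exact Integrable.mono' (integrableOn_const (C := C) measure_Ioc_lt_top.ne)
    hf.aestronglyMeasurable.restrict
    ((ae_restrict_iff' measurableSet_Ioc).2 (ae_of_all _ fun y hy => by
      simpa [Real.norm_eq_abs] using hC y hy))

/-- alternate Volterra functional equations for the ω-scale function:
if `H` solves the defining equation with kernel `W_φ(x-y)(ω(y)-φ)` and inhomogeneity
`e^{λ(x-a)}`, then it solves the equation with kernel `W_p(x-y)(ω(y)-p)` and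
inhomogeneity `Z_p(x-a)`. -/
theorem stmt2 (p φ lam a : ℝ) (hpφ : p ≠ φ) (hlam : 0 ≤ lam) (ha : a ≤ 0)
    (Wp Wφ : ℝ → ℝ)
    (hWp0 : ∀ x < (0:ℝ), Wp x = 0) (hWφ0 : ∀ x < (0:ℝ), Wφ x = 0)
    (hWpc : ContinuousOn Wp (Ici 0)) (hWφc : ContinuousOn Wφ (Ici 0))
    (hconv : ∀ x ≥ (0:ℝ), (∫ y in (0:ℝ)..x, Wp (x - y) * Wφ y) = (Wφ x - Wp x) / (φ - p))
    (Zp : ℝ → ℝ)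
    (hZp : ∀ x ≥ (0:ℝ),
      Zp x = Real.exp (lam * x) -
        (φ - p) * ∫ y in (0:ℝ)..x, Real.exp (lam * (x - y)) * Wp y)
    (hZpneg : ∀ x < (0:ℝ), Zp x = Real.exp (lam * x))
    (ω : ℝ → ℝ) (hωm : Measurable ω) (hωb : ∃ C, ∀ x, |ω x| ≤ C)
    (H : ℝ → ℝ) (hHm : Measurable H)
    (hHb : ∀ s : Set ℝ, IsCompact s → ∃ C, ∀ x ∈ s, |H x| ≤ C)
    (hH : ∀ x : ℝ, H x = Real.exp (lam * (x - a)) + ∫ y in a..x, Wφ (x - y) * (ω y - φ) * H y) :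
    ∀ x : ℝ, H x = Zp (x - a) + ∫ y in a..x, Wp (x - y) * (ω y - p) * H y := by
  classical
  have hWpm : Measurable Wp := vol_meas hWp0 hWpc
  have hWφm : Measurable Wφ := vol_meas hWφ0 hWφc
  intro x
  rcases lt_or_ge x a with hx | hx
  · -- trivial case x < a
    have hzero : ∀ (W : ℝ → ℝ), (∀ u < (0:ℝ), W u = 0) → ∀ (c : ℝ → ℝ),
        (∫ y in a..x, W (x - y) * c y * H y) = 0 := by
      intro W hW c
      rw [intervalIntegral.integral_of_ge hx.le]
      rw [setIntegral_eq_zero_of_forall_eq_zero, neg_zero]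
      intro y hy
      rw [hW (x - y) (by linarith [hy.1]), zero_mul, zero_mul]
    rw [hzero Wp hWp0, hZpneg (x - a) (by linarith), add_zero, hH x,
      hzero Wφ hWφ0, add_zero]
  · -- main case a ≤ x
    haveI hfin : IsFiniteMeasure (volume.restrict (Ioc a x)) :=
      ⟨by rw [Measure.restrict_apply_univ]; exact measure_Ioc_lt_top⟩
    have hφp : φ - p ≠ 0 := sub_ne_zero.2 (Ne.symm hpφ)
    -- bounds
    obtain ⟨Cp0, hCp0⟩ := (isCompact_Icc (a := (0:ℝ)) (b := x - a)).exists_bound_of_continuousOn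
      (hWpc.mono (fun u hu => hu.1))
    obtain ⟨Cφ0, hCφ0⟩ := (isCompact_Icc (a := (0:ℝ)) (b := x - a)).exists_bound_of_continuousOn
      (hWφc.mono (fun u hu => hu.1))
    set Cp := max Cp0 0 with hCpdef
    set Cφ := max Cφ0 0 with hCφdef
    have hCpn : 0 ≤ Cp := le_max_right _ _
    have hCφn : 0 ≤ Cφ := le_max_right _ _
    have hCp : ∀ u ≤ x - a, |Wp u| ≤ Cp := by
      intro u hu
      rcases lt_or_ge u 0 with h | h
      · rw [hWp0 u h]; simpa using hCpn
      · exact le_trans (by simpa [Real.norm_eq_abs] using hCp0 u ⟨h, hu⟩) (le_max_left _ _)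
    have hCφ : ∀ u ≤ x - a, |Wφ u| ≤ Cφ := by
      intro u hu
      rcases lt_or_ge u 0 with h | h
      · rw [hWφ0 u h]; simpa using hCφn
      · exact le_trans (by simpa [Real.norm_eq_abs] using hCφ0 u ⟨h, hu⟩) (le_max_left _ _)
    obtain ⟨Cω, hCω⟩ := hωb
    obtain ⟨CH, hCH⟩ := hHb (Icc a x) isCompact_Icc
    have hCHn : 0 ≤ CH := le_trans (abs_nonneg _) (hCH a ⟨le_refl a, hx⟩)
    have hCωn : 0 ≤ Cω := le_trans (abs_nonneg _) (hCω 0)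
    set c : ℝ → ℝ := fun z => (ω z - φ) * H z with hcdef
    have hcm : Measurable c := (hωm.sub measurable_const).mul hHm
    set Cc := (Cω + |φ|) * CH with hCcdef
    have hCcn : 0 ≤ Cc := mul_nonneg (by positivity) hCHn
    have hCc : ∀ z ∈ Icc a x, |c z| ≤ Cc := by
      intro z hz
      rw [hcdef, hCcdef, abs_mul]
      exact mul_le_mul (le_trans (abs_sub _ _) (by linarith [hCω z])) (hCH z hz)
        (abs_nonneg _) (by positivity)
    -- measurability of kernels in one variable
    have mWpx : Measurable fun y => Wp (x - y) := hWpm.comp (measurable_const.sub measurable_id)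
    have mWφx : Measurable fun y => Wφ (x - y) := hWφm.comp (measurable_const.sub measurable_id)
    have mexp : Measurable fun y : ℝ => Real.exp (lam * (y - a)) :=
      ((measurable_id.sub measurable_const).const_mul lam).exp
    -- interval integrability facts
    have i1 : IntervalIntegrable (fun y => Wp (x - y) * c y) volume a x :=
      ii_of_bdd (f := fun y => Wp (x - y) * c y) (mWpx.mul hcm) hx fun y hy => by
        rw [abs_mul]
        exact mul_le_mul (hCp _ (by linarith [hy.1])) (hCc y ⟨hy.1.le, hy.2⟩) (abs_nonneg _) hCpn
    have i3 : IntervalIntegrable (fun y => Wp (x - y) * H y) volume a x :=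
      ii_of_bdd (f := fun y => Wp (x - y) * H y) (mWpx.mul hHm) hx fun y hy => by
        rw [abs_mul]
        exact mul_le_mul (hCp _ (by linarith [hy.1])) (hCH y ⟨hy.1.le, hy.2⟩) (abs_nonneg _) hCpn
    have i4 : IntervalIntegrable (fun y => Wp (x - y) * Real.exp (lam * (y - a))) volume a x :=
      ii_of_bdd (f := fun y => Wp (x - y) * Real.exp (lam * (y - a))) (C := Cp * Real.exp (lam * (x - a))) (mWpx.mul mexp) hx fun y hy => by
        rw [abs_mul, abs_of_pos (Real.exp_pos _)]
        refine mul_le_mul (hCp _ (by linarith [hy.1])) (Real.exp_le_exp.2 ?_) (Real.exp_pos _).le hCpn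
        exact mul_le_mul_of_nonneg_left (by linarith [hy.2]) hlam
    have i6 : IntervalIntegrable (fun z => (Wφ (x - z) - Wp (x - z)) * c z) volume a x :=
      ii_of_bdd (f := fun z => (Wφ (x - z) - Wp (x - z)) * c z) (C := (Cφ + Cp) * Cc) ((mWφx.sub mWpx).mul hcm) hx fun z hz => by
        rw [abs_mul]
        refine mul_le_mul (le_trans (abs_sub _ _) ?_) (hCc z ⟨hz.1.le, hz.2⟩) (abs_nonneg _)
          (by linarith)
        exact add_le_add (hCφ _ (by linarith [hz.1])) (hCp _ (by linarith [hz.1]))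
    -- B: the exponential integral
    have hB : (∫ y in (0:ℝ)..(x - a), Real.exp (lam * (x - a - y)) * Wp y)
        = ∫ y in a..x, Wp (x - y) * Real.exp (lam * (y - a)) := by
      have h := intervalIntegral.integral_comp_sub_left
        (a := a) (b := x) (fun u => Real.exp (lam * (x - a - u)) * Wp u) x
      rw [sub_self] at h
      rw [← h]
      refine intervalIntegral.integral_congr fun y _ => ?_
      rw [show x - a - (x - y) = y - a by ring, mul_comm]
    -- D in terms of H
    have hD : (∫ y in a..x, Wp (x - y) * ∫ z in a..y, Wφ (y - z) * (ω z - φ) * H z)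
        = (∫ y in a..x, Wp (x - y) * H y)
          - ∫ y in a..x, Wp (x - y) * Real.exp (lam * (y - a)) := by
      rw [← intervalIntegral.integral_sub i3 i4]
      refine intervalIntegral.integral_congr fun y _ => ?_
      rw [show Wp (x - y) * H y - Wp (x - y) * Real.exp (lam * (y - a))
          = Wp (x - y) * (H y - Real.exp (lam * (y - a))) by ring,
        show H y - Real.exp (lam * (y - a)) = ∫ z in a..y, Wφ (y - z) * (ω z - φ) * H z by
          rw [hH y]; ring]
    -- Fubini setup
    have hgm : Measurable fun q : ℝ × ℝ => Wp (x - q.1) * (Wφ (q.1 - q.2) * c q.2) :=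
      (hWpm.comp (measurable_const.sub measurable_fst)).mul
        ((hWφm.comp (measurable_fst.sub measurable_snd)).mul (hcm.comp measurable_snd))
    have hgint : Integrable (Function.uncurry fun y z => Wp (x - y) * (Wφ (y - z) * c z))
        ((volume.restrict (Ioc a x)).prod (volume.restrict (Ioc a x))) := by
      refine Integrable.mono' (g := fun _ => Cp * (Cφ * Cc)) (integrable_const _)
        hgm.aestronglyMeasurable ?_
      rw [Measure.prod_restrict]
      refine (ae_restrict_iff' (measurableSet_Ioc.prod measurableSet_Ioc)).2
        (ae_of_all _ fun q hq => ?_)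
      obtain ⟨hq1, hq2⟩ := hq
      simp only [Function.uncurry, Real.norm_eq_abs]
      rw [abs_mul, abs_mul]
      refine mul_le_mul (hCp _ (by linarith [hq1.1])) ?_ (mul_nonneg (abs_nonneg _) (abs_nonneg _)) hCpn
      exact mul_le_mul (hCφ _ (by linarith [hq1.2, hq2.1])) (hCc _ ⟨hq2.1.le, hq2.2⟩)
        (abs_nonneg _) hCφn
    have hfub : (∫ y in Ioc a x, ∫ z in Ioc a x, Wp (x - y) * (Wφ (y - z) * c z))
        = ∫ z in Ioc a x, ∫ y in Ioc a x, Wp (x - y) * (Wφ (y - z) * c z) :=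
      MeasureTheory.integral_integral_swap hgint
    -- pointwise in y
    have hpy : ∀ y ∈ Ioc a x,
        Wp (x - y) * (∫ z in a..y, Wφ (y - z) * (ω z - φ) * H z)
          = ∫ z in Ioc a x, Wp (x - y) * (Wφ (y - z) * c z) := by
      intro y hy
      have mWφy : Measurable fun z => Wφ (y - z) :=
        hWφm.comp (measurable_const.sub measurable_id)
      have hint1 : IntervalIntegrable (fun z => Wφ (y - z) * c z) volume a y :=
        ii_of_bdd (f := fun z => Wφ (y - z) * c z) (mWφy.mul hcm) hy.1.le fun z hz => by
          rw [abs_mul]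
          exact mul_le_mul (hCφ _ (by linarith [hz.1, hy.2]))
            (hCc z ⟨hz.1.le, hz.2.trans hy.2⟩) (abs_nonneg _) hCφn
      have hint2 : IntervalIntegrable (fun z => Wφ (y - z) * c z) volume y x :=
        ii_of_bdd (f := fun z => Wφ (y - z) * c z) (mWφy.mul hcm) hy.2 fun z hz => by
          rw [abs_mul]
          exact mul_le_mul (hCφ _ (by linarith [hz.1, hy.1])) (hCc z ⟨(hy.1.trans hz.1).le, hz.2⟩)
            (abs_nonneg _) hCφn
      have hzero : (∫ z in y..x, Wφ (y - z) * c z) = 0 := by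
        rw [intervalIntegral.integral_of_le hy.2]
        exact setIntegral_eq_zero_of_forall_eq_zero fun z hz => by
          rw [hWφ0 (y - z) (by linarith [hz.1]), zero_mul]
      calc Wp (x - y) * (∫ z in a..y, Wφ (y - z) * (ω z - φ) * H z)
          = Wp (x - y) * ∫ z in a..y, Wφ (y - z) * c z := by
            congr 1
            exact intervalIntegral.integral_congr fun z _ => by rw [hcdef]; ring
        _ = Wp (x - y) * ∫ z in a..x, Wφ (y - z) * c z := by
            rw [← intervalIntegral.integral_add_adjacent_intervals hint1 hint2, hzero, add_zero]
        _ = Wp (x - y) * ∫ z in Ioc a x, Wφ (y - z) * c z := by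
            rw [intervalIntegral.integral_of_le hx]
        _ = ∫ z in Ioc a x, Wp (x - y) * (Wφ (y - z) * c z) := by
            rw [MeasureTheory.integral_const_mul]
    -- pointwise in z
    have hpz : ∀ z ∈ Ioc a x,
        (∫ y in Ioc a x, Wp (x - y) * (Wφ (y - z) * c z))
          = (Wφ (x - z) - Wp (x - z)) / (φ - p) * c z := by
      intro z hz
      have mWφz : Measurable fun y => Wφ (y - z) :=
        hWφm.comp (measurable_id.sub measurable_const)
      have ia : IntervalIntegrable (fun y => Wp (x - y) * Wφ (y - z)) volume a z :=
        ii_of_bdd (f := fun y => Wp (x - y) * Wφ (y - z)) (mWpx.mul mWφz) hz.1.le fun y hy => by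
          rw [abs_mul]
          exact mul_le_mul (hCp _ (by linarith [hy.1])) (hCφ _ (by linarith [hy.2, hz.1]))
            (abs_nonneg _) hCpn
      have ib : IntervalIntegrable (fun y => Wp (x - y) * Wφ (y - z)) volume z x :=
        ii_of_bdd (f := fun y => Wp (x - y) * Wφ (y - z)) (mWpx.mul mWφz) hz.2 fun y hy => by
          rw [abs_mul]
          exact mul_le_mul (hCp _ (by linarith [hy.1, hz.1])) (hCφ _ (by linarith [hy.2, hz.1]))
            (abs_nonneg _) hCpn
      have h0 : (∫ y in a..z, Wp (x - y) * Wφ (y - z)) = 0 := by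
        rw [intervalIntegral.integral_of_le hz.1.le, MeasureTheory.integral_Ioc_eq_integral_Ioo]
        exact setIntegral_eq_zero_of_forall_eq_zero fun y hy => by
          rw [hWφ0 (y - z) (by linarith [hy.2]), mul_zero]
      have h1 : (∫ y in z..x, Wp (x - y) * Wφ (y - z))
          = (Wφ (x - z) - Wp (x - z)) / (φ - p) := by
        calc (∫ y in z..x, Wp (x - y) * Wφ (y - z))
            = ∫ y in z..x, Wp ((x - z) - (y - z)) * Wφ (y - z) :=
              intervalIntegral.integral_congr fun y _ => by
                rw [show (x - z) - (y - z) = x - y by ring]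
          _ = ∫ u in (z - z)..(x - z), Wp ((x - z) - u) * Wφ u :=
              intervalIntegral.integral_comp_sub_right (fun u => Wp ((x - z) - u) * Wφ u) z
          _ = (Wφ (x - z) - Wp (x - z)) / (φ - p) := by
              rw [sub_self]; exact hconv (x - z) (by linarith [hz.2])
      calc (∫ y in Ioc a x, Wp (x - y) * (Wφ (y - z) * c z))
          = ∫ y in Ioc a x, (Wp (x - y) * Wφ (y - z)) * c z := by
            refine setIntegral_congr_fun measurableSet_Ioc fun y _ => by ring
        _ = (∫ y in Ioc a x, Wp (x - y) * Wφ (y - z)) * c z := by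
            rw [MeasureTheory.integral_mul_const]
        _ = (∫ y in a..x, Wp (x - y) * Wφ (y - z)) * c z := by
            rw [intervalIntegral.integral_of_le hx]
        _ = (Wφ (x - z) - Wp (x - z)) / (φ - p) * c z := by
            rw [← intervalIntegral.integral_add_adjacent_intervals ia ib, h0, h1, zero_add]
    -- the value of the double integral
    have hDval : (∫ y in a..x, Wp (x - y) * ∫ z in a..y, Wφ (y - z) * (ω z - φ) * H z)
        = ∫ z in a..x, (Wφ (x - z) - Wp (x - z)) / (φ - p) * c z := by
      rw [intervalIntegral.integral_of_le hx, setIntegral_congr_fun measurableSet_Ioc hpy, hfub,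
        intervalIntegral.integral_of_le hx]
      exact setIntegral_congr_fun measurableSet_Ioc hpz
    have hWpH : (∫ y in a..x, Wp (x - y) * H y)
        = (∫ y in a..x, Wp (x - y) * Real.exp (lam * (y - a)))
          + ∫ z in a..x, (Wφ (x - z) - Wp (x - z)) / (φ - p) * c z := by
      rw [← hDval]; linarith [hD, hDval]
    have hscale : (φ - p) * (∫ z in a..x, (Wφ (x - z) - Wp (x - z)) / (φ - p) * c z)
        = ∫ z in a..x, (Wφ (x - z) - Wp (x - z)) * c z := by
      rw [← intervalIntegral.integral_const_mul]
      refine intervalIntegral.integral_congr fun z _ => ?_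
      field_simp
    have hmerge : (∫ y in a..x, Wp (x - y) * c y)
        + (∫ z in a..x, (Wφ (x - z) - Wp (x - z)) * c z)
        = ∫ y in a..x, Wφ (x - y) * (ω y - φ) * H y := by
      rw [← intervalIntegral.integral_add i1 i6]
      refine intervalIntegral.integral_congr fun y _ => ?_
      rw [hcdef]; ring
    have hA : (∫ y in a..x, Wp (x - y) * (ω y - p) * H y)
        = (∫ y in a..x, Wp (x - y) * c y)
          + (φ - p) * ∫ y in a..x, Wp (x - y) * H y := by
      rw [← intervalIntegral.integral_const_mul, ← intervalIntegral.integral_add i1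
        (i3.const_mul (φ - p))]
      refine intervalIntegral.integral_congr fun y _ => ?_
      rw [hcdef]; ring
    rw [hH x, hZp (x - a) (by linarith), hB, hA, hWpH, mul_add, hscale]
    linarith [hmerge]
end

section
/- Let K : ℝ × ℝ → ℝ be jointly measurable with K(x,y) = 0 whenever x < y, let c ≥ 0, and let W : ℝ → [0,∞) be measurable, vanish on (−∞,0), and be bounded on compact sets. Assume 0 ≤ K(x,y) ≤ c·W(x−y) for all y ≤ x. Then for every m ≥ 1 and all y ≤ x, the iterated kernels satisfy 0 ≤ K_m(x,y) ≤ c^m · W^{*m}(x−y), where W^{*m} denotes the m-fold convolution power of W. -/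
open MeasureTheory Set

/-- The iterated kernels: `K₁ = K` and `K_m(x,y) = ∫_y^x K(x,z) K_{m-1}(z,y) dz` for `m ≥ 2`. -/
noncomputable def iterK (K : ℝ → ℝ → ℝ) : ℕ → ℝ → ℝ → ℝ
  | 0 => fun _ _ => 0
  | 1 => K
  | m + 2 => fun x y => ∫ z in y..x, K x z * iterK K (m + 1) z y

/-- Convolution powers: `W^{*1} = W` and `W^{*m}(x) = ∫_0^x W(x-z) W^{*(m-1)}(z) dz`. -/
noncomputable def convPow (W : ℝ → ℝ) : ℕ → ℝ → ℝ
  | 0 => fun _ => 0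
  | 1 => W
  | m + 2 => fun x => ∫ z in (0:ℝ)..x, W (x - z) * convPow W (m + 1) z

lemma convPow_props (W : ℝ → ℝ) (hWmeas : Measurable W) (hWnonneg : ∀ x, 0 ≤ W x)
    (hW0 : ∀ x < (0:ℝ), W x = 0)
    (hWbdd : ∀ s : Set ℝ, IsCompact s → ∃ C, ∀ x ∈ s, W x ≤ C) :
    ∀ m : ℕ, Measurable (convPow W m) ∧ (∀ x, 0 ≤ convPow W m x) ∧
      (∀ x < (0:ℝ), convPow W m x = 0) ∧
      (∀ T : ℝ, ∃ B, 0 ≤ B ∧ ∀ x ∈ Icc (0:ℝ) T, convPow W m x ≤ B) := by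
  intro m
  induction m with
  | zero => exact ⟨measurable_const, fun x => le_refl 0, fun x _ => rfl,
      fun T => ⟨0, le_refl 0, fun x _ => le_refl 0⟩⟩
  | succ n ih =>
    match n, ih with
    | 0, _ =>
      refine ⟨hWmeas, hWnonneg, fun x hx => hW0 x hx, fun T => ?_⟩
      rcases le_or_gt 0 T with hT | hT
      · obtain ⟨C, hC⟩ := hWbdd (Icc 0 T) isCompact_Icc
        exact ⟨max C 0, le_max_right _ _, fun x hx => (hC x hx).trans (le_max_left _ _)⟩
      · exact ⟨0, le_refl 0, fun x hx => absurd (hx.1.trans hx.2) (not_le.mpr hT)⟩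
    | k + 1, ih =>
      obtain ⟨ihmeas, ihnn, ihz, ihbdd⟩ := ih
      have hzero : ∀ x < (0:ℝ), convPow W (k + 2) x = 0 := by
        intro x hx
        show (∫ z in (0:ℝ)..x, W (x - z) * convPow W (k + 1) z) = 0
        rw [intervalIntegral.integral_of_ge hx.le]
        rw [MeasureTheory.setIntegral_congr_fun measurableSet_Ioc
          (g := fun _ => (0:ℝ)) (fun z hz => by
            have : x - z < 0 := by linarith [hz.1]
            simp [hW0 _ this])]
        simp
      have hnn : ∀ x, 0 ≤ convPow W (k + 2) x := by
        intro x
        rcases lt_or_ge x 0 with hx | hx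
        · rw [hzero x hx]
        · show (0:ℝ) ≤ ∫ z in (0:ℝ)..x, W (x - z) * convPow W (k + 1) z
          exact intervalIntegral.integral_nonneg hx
            (fun z hz => mul_nonneg (hWnonneg _) (ihnn _))
      have hmeas : Measurable (convPow W (k + 2)) := by
        set f : ℝ × ℝ → ℝ := fun q =>
          Set.indicator {q : ℝ × ℝ | q.2 ∈ Set.Ioc 0 q.1}
            (fun q => W (q.1 - q.2) * convPow W (k + 1) q.2) q with hf
        have hfmeas : Measurable f := by
          apply Measurable.indicator
          · exact (hWmeas.comp (measurable_fst.sub measurable_snd)).mul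
              (ihmeas.comp measurable_snd)
          · have : {q : ℝ × ℝ | q.2 ∈ Set.Ioc 0 q.1}
                = {q : ℝ × ℝ | (0:ℝ) < q.2} ∩ {q : ℝ × ℝ | q.2 ≤ q.1} := by
              ext q; simp [Set.mem_Ioc]
            rw [this]
            exact (measurableSet_lt measurable_const measurable_snd).inter
              (measurableSet_le measurable_snd measurable_fst)
        have key : convPow W (k + 2) = fun x => ∫ z, f (x, z) := by
          funext x
          rcases le_or_gt 0 x with hx | hx
          · show (∫ z in (0:ℝ)..x, W (x - z) * convPow W (k + 1) z) = _
            rw [intervalIntegral.integral_of_le hx,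
              ← MeasureTheory.integral_indicator measurableSet_Ioc]
            congr 1
          · rw [hzero x hx]
            symm
            have : ∀ z : ℝ, f (x, z) = 0 := by
              intro z
              apply Set.indicator_of_notMem
              simp only [Set.mem_setOf_eq, Set.mem_Ioc, not_and, not_le]
              intro hz; linarith
            simp [this]
        rw [key]
        exact hfmeas.stronglyMeasurable.integral_prod_right'.measurable
      refine ⟨hmeas, hnn, hzero, ?_⟩
      intro T
      rcases le_or_gt 0 T with hT | hT
      · obtain ⟨C, hC⟩ := hWbdd (Icc 0 T) isCompact_Icc
        obtain ⟨B, hB0, hB⟩ := ihbdd T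
        refine ⟨max C 0 * B * T, by positivity, fun x hx => ?_⟩
        have hx0 : (0:ℝ) ≤ x := hx.1
        have hxT : x ≤ T := hx.2
        have hb : ∀ z ∈ Set.uIoc (0:ℝ) x, ‖W (x - z) * convPow W (k + 1) z‖ ≤ max C 0 * B := by
          intro z hz
          rw [Set.uIoc_of_le hx0] at hz
          have h1 : W (x - z) ≤ max C 0 :=
            (hC _ ⟨by linarith [hz.2], by linarith [hz.1]⟩).trans (le_max_left _ _)
          have h2 : convPow W (k + 1) z ≤ B := hB z ⟨hz.1.le, hz.2.trans hxT⟩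
          rw [Real.norm_eq_abs, abs_of_nonneg (mul_nonneg (hWnonneg _) (ihnn _))]
          exact mul_le_mul h1 h2 (ihnn _) (le_max_right _ _)
        calc convPow W (k + 2) x
            = ∫ z in (0:ℝ)..x, W (x - z) * convPow W (k + 1) z := rfl
          _ ≤ ‖∫ z in (0:ℝ)..x, W (x - z) * convPow W (k + 1) z‖ := le_abs_self _
          _ ≤ max C 0 * B * |x - 0| :=
              intervalIntegral.norm_integral_le_of_norm_le_const hb
          _ ≤ max C 0 * B * T := by
              rw [sub_zero, abs_of_nonneg hx0]
              exact mul_le_mul_of_nonneg_left hxT (by positivity)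
      · exact ⟨0, le_refl 0, fun x hx => absurd (hx.1.trans hx.2) (not_le.mpr hT)⟩


/-- if `0 ≤ K(x,y) ≤ c·W(x-y)` for `y ≤ x`, then the iterated kernels
satisfy `0 ≤ K_m(x,y) ≤ c^m · W^{*m}(x-y)`. -/
theorem stmt5 (K : ℝ → ℝ → ℝ) (hKmeas : Measurable (Function.uncurry K))
    (hK0 : ∀ x y : ℝ, x < y → K x y = 0)
    (c : ℝ) (hc : 0 ≤ c)
    (W : ℝ → ℝ) (hWmeas : Measurable W) (hWnonneg : ∀ x, 0 ≤ W x)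
    (hW0 : ∀ x < (0:ℝ), W x = 0)
    (hWbdd : ∀ s : Set ℝ, IsCompact s → ∃ C, ∀ x ∈ s, W x ≤ C)
    (hKle : ∀ x y : ℝ, y ≤ x → 0 ≤ K x y ∧ K x y ≤ c * W (x - y)) :
    ∀ m : ℕ, 1 ≤ m → ∀ x y : ℝ, y ≤ x →
      0 ≤ iterK K m x y ∧ iterK K m x y ≤ c ^ m * convPow W m (x - y) := by

  have props := convPow_props W hWmeas hWnonneg hW0 hWbdd
  have main : ∀ n : ℕ, ∀ x y : ℝ, y ≤ x →
      0 ≤ iterK K (n+1) x y ∧ iterK K (n+1) x y ≤ c ^ (n+1) * convPow W (n+1) (x - y) := by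
    intro n
    induction n with
    | zero =>
      intro x y hxy
      simpa [iterK, convPow] using hKle x y hxy
    | succ k ih =>
      intro x y hxy
      have hI : iterK K (k+1+1) x y = ∫ z in y..x, K x z * iterK K (k+1) z y := rfl
      obtain ⟨cpmeas, cpnn, cpz, cpbdd⟩ := props (k+1)
      constructor
      · rw [hI]
        exact intervalIntegral.integral_nonneg hxy fun z hz =>
          mul_nonneg (hKle x z hz.2).1 (ih z y hz.1).1
      · obtain ⟨C, hC⟩ := hWbdd (Icc 0 (x - y)) isCompact_Icc
        obtain ⟨B, hB0, hB⟩ := cpbdd (x - y)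
        set g : ℝ → ℝ := fun z =>
          (c * W (x - z)) * (c ^ (k+1) * convPow W (k+1) (z - y)) with hg
        have hgmeas : Measurable g :=
          ((hWmeas.comp (measurable_const.sub measurable_id)).const_mul c).mul
            ((cpmeas.comp (measurable_id.sub measurable_const)).const_mul _)
        have hgint : IntegrableOn g (Ioc y x) := by
          refine Integrable.mono'
            (g := fun _ => c * max C 0 * (c ^ (k+1) * B))
            (integrableOn_const measure_Ioc_lt_top.ne)
            hgmeas.aestronglyMeasurable ?_
          filter_upwards [ae_restrict_mem measurableSet_Ioc] with z hz
          have h1 : W (x - z) ≤ max C 0 :=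
            (hC _ ⟨by linarith [hz.2], by linarith [hz.1]⟩).trans (le_max_left _ _)
          have h2 : convPow W (k+1) (z - y) ≤ B :=
            hB _ ⟨by linarith [hz.1], by linarith [hz.2]⟩
          have hnn : 0 ≤ g z :=
            mul_nonneg (mul_nonneg hc (hWnonneg _)) (mul_nonneg (by positivity) (cpnn _))
          rw [Real.norm_eq_abs, abs_of_nonneg hnn]
          exact mul_le_mul (mul_le_mul_of_nonneg_left h1 hc)
            (mul_le_mul_of_nonneg_left h2 (by positivity))
            (mul_nonneg (by positivity) (cpnn _)) (by positivity)
        have hmono : (∫ z in Ioc y x, K x z * iterK K (k+1) z y) ≤ ∫ z in Ioc y x, g z := by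
          refine integral_mono_of_nonneg ?_ hgint ?_
          · filter_upwards [ae_restrict_mem measurableSet_Ioc] with z hz
            exact mul_nonneg (hKle x z hz.2).1 (ih z y hz.1.le).1
          · filter_upwards [ae_restrict_mem measurableSet_Ioc] with z hz
            exact mul_le_mul (hKle x z hz.2).2 (ih z y hz.1.le).2
              (ih z y hz.1.le).1 (mul_nonneg hc (hWnonneg _))
        rw [hI, intervalIntegral.integral_of_le hxy]
        refine hmono.trans (le_of_eq ?_)
        have hg2 : ∀ z : ℝ, g z
            = c ^ (k+2) * ((fun u => W ((x - y) - u) * convPow W (k+1) u) (z - y)) := by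
          intro z
          have hxz : x - z = (x - y) - (z - y) := by ring
          simp only [hg, hxz]; ring
        calc (∫ z in Ioc y x, g z) = ∫ z in y..x, g z :=
              (intervalIntegral.integral_of_le hxy).symm
          _ = ∫ z in y..x, c ^ (k+2) *
                ((fun u => W ((x - y) - u) * convPow W (k+1) u) (z - y)) := by
              simp only [hg2]
          _ = c ^ (k+2) * ∫ z in y..x,
                (fun u => W ((x - y) - u) * convPow W (k+1) u) (z - y) :=
              intervalIntegral.integral_const_mul _ _
          _ = c ^ (k+2) * ∫ u in (y - y)..(x - y),
                W ((x - y) - u) * convPow W (k+1) u := by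
              congr 1
              exact intervalIntegral.integral_comp_sub_right
                (fun u => W ((x - y) - u) * convPow W (k+1) u) y
          _ = c ^ (k+1+1) * convPow W (k+1+1) (x - y) := by
              rw [sub_self]; rfl
  intro m hm x y hxy
  match m, hm with
  | n + 1, _ => exact main n x y hxy
end

section
/- Let a ≤ 0, let W : ℝ → [0,∞) vanish on (−∞,0) and be continuous on [0,∞), let k : ℝ → [0,∞) be bounded and measurable, and let Z : ℝ → [0,∞) be continuous. Set K(x,y) = W(x−y)·k(y) for y ≤ x and K(x,y) = 0 for x < y, and let K_m be the iterated kernels. Then: (a) for all y ≤ x the series R(x,y) := Σ_{m=1}^∞ K_m(x,y) converges; (b) the function H(x) := Z(x) + ∫_a^x R(x,y) Z(y) dy is finite and continuous on ℝ; and (c) H satisfies the Volterra equation H(x) = Z(x) + ∫_a^x W(x−y) k(y) H(y) dy for all x ∈ ℝ. -/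
open MeasureTheory Set
open scoped ENNReal NNReal

/-- The kernel `K(x,y) = W(x-y)·k(y)` for `y ≤ x`, and `0` for `x < y`. -/
noncomputable def volKernel (W k : ℝ → ℝ) : ℝ → ℝ → ℝ :=
  fun x y => if y ≤ x then W (x - y) * k y else 0

/-- The resolventKer kernel `R(x,y) = Σ_{m=1}^∞ K_m(x,y)`. -/
noncomputable def resolventKer (W k : ℝ → ℝ) (x y : ℝ) : ℝ :=
  ∑' m : ℕ, iterK (volKernel W k) (m + 1) x y

/-- The candidate solution `H(x) = Z(x) + ∫_a^x R(x,y) Z(y) dy`. -/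
noncomputable def resolventH (W k Z : ℝ → ℝ) (a x : ℝ) : ℝ :=
  Z x + ∫ y in a..x, resolventKer W k x y * Z y

namespace Stmt7Aux

lemma W_measurable {W : ℝ → ℝ} (hW0 : ∀ x < (0:ℝ), W x = 0)
    (hWc : ContinuousOn W (Ici 0)) : Measurable W := by
  classical
  have h : W = (Ici (0:ℝ)).piecewise W (fun _ => 0) := by
    funext t
    by_cases ht : (0:ℝ) ≤ t
    · simp [Set.piecewise, ht, mem_Ici]
    · simp [Set.piecewise, ht, mem_Ici, hW0 t (lt_of_not_ge ht)]
  rw [h]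
  exact ContinuousOn.measurable_piecewise hWc continuousOn_const measurableSet_Ici

lemma vk_meas {W k : ℝ → ℝ} (hWm : Measurable W) (hkm : Measurable k) :
    Measurable fun p : ℝ × ℝ => volKernel W k p.1 p.2 := by
  unfold volKernel
  exact Measurable.ite (measurableSet_le measurable_snd measurable_fst)
    ((hWm.comp (measurable_fst.sub measurable_snd)).mul (hkm.comp measurable_snd))
    measurable_const

variable {K : ℝ → ℝ → ℝ}

lemma iterK_zero_of_lt (hKz : ∀ x y : ℝ, x < y → K x y = 0) :
    ∀ (m : ℕ) (x y : ℝ), x < y → iterK K m x y = 0 := by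
  intro m
  induction m with
  | zero => intro x y _; rfl
  | succ n ih =>
    cases n with
    | zero => exact fun x y h => hKz x y h
    | succ p =>
      intro x y hxy
      have h1 : iterK K (p + 2) x y = ∫ z in y..x, K x z * iterK K (p + 1) z y := rfl
      rw [h1, intervalIntegral.integral_symm, intervalIntegral.integral_of_le hxy.le,
        MeasureTheory.setIntegral_eq_zero_of_forall_eq_zero, neg_zero]
      intro z hz
      rw [hKz x z hz.1, zero_mul]

lemma iterK_nonneg (hKz : ∀ x y : ℝ, x < y → K x y = 0)
    (hKnn : ∀ x y : ℝ, 0 ≤ K x y) :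
    ∀ (m : ℕ) (x y : ℝ), 0 ≤ iterK K m x y := by
  intro m
  induction m with
  | zero => intro x y; exact le_rfl
  | succ n ih =>
    cases n with
    | zero => exact fun x y => hKnn x y
    | succ p =>
      intro x y
      rcases le_or_gt y x with h | h
      · have h1 : iterK K (p + 2) x y = ∫ z in y..x, K x z * iterK K (p + 1) z y := rfl
        rw [h1]
        exact intervalIntegral.integral_nonneg h
          (fun u _ => mul_nonneg (hKnn x u) (ih u y))
      · rw [iterK_zero_of_lt hKz (p + 2) x y h]

lemma iterK_succ_rep (hKz : ∀ x y : ℝ, x < y → K x y = 0) (p : ℕ) (x y : ℝ) :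
    iterK K (p + 2) x y
      = ∫ z, (Ioc y x).indicator (fun z => K x z * iterK K (p + 1) z y) z := by
  rcases le_or_gt y x with h | h
  · have h1 : iterK K (p + 2) x y = ∫ z in y..x, K x z * iterK K (p + 1) z y := rfl
    rw [h1, intervalIntegral.integral_of_le h,
      ← MeasureTheory.integral_indicator measurableSet_Ioc]
  · rw [iterK_zero_of_lt hKz (p + 2) x y h, Ioc_eq_empty (not_lt.mpr h.le)]
    simp

lemma iterK_measurable (hKz : ∀ x y : ℝ, x < y → K x y = 0)
    (hKm : Measurable fun p : ℝ × ℝ => K p.1 p.2) :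
    ∀ m : ℕ, Measurable fun p : ℝ × ℝ => iterK K m p.1 p.2 := by
  intro m
  induction m with
  | zero => exact measurable_const
  | succ n ih =>
    cases n with
    | zero => exact hKm
    | succ p =>
      have hrep : (fun q : ℝ × ℝ => iterK K (p + 2) q.1 q.2)
          = fun q : ℝ × ℝ =>
            ∫ z, (Ioc q.2 q.1).indicator (fun z => K q.1 z * iterK K (p + 1) z q.2) z :=
        funext fun q => iterK_succ_rep hKz p q.1 q.2
      rw [hrep]
      have hfm : Measurable fun q : (ℝ × ℝ) × ℝ =>
          (Ioc q.1.2 q.1.1).indicator (fun z => K q.1.1 z * iterK K (p + 1) z q.1.2) q.2 := by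
        have heq : (fun q : (ℝ × ℝ) × ℝ =>
            (Ioc q.1.2 q.1.1).indicator (fun z => K q.1.1 z * iterK K (p + 1) z q.1.2) q.2)
            = Set.indicator {q : (ℝ × ℝ) × ℝ | q.1.2 < q.2 ∧ q.2 ≤ q.1.1}
              (fun q => K q.1.1 q.2 * iterK K (p + 1) q.2 q.1.2) := by
          funext q
          by_cases hq : q.1.2 < q.2 ∧ q.2 ≤ q.1.1
          · rw [Set.indicator_of_mem (mem_Ioc.mpr hq)]
            exact (Set.indicator_of_mem
              (show q ∈ {q : (ℝ × ℝ) × ℝ | q.1.2 < q.2 ∧ q.2 ≤ q.1.1} from hq)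
              (fun q => K q.1.1 q.2 * iterK K (p + 1) q.2 q.1.2)).symm
          · rw [Set.indicator_of_notMem (fun hmem => hq (mem_Ioc.mp hmem))]
            exact (Set.indicator_of_notMem
              (show q ∉ {q : (ℝ × ℝ) × ℝ | q.1.2 < q.2 ∧ q.2 ≤ q.1.1} from hq) _).symm
        rw [heq]
        apply Measurable.indicator
        · exact (hKm.comp (measurable_fst.fst.prodMk measurable_snd)).mul
            (ih.comp (measurable_snd.prodMk measurable_fst.snd))
        · exact (measurableSet_lt measurable_fst.snd measurable_snd).inter
            (measurableSet_le measurable_snd measurable_fst.fst)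
      exact (hfm.stronglyMeasurable.integral_prod_right').measurable


lemma bnd_summable (M C t : ℝ) :
    Summable (fun m : ℕ => (M * C) ^ (m + 1) * t ^ m / m.factorial) := by
  have h := (Real.summable_pow_div_factorial (M * C * t)).mul_left (M * C)
  exact h.congr (fun m => by rw [mul_pow, pow_succ]; ring)

lemma volKernel_nonneg {W k : ℝ → ℝ} (hWnn : ∀ x, 0 ≤ W x) (hknn : ∀ y, 0 ≤ k y) :
    ∀ x y : ℝ, 0 ≤ volKernel W k x y := by
  intro x y
  unfold volKernel
  split_ifs
  · exact mul_nonneg (hWnn _) (hknn y)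
  · exact le_rfl

lemma volKernel_zero_of_lt {W k : ℝ → ℝ} :
    ∀ x y : ℝ, x < y → volKernel W k x y = 0 :=
  fun _ y h => if_neg (not_le.mpr h)

section Bound

variable {W k : ℝ → ℝ} {T M C : ℝ}

lemma volKernel_le (hWnn : ∀ x, 0 ≤ W x) (hknn : ∀ y, 0 ≤ k y)
    (hT : 0 ≤ T) (hM : ∀ t ∈ Icc (0:ℝ) T, W t ≤ M) (hC : ∀ y, k y ≤ C) :
    ∀ x y : ℝ, x - y ≤ T → volKernel W k x y ≤ M * C := by
  have hM0 : 0 ≤ M := le_trans (hWnn 0) (hM 0 ⟨le_rfl, hT⟩)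
  have hC0 : 0 ≤ C := le_trans (hknn 0) (hC 0)
  intro x y h
  unfold volKernel
  split_ifs with hxy
  · exact mul_le_mul (hM _ ⟨by linarith, h⟩) (hC y) (hknn y) hM0
  · exact mul_nonneg hM0 hC0

lemma iterK_le_bnd (hW0 : ∀ x < (0:ℝ), W x = 0) (hWnn : ∀ x, 0 ≤ W x)
    (hknn : ∀ y, 0 ≤ k y) (hWm : Measurable W) (hkm : Measurable k)
    (hT : 0 ≤ T) (hM : ∀ t ∈ Icc (0:ℝ) T, W t ≤ M) (hC : ∀ y, k y ≤ C) :
    ∀ (m : ℕ) (x y : ℝ), y ≤ x → x - y ≤ T →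
      iterK (volKernel W k) (m + 1) x y ≤ (M * C) ^ (m + 1) * (x - y) ^ m / m.factorial := by
  have hM0 : 0 ≤ M := le_trans (hWnn 0) (hM 0 ⟨le_rfl, hT⟩)
  have hC0 : 0 ≤ C := le_trans (hknn 0) (hC 0)
  have hMC0 : 0 ≤ M * C := mul_nonneg hM0 hC0
  have hKz := volKernel_zero_of_lt (W := W) (k := k)
  have hKnn := volKernel_nonneg hWnn hknn
  have hKle := volKernel_le hWnn hknn hT hM hC
  have hKm2 := vk_meas hWm hkm
  have hIKm := iterK_measurable hKz hKm2
  have hIKnn := iterK_nonneg hKz hKnn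
  intro m
  induction m with
  | zero =>
    intro x y hyx hT'
    simp only [zero_add, pow_one, pow_zero, mul_one, Nat.factorial_zero, Nat.cast_one, div_one]
    exact hKle x y hT'
  | succ n ih =>
    intro x y hyx hT'
    have hxy0 : 0 ≤ x - y := sub_nonneg.mpr hyx
    have h1 : iterK (volKernel W k) (n + 2) x y
        = ∫ z in y..x, volKernel W k x z * iterK (volKernel W k) (n + 1) z y := rfl
    have hfmeas : Measurable fun z =>
        volKernel W k x z * iterK (volKernel W k) (n + 1) z y :=
      (hKm2.comp (measurable_const.prodMk measurable_id)).mul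
        ((hIKm (n + 1)).comp (measurable_id.prodMk measurable_const))
    have hfle : ∀ z ∈ Icc y x,
        volKernel W k x z * iterK (volKernel W k) (n + 1) z y
          ≤ (M * C) ^ (n + 2) / n.factorial * (z - y) ^ n := by
      intro z hz
      have h2 : iterK (volKernel W k) (n + 1) z y
          ≤ (M * C) ^ (n + 1) * (z - y) ^ n / n.factorial :=
        ih z y hz.1 (by linarith [hz.2])
      have h3 : volKernel W k x z ≤ M * C := hKle x z (by linarith [hz.1])
      calc volKernel W k x z * iterK (volKernel W k) (n + 1) z y
          ≤ (M * C) * ((M * C) ^ (n + 1) * (z - y) ^ n / n.factorial) :=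
            mul_le_mul h3 h2 (hIKnn (n + 1) z y) hMC0
        _ = (M * C) ^ (n + 2) / n.factorial * (z - y) ^ n := by
            rw [pow_succ]; ring
    have hcb : 0 ≤ (M * C) ^ (n + 2) / n.factorial * (x - y) ^ n :=
      mul_nonneg (div_nonneg (pow_nonneg hMC0 _) (Nat.cast_nonneg _)) (pow_nonneg hxy0 _)
    have hfint : IntervalIntegrable
        (fun z => volKernel W k x z * iterK (volKernel W k) (n + 1) z y) volume y x := by
      rw [intervalIntegrable_iff_integrableOn_Ioc_of_le hyx]
      refine Integrable.mono'
        (g := fun _ => (M * C) ^ (n + 2) / n.factorial * (x - y) ^ n)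
        (integrableOn_const measure_Ioc_lt_top.ne)
        hfmeas.aestronglyMeasurable ?_
      filter_upwards [ae_restrict_mem measurableSet_Ioc] with z hz
      rw [Real.norm_eq_abs, abs_of_nonneg (mul_nonneg (hKnn x z) (hIKnn (n + 1) z y))]
      refine (hfle z (Ioc_subset_Icc_self hz)).trans ?_
      have : (z - y) ^ n ≤ (x - y) ^ n :=
        pow_le_pow_left₀ (by linarith [hz.1]) (by linarith [hz.2]) n
      exact mul_le_mul_of_nonneg_left this
        (div_nonneg (pow_nonneg hMC0 _) (Nat.cast_nonneg _))
    have hgint : IntervalIntegrable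
        (fun z => (M * C) ^ (n + 2) / n.factorial * (z - y) ^ n) volume y x :=
      ((continuous_const.mul ((continuous_id.sub continuous_const).pow n)).intervalIntegrable y x)
    have hmono : iterK (volKernel W k) (n + 2) x y
        ≤ ∫ z in y..x, (M * C) ^ (n + 2) / n.factorial * (z - y) ^ n := by
      rw [h1]
      exact intervalIntegral.integral_mono_on hyx hfint hgint hfle
    have hcalc : (∫ z in y..x, (M * C) ^ (n + 2) / n.factorial * (z - y) ^ n)
        = (M * C) ^ (n + 2) / n.factorial * ((x - y) ^ (n + 1) / (n + 1)) := by
      rw [intervalIntegral.integral_const_mul]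
      congr 1
      have hsub := intervalIntegral.integral_comp_sub_right (a := y) (b := x)
        (fun u => u ^ n) y
      rw [hsub, sub_self, integral_pow, zero_pow (Nat.succ_ne_zero n)]
      ring
    refine hmono.trans ?_
    rw [hcalc]
    have hfac : ((n + 1 : ℕ).factorial : ℝ) = (n + 1 : ℝ) * (n.factorial : ℝ) := by
      rw [Nat.factorial_succ]; push_cast; ring
    have hfacpos : (0:ℝ) < n.factorial := by
      exact_mod_cast Nat.factorial_pos n
    apply le_of_eq
    rw [hfac, div_mul_div_comm, mul_comm ((n:ℝ) + 1) (n.factorial:ℝ),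
      ← div_mul_eq_mul_div, div_mul_eq_mul_div, mul_comm ((M*C)^(n+2)) ((x-y)^(n+1)),
      ← div_mul_eq_mul_div]

end Bound


section Resolvent

variable {W k : ℝ → ℝ}

lemma summable_all (hW0 : ∀ x < (0:ℝ), W x = 0) (hWnn : ∀ x, 0 ≤ W x)
    (hWc : ContinuousOn W (Ici 0)) (hknn : ∀ y, 0 ≤ k y)
    (hkbdd : ∃ C, ∀ y, k y ≤ C) (hkm : Measurable k) :
    ∀ x y : ℝ, Summable fun m : ℕ => iterK (volKernel W k) (m + 1) x y := by
  have hWm := W_measurable hW0 hWc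
  intro x y
  rcases le_or_gt y x with hyx | hlt
  · obtain ⟨C₀, hC₀⟩ := hkbdd
    have hC : ∀ t, k t ≤ max C₀ 0 := fun t => (hC₀ t).trans (le_max_left _ _)
    obtain ⟨M, hM⟩ := (isCompact_Icc (a := (0:ℝ)) (b := x - y)).exists_bound_of_continuousOn
      (hWc.mono (fun t ht => ht.1))
    have hM' : ∀ t ∈ Icc (0:ℝ) (x - y), W t ≤ M := fun t ht =>
      (le_abs_self _).trans (by simpa [Real.norm_eq_abs] using hM t ht)
    exact Summable.of_nonneg_of_le
      (fun m => iterK_nonneg volKernel_zero_of_lt (volKernel_nonneg hWnn hknn) (m + 1) x y)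
      (fun m => iterK_le_bnd hW0 hWnn hknn hWm hkm (sub_nonneg.mpr hyx) hM' hC m x y hyx le_rfl)
      (bnd_summable M (max C₀ 0) (x - y))
  · exact summable_zero.congr
      (fun m => (iterK_zero_of_lt volKernel_zero_of_lt (m + 1) x y hlt).symm)

lemma resolventKer_nonneg (hWnn : ∀ x, 0 ≤ W x) (hknn : ∀ y, 0 ≤ k y) :
    ∀ x y : ℝ, 0 ≤ resolventKer W k x y := fun x y =>
  tsum_nonneg (fun m =>
    iterK_nonneg volKernel_zero_of_lt (volKernel_nonneg hWnn hknn) (m + 1) x y)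

lemma resolventKer_zero_of_lt (x y : ℝ) (h : x < y) : resolventKer W k x y = 0 := by
  unfold resolventKer
  rw [tsum_congr (fun m => iterK_zero_of_lt volKernel_zero_of_lt (m + 1) x y h)]
  exact tsum_zero

lemma resolventKer_le (hW0 : ∀ x < (0:ℝ), W x = 0) (hWnn : ∀ x, 0 ≤ W x)
    (hWc : ContinuousOn W (Ici 0)) (hknn : ∀ y, 0 ≤ k y)
    (hkbdd : ∃ C, ∀ y, k y ≤ C) (hkm : Measurable k)
    {T M C : ℝ} (hT : 0 ≤ T) (hM : ∀ t ∈ Icc (0:ℝ) T, W t ≤ M) (hC : ∀ y, k y ≤ C)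
    (x y : ℝ) (hT' : x - y ≤ T) :
    resolventKer W k x y ≤ ∑' m : ℕ, (M * C) ^ (m + 1) * T ^ m / m.factorial := by
  have hM0 : 0 ≤ M := le_trans (hWnn 0) (hM 0 ⟨le_rfl, hT⟩)
  have hC0 : 0 ≤ C := le_trans (hknn 0) (hC 0)
  have hMC0 : 0 ≤ M * C := mul_nonneg hM0 hC0
  have hWm := W_measurable hW0 hWc
  have htermnn : ∀ m : ℕ, (0:ℝ) ≤ (M * C) ^ (m + 1) * T ^ m / m.factorial := fun m =>
    div_nonneg (mul_nonneg (pow_nonneg hMC0 _) (pow_nonneg hT _)) (Nat.cast_nonneg _)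
  rcases le_or_gt y x with hyx | hlt
  · refine Summable.tsum_le_tsum ?_ (summable_all hW0 hWnn hWc hknn hkbdd hkm x y)
      (bnd_summable M C T)
    intro m
    refine (iterK_le_bnd hW0 hWnn hknn hWm hkm hT hM hC m x y hyx hT').trans ?_
    have hfacpos : (0:ℝ) < m.factorial := by exact_mod_cast Nat.factorial_pos m
    refine (div_le_div_iff_of_pos_right hfacpos).mpr ?_
    exact mul_le_mul_of_nonneg_left
      (pow_le_pow_left₀ (sub_nonneg.mpr hyx) hT' m) (pow_nonneg hMC0 _)
  · rw [resolventKer_zero_of_lt x y hlt]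
    exact tsum_nonneg htermnn

lemma resolventKer_measurable (hW0 : ∀ x < (0:ℝ), W x = 0) (hWnn : ∀ x, 0 ≤ W x)
    (hWc : ContinuousOn W (Ici 0)) (hknn : ∀ y, 0 ≤ k y)
    (hkbdd : ∃ C, ∀ y, k y ≤ C) (hkm : Measurable k) :
    Measurable fun p : ℝ × ℝ => resolventKer W k p.1 p.2 := by
  have hWm := W_measurable hW0 hWc
  apply measurable_of_tendsto_metrizable
    (f := fun n (p : ℝ × ℝ) => ∑ i ∈ Finset.range n, iterK (volKernel W k) (i + 1) p.1 p.2)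
  · intro n
    exact Finset.measurable_sum _
      (fun i _ => iterK_measurable volKernel_zero_of_lt (vk_meas hWm hkm) (i + 1))
  · rw [tendsto_pi_nhds]
    intro p
    exact (summable_all hW0 hWnn hWc hknn hkbdd hkm p.1 p.2).hasSum.tendsto_sum_nat

end Resolvent


section Recurrence

variable {W k : ℝ → ℝ}

lemma resolvent_recurrence (hW0 : ∀ x < (0:ℝ), W x = 0) (hWnn : ∀ x, 0 ≤ W x)
    (hWc : ContinuousOn W (Ici 0)) (hknn : ∀ y, 0 ≤ k y)
    (hkbdd : ∃ C, ∀ y, k y ≤ C) (hkm : Measurable k)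
    {T M C : ℝ} (hT : 0 ≤ T) (hM : ∀ t ∈ Icc (0:ℝ) T, W t ≤ M) (hC : ∀ y, k y ≤ C)
    (x t : ℝ) (htx : t ≤ x) (hT' : x - t ≤ T) :
    ∫ y in Ioc t x, volKernel W k x y * resolventKer W k y t
      = resolventKer W k x t - volKernel W k x t := by
  have hM0 : 0 ≤ M := le_trans (hWnn 0) (hM 0 ⟨le_rfl, hT⟩)
  have hC0 : 0 ≤ C := le_trans (hknn 0) (hC 0)
  have hMC0 : 0 ≤ M * C := mul_nonneg hM0 hC0
  have hWm := W_measurable hW0 hWc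
  have hKm2 := vk_meas hWm hkm
  have hIKm := iterK_measurable volKernel_zero_of_lt hKm2
  have hIKnn := iterK_nonneg volKernel_zero_of_lt (volKernel_nonneg hWnn hknn)
  have hKle := volKernel_le hWnn hknn hT hM hC
  have hKnn := volKernel_nonneg hWnn hknn
  set c : ℕ → ℝ := fun m => M * C * ((M * C) ^ (m + 1) * T ^ m / m.factorial) * (x - t)
    with hc
  have hbnn : ∀ m : ℕ, (0:ℝ) ≤ M * C * ((M * C) ^ (m + 1) * T ^ m / m.factorial) := fun m =>
    mul_nonneg hMC0
      (div_nonneg (mul_nonneg (pow_nonneg hMC0 _) (pow_nonneg hT _)) (Nat.cast_nonneg _))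
  have hcnn : ∀ m, 0 ≤ c m := fun m => mul_nonneg (hbnn m) (by linarith)
  have hcsum : Summable c := ((bnd_summable M C T).mul_left (M * C)).mul_right (x - t)
  have hfm : ∀ m : ℕ, Measurable fun y =>
      volKernel W k x y * iterK (volKernel W k) (m + 1) y t := fun m =>
    (hKm2.comp (measurable_const.prodMk measurable_id)).mul
      ((hIKm (m + 1)).comp (measurable_id.prodMk measurable_const))
  have hreal : ∀ (m : ℕ) (y : ℝ), y ∈ Ioc t x →
      volKernel W k x y * iterK (volKernel W k) (m + 1) y t
        ≤ M * C * ((M * C) ^ (m + 1) * T ^ m / m.factorial) := by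
    intro m y hy
    have h1 : iterK (volKernel W k) (m + 1) y t
        ≤ (M * C) ^ (m + 1) * (y - t) ^ m / m.factorial :=
      iterK_le_bnd hW0 hWnn hknn hWm hkm hT hM hC m y t hy.1.le (by linarith [hy.2])
    have hfacpos : (0:ℝ) < m.factorial := by exact_mod_cast Nat.factorial_pos m
    have h2 : (M * C) ^ (m + 1) * (y - t) ^ m / m.factorial
        ≤ (M * C) ^ (m + 1) * T ^ m / m.factorial :=
      (div_le_div_iff_of_pos_right hfacpos).mpr (mul_le_mul_of_nonneg_left
        (pow_le_pow_left₀ (by linarith [hy.1]) (by linarith [hy.2]) m) (pow_nonneg hMC0 _))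
    exact mul_le_mul (hKle x y (by linarith [hy.1])) (h1.trans h2) (hIKnn (m + 1) y t) hMC0
  have hfin : (∑' m : ℕ, ∫⁻ y in Ioc t x,
      ‖volKernel W k x y * iterK (volKernel W k) (m + 1) y t‖ₑ) ≠ ∞ := by
    have hbound : ∀ m : ℕ, (∫⁻ y in Ioc t x,
        ‖volKernel W k x y * iterK (volKernel W k) (m + 1) y t‖ₑ)
          ≤ ENNReal.ofReal (c m) := by
      intro m
      have h1 : ∀ᵐ y ∂(volume.restrict (Ioc t x)),
          ‖volKernel W k x y * iterK (volKernel W k) (m + 1) y t‖ₑ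
            ≤ ENNReal.ofReal (M * C * ((M * C) ^ (m + 1) * T ^ m / m.factorial)) := by
        filter_upwards [ae_restrict_mem measurableSet_Ioc] with y hy
        rw [Real.enorm_eq_ofReal (mul_nonneg (hKnn x y) (hIKnn (m + 1) y t))]
        exact ENNReal.ofReal_le_ofReal (hreal m y hy)
      calc (∫⁻ y in Ioc t x, ‖volKernel W k x y * iterK (volKernel W k) (m + 1) y t‖ₑ)
          ≤ ∫⁻ _ in Ioc t x,
            ENNReal.ofReal (M * C * ((M * C) ^ (m + 1) * T ^ m / m.factorial)) :=
            lintegral_mono_ae h1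
        _ = ENNReal.ofReal (M * C * ((M * C) ^ (m + 1) * T ^ m / m.factorial))
            * volume (Ioc t x) := setLIntegral_const _ _
        _ = ENNReal.ofReal (c m) := by
            rw [Real.volume_Ioc, ← ENNReal.ofReal_mul (hbnn m)]
    refine ne_of_lt (lt_of_le_of_lt (ENNReal.tsum_le_tsum hbound) ?_)
    rw [← ENNReal.ofReal_tsum_of_nonneg hcnn hcsum]
    exact ENNReal.ofReal_lt_top
  have hptwise : ∀ y : ℝ, volKernel W k x y * resolventKer W k y t
      = ∑' m : ℕ, volKernel W k x y * iterK (volKernel W k) (m + 1) y t := by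
    intro y
    unfold resolventKer
    exact tsum_mul_left.symm
  calc ∫ y in Ioc t x, volKernel W k x y * resolventKer W k y t
      = ∫ y in Ioc t x, ∑' m : ℕ,
          volKernel W k x y * iterK (volKernel W k) (m + 1) y t := by
        simp only [hptwise]
    _ = ∑' m : ℕ, ∫ y in Ioc t x,
          volKernel W k x y * iterK (volKernel W k) (m + 1) y t :=
        integral_tsum (fun m => (hfm m).aestronglyMeasurable) hfin
    _ = ∑' m : ℕ, iterK (volKernel W k) (m + 2) x t :=
        tsum_congr (fun m => by
          rw [← intervalIntegral.integral_of_le htx]; rfl)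
    _ = resolventKer W k x t - volKernel W k x t := by
        have hs := summable_all hW0 hWnn hWc hknn hkbdd hkm x t
        have h0 := Summable.tsum_eq_zero_add hs
        have h1 : resolventKer W k x t
            = volKernel W k x t + ∑' m : ℕ, iterK (volKernel W k) (m + 2) x t := by
          rw [resolventKer, h0]; rfl
        linarith

end Recurrence


section Volterra

variable {W k Z : ℝ → ℝ}

lemma volterra (a : ℝ) (hW0 : ∀ x < (0:ℝ), W x = 0) (hWnn : ∀ x, 0 ≤ W x)
    (hWc : ContinuousOn W (Ici 0)) (hknn : ∀ y, 0 ≤ k y)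
    (hkbdd : ∃ C, ∀ y, k y ≤ C) (hkm : Measurable k)
    (hZc : Continuous Z) (hZnn : ∀ x, 0 ≤ Z x) :
    ∀ x : ℝ, resolventH W k Z a x =
      Z x + ∫ y in a..x, W (x - y) * k y * resolventH W k Z a y := by
  have hWm := W_measurable hW0 hWc
  have hKm2 := vk_meas hWm hkm
  have hKnn := volKernel_nonneg hWnn hknn
  have hRnn := resolventKer_nonneg hWnn hknn
  have hRmeas := resolventKer_measurable hW0 hWnn hWc hknn hkbdd hkm
  have hgrep : ∀ y : ℝ, (∫ t in a..y, resolventKer W k y t * Z t)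
      = ∫ t, (Ioc a y).indicator (fun t => resolventKer W k y t * Z t) t := by
    intro y
    rcases le_or_gt a y with h | h
    · rw [intervalIntegral.integral_of_le h,
        ← MeasureTheory.integral_indicator measurableSet_Ioc]
    · have h1 : (∫ t in Ioc y a, resolventKer W k y t * Z t) = 0 :=
        setIntegral_eq_zero_of_forall_eq_zero
          (fun t ht => by rw [resolventKer_zero_of_lt y t ht.1, zero_mul])
      rw [intervalIntegral.integral_symm, intervalIntegral.integral_of_le h.le, h1,
        neg_zero, Ioc_eq_empty (not_lt.mpr h.le)]
      simp
  have hGmeas : Measurable fun y : ℝ => ∫ t in a..y, resolventKer W k y t * Z t := by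
    have hrw : (fun y : ℝ => ∫ t in a..y, resolventKer W k y t * Z t)
        = fun y => ∫ t, (Ioc a y).indicator (fun t => resolventKer W k y t * Z t) t :=
      funext hgrep
    rw [hrw]
    have hfm : Measurable fun q : ℝ × ℝ =>
        (Ioc a q.1).indicator (fun t => resolventKer W k q.1 t * Z t) q.2 := by
      have heq : (fun q : ℝ × ℝ =>
          (Ioc a q.1).indicator (fun t => resolventKer W k q.1 t * Z t) q.2)
          = Set.indicator {q : ℝ × ℝ | a < q.2 ∧ q.2 ≤ q.1}
            (fun q => resolventKer W k q.1 q.2 * Z q.2) := by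
        funext q
        by_cases hq : a < q.2 ∧ q.2 ≤ q.1
        · rw [Set.indicator_of_mem (mem_Ioc.mpr hq)]
          exact (Set.indicator_of_mem
            (show q ∈ {q : ℝ × ℝ | a < q.2 ∧ q.2 ≤ q.1} from hq)
            (fun q => resolventKer W k q.1 q.2 * Z q.2)).symm
        · rw [Set.indicator_of_notMem (fun hmem => hq (mem_Ioc.mp hmem))]
          exact (Set.indicator_of_notMem
            (show q ∉ {q : ℝ × ℝ | a < q.2 ∧ q.2 ≤ q.1} from hq)
            (fun q => resolventKer W k q.1 q.2 * Z q.2)).symm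
      rw [heq]
      exact Measurable.indicator (hRmeas.mul (hZc.measurable.comp measurable_snd))
        ((measurableSet_lt measurable_const measurable_snd).inter
          (measurableSet_le measurable_snd measurable_fst))
    exact (hfm.stronglyMeasurable.integral_prod_right').measurable
  have hHmeas : Measurable (resolventH W k Z a) := by
    have hrw : resolventH W k Z a
        = fun y => Z y + ∫ t in a..y, resolventKer W k y t * Z t := rfl
    rw [hrw]
    exact hZc.measurable.add hGmeas
  intro x
  rcases le_or_gt a x with hax | hax
  swap
  · have hz1 : (∫ y in a..x, resolventKer W k x y * Z y) = 0 := by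
      rw [intervalIntegral.integral_symm, intervalIntegral.integral_of_le hax.le,
        setIntegral_eq_zero_of_forall_eq_zero
          (fun y hy => by rw [resolventKer_zero_of_lt x y hy.1, zero_mul]), neg_zero]
    have hz2 : (∫ y in a..x, W (x - y) * k y * resolventH W k Z a y) = 0 := by
      rw [intervalIntegral.integral_symm, intervalIntegral.integral_of_le hax.le,
        setIntegral_eq_zero_of_forall_eq_zero
          (fun y hy => by
            rw [hW0 (x - y) (by have := hy.1; linarith), zero_mul, zero_mul]), neg_zero]
    show Z x + (∫ y in a..x, resolventKer W k x y * Z y) = _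
    rw [hz1, hz2, add_zero]
  -- main case a ≤ x
  obtain ⟨C₀, hC₀⟩ := hkbdd
  set C : ℝ := max C₀ 0 with hCdef
  have hC : ∀ t, k t ≤ C := fun t => (hC₀ t).trans (le_max_left _ _)
  have hT : (0:ℝ) ≤ x - a := by linarith
  obtain ⟨M, hM'⟩ := (isCompact_Icc (a := (0:ℝ)) (b := x - a)).exists_bound_of_continuousOn
    (hWc.mono (fun t ht => ht.1))
  have hM : ∀ t ∈ Icc (0:ℝ) (x - a), W t ≤ M := fun t ht =>
    (le_abs_self _).trans (by simpa [Real.norm_eq_abs] using hM' t ht)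
  have hM0 : 0 ≤ M := le_trans (hWnn 0) (hM 0 ⟨le_rfl, hT⟩)
  have hC0 : 0 ≤ C := le_max_right _ _
  have hMC0 : 0 ≤ M * C := mul_nonneg hM0 hC0
  set SB : ℝ := ∑' m : ℕ, (M * C) ^ (m + 1) * (x - a) ^ m / m.factorial with hSBdef
  have hSB0 : 0 ≤ SB := tsum_nonneg (fun m =>
    div_nonneg (mul_nonneg (pow_nonneg hMC0 _) (pow_nonneg hT _)) (Nat.cast_nonneg _))
  have hRle : ∀ y t : ℝ, a ≤ t → y ≤ x → resolventKer W k y t ≤ SB := fun y t h1 h2 =>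
    resolventKer_le hW0 hWnn hWc hknn ⟨C₀, hC₀⟩ hkm hT hM hC y t (by linarith)
  obtain ⟨Zb, hZb'⟩ := (isCompact_Icc (a := a) (b := x)).exists_bound_of_continuousOn
    hZc.continuousOn
  have hZb : ∀ t ∈ Icc a x, Z t ≤ Zb := fun t ht =>
    (le_abs_self _).trans (by simpa [Real.norm_eq_abs] using hZb' t ht)
  have hZb0 : 0 ≤ Zb := le_trans (hZnn a) (hZb a ⟨le_rfl, hax⟩)
  have hKle : ∀ y, a ≤ y → volKernel W k x y ≤ M * C := fun y hy =>
    volKernel_le hWnn hknn hT hM hC x y (by linarith)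
  set s : Set ℝ := Ioc a x with hsdef
  have hbdd_int : ∀ (f : ℝ → ℝ) (c : ℝ), Measurable f → (∀ y ∈ s, |f y| ≤ c) →
      IntegrableOn f s volume := by
    intro f c hf hb
    refine Integrable.mono' (g := fun _ => c)
      (integrableOn_const measure_Ioc_lt_top.ne) hf.aestronglyMeasurable ?_
    filter_upwards [ae_restrict_mem measurableSet_Ioc] with y hy
    rw [Real.norm_eq_abs]
    exact hb y hy
  have hKxmeas : Measurable fun y => volKernel W k x y :=
    hKm2.comp (measurable_const.prodMk measurable_id)
  have hRxmeas : Measurable fun t => resolventKer W k x t :=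
    hRmeas.comp (measurable_const.prodMk measurable_id)
  have hRtmeas : ∀ t, Measurable fun y => resolventKer W k y t := fun t =>
    hRmeas.comp (measurable_id.prodMk measurable_const)
  -- bounds for G
  have hGint : ∀ y ∈ Icc a x,
      IntervalIntegrable (fun t => resolventKer W k y t * Z t) volume a y := by
    intro y hy
    rw [intervalIntegrable_iff_integrableOn_Ioc_of_le hy.1]
    refine Integrable.mono' (g := fun _ => SB * Zb)
      (integrableOn_const measure_Ioc_lt_top.ne)
      ((hRmeas.comp (measurable_const.prodMk measurable_id)).mul
        hZc.measurable).aestronglyMeasurable ?_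
    filter_upwards [ae_restrict_mem measurableSet_Ioc] with t ht
    rw [Real.norm_eq_abs, abs_of_nonneg (mul_nonneg (hRnn y t) (hZnn t))]
    exact mul_le_mul (hRle y t ht.1.le hy.2) (hZb t ⟨ht.1.le, le_trans ht.2 hy.2⟩)
      (hZnn t) hSB0
  have hGnn : ∀ y ∈ Icc a x, 0 ≤ ∫ t in a..y, resolventKer W k y t * Z t := fun y hy =>
    intervalIntegral.integral_nonneg hy.1 (fun t _ => mul_nonneg (hRnn y t) (hZnn t))
  have hGle : ∀ y ∈ Icc a x,
      (∫ t in a..y, resolventKer W k y t * Z t) ≤ (x - a) * (SB * Zb) := by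
    intro y hy
    calc (∫ t in a..y, resolventKer W k y t * Z t)
        ≤ ∫ _ in a..y, SB * Zb :=
          intervalIntegral.integral_mono_on hy.1 (hGint y hy) intervalIntegrable_const
            (fun t ht => mul_le_mul (hRle y t ht.1 hy.2)
              (hZb t ⟨ht.1, le_trans ht.2 hy.2⟩) (hZnn t) hSB0)
      _ = (y - a) * (SB * Zb) := by rw [intervalIntegral.integral_const, smul_eq_mul]
      _ ≤ (x - a) * (SB * Zb) :=
          mul_le_mul_of_nonneg_right (by linarith [hy.2]) (mul_nonneg hSB0 hZb0)
  have hint1 : IntegrableOn (fun y => volKernel W k x y * Z y) s volume :=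
    hbdd_int _ (M * C * Zb) (hKxmeas.mul hZc.measurable) (fun y hy => by
      rw [abs_of_nonneg (mul_nonneg (hKnn x y) (hZnn y))]
      exact mul_le_mul (hKle y hy.1.le) (hZb y ⟨hy.1.le, hy.2⟩) (hZnn y) hMC0)
  have hint2 : IntegrableOn
      (fun y => volKernel W k x y * ∫ t in a..y, resolventKer W k y t * Z t) s volume :=
    hbdd_int _ (M * C * ((x - a) * (SB * Zb))) (hKxmeas.mul hGmeas) (fun y hy => by
      have hyIcc : y ∈ Icc a x := ⟨hy.1.le, hy.2⟩
      rw [abs_of_nonneg (mul_nonneg (hKnn x y) (hGnn y hyIcc))]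
      exact mul_le_mul (hKle y hy.1.le) (hGle y hyIcc) (hGnn y hyIcc) hMC0)
  have hintR : IntegrableOn (fun t => resolventKer W k x t * Z t) s volume :=
    hbdd_int _ (SB * Zb) (hRxmeas.mul hZc.measurable) (fun t ht => by
      rw [abs_of_nonneg (mul_nonneg (hRnn x t) (hZnn t))]
      exact mul_le_mul (hRle x t ht.1.le le_rfl) (hZb t ⟨ht.1.le, ht.2⟩) (hZnn t) hSB0)
  have hIone : ∀ y, y ≤ x →
      IntegrableOn (fun t => resolventKer W k y t * Z t) s volume := fun y hyx =>
    hbdd_int _ (SB * Zb)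
      ((hRmeas.comp (measurable_const.prodMk measurable_id)).mul hZc.measurable)
      (fun t ht => by
        rw [abs_of_nonneg (mul_nonneg (hRnn y t) (hZnn t))]
        exact mul_le_mul (hRle y t ht.1.le hyx) (hZb t ⟨ht.1.le, ht.2⟩) (hZnn t) hSB0)
  have hGs : ∀ y ∈ s, (∫ t in a..y, resolventKer W k y t * Z t)
      = ∫ t in s, resolventKer W k y t * Z t := by
    intro y hy
    have huni : Ioc a y ∪ Ioc y x = s := Ioc_union_Ioc_eq_Ioc hy.1.le hy.2
    have hI := hIone y hy.2
    have h2 : (∫ t in Ioc y x, resolventKer W k y t * Z t) = 0 :=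
      setIntegral_eq_zero_of_forall_eq_zero
        (fun t ht => by rw [resolventKer_zero_of_lt y t ht.1, zero_mul])
    rw [intervalIntegral.integral_of_le hy.1.le, ← huni,
      setIntegral_union (Ioc_disjoint_Ioc_of_le le_rfl) measurableSet_Ioc
        (hI.mono_set (huni ▸ subset_union_left)) (hI.mono_set (huni ▸ subset_union_right)),
      h2, add_zero]
  have hinner : ∀ t ∈ s, (∫ y in s, volKernel W k x y * resolventKer W k y t)
      = resolventKer W k x t - volKernel W k x t := by
    intro t ht
    have huni : Ioc a t ∪ Ioc t x = s := Ioc_union_Ioc_eq_Ioc ht.1.le ht.2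
    have hI : IntegrableOn (fun y => volKernel W k x y * resolventKer W k y t) s volume :=
      hbdd_int _ (M * C * SB) (hKxmeas.mul (hRtmeas t)) (fun y hy => by
        rw [abs_of_nonneg (mul_nonneg (hKnn x y) (hRnn y t))]
        exact mul_le_mul (hKle y hy.1.le) (hRle y t ht.1.le hy.2) (hRnn y t) hMC0)
    have h0 : (∫ y in Ioc a t, volKernel W k x y * resolventKer W k y t) = 0 := by
      apply setIntegral_eq_zero_of_ae_eq_zero
      have hne : ∀ᵐ y : ℝ, y ∉ ({t} : Set ℝ) :=
        measure_eq_zero_iff_ae_notMem.mp (measure_singleton t)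
      filter_upwards [hne] with y hy hymem
      have hlt : y < t := lt_of_le_of_ne hymem.2 (by simpa using hy)
      rw [resolventKer_zero_of_lt y t hlt, mul_zero]
    have hrec := resolvent_recurrence hW0 hWnn hWc hknn ⟨C₀, hC₀⟩ hkm hT hM hC x t ht.2
      (by have := ht.1; linarith)
    rw [← huni, setIntegral_union (Ioc_disjoint_Ioc_of_le le_rfl) measurableSet_Ioc
      (hI.mono_set (huni ▸ subset_union_left)) (hI.mono_set (huni ▸ subset_union_right)),
      h0, zero_add, hrec]
  have hswap : Integrable
      (fun q : ℝ × ℝ => volKernel W k x q.1 * (resolventKer W k q.1 q.2 * Z q.2))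
      ((volume.restrict s).prod (volume.restrict s)) := by
    rw [Measure.prod_restrict]
    refine Integrable.mono' (g := fun _ => M * C * (SB * Zb))
      (integrableOn_const (ne_of_lt ?_))
      (((hKm2.comp (measurable_const.prodMk measurable_fst)).mul
        (hRmeas.mul (hZc.measurable.comp measurable_snd))).aestronglyMeasurable) ?_
    · rw [Measure.prod_prod]
      exact ENNReal.mul_lt_top measure_Ioc_lt_top measure_Ioc_lt_top
    · filter_upwards [ae_restrict_mem (measurableSet_Ioc.prod measurableSet_Ioc)] with q hq
      obtain ⟨hq1, hq2⟩ := hq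
      rw [Real.norm_eq_abs, abs_of_nonneg
        (mul_nonneg (hKnn x q.1) (mul_nonneg (hRnn q.1 q.2) (hZnn q.2)))]
      exact mul_le_mul (hKle q.1 hq1.1.le)
        (mul_le_mul (hRle q.1 q.2 hq2.1.le hq1.2) (hZb q.2 ⟨hq2.1.le, hq2.2⟩)
          (hZnn q.2) hSB0)
        (mul_nonneg (hRnn q.1 q.2) (hZnn q.2)) hMC0
  have hchain : (∫ y in s, volKernel W k x y * ∫ t in a..y, resolventKer W k y t * Z t)
      = (∫ t in s, resolventKer W k x t * Z t) - ∫ t in s, volKernel W k x t * Z t := by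
    calc (∫ y in s, volKernel W k x y * ∫ t in a..y, resolventKer W k y t * Z t)
        = ∫ y in s, ∫ t in s, volKernel W k x y * (resolventKer W k y t * Z t) := by
          refine setIntegral_congr_fun measurableSet_Ioc (fun y hy => ?_)
          rw [hGs y hy]
          exact (integral_const_mul _ _).symm
      _ = ∫ t in s, ∫ y in s, volKernel W k x y * (resolventKer W k y t * Z t) :=
          integral_integral_swap hswap
      _ = ∫ t in s, (resolventKer W k x t - volKernel W k x t) * Z t := by
          refine setIntegral_congr_fun measurableSet_Ioc (fun t ht => ?_)
          calc (∫ y in s, volKernel W k x y * (resolventKer W k y t * Z t))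
              = ∫ y in s, (volKernel W k x y * resolventKer W k y t) * Z t := by
                simp only [mul_assoc]
            _ = (∫ y in s, volKernel W k x y * resolventKer W k y t) * Z t :=
                integral_mul_const _ _
            _ = (resolventKer W k x t - volKernel W k x t) * Z t := by rw [hinner t ht]
      _ = ∫ t in s, (resolventKer W k x t * Z t - volKernel W k x t * Z t) := by
          refine setIntegral_congr_fun measurableSet_Ioc (fun t _ => ?_)
          ring
      _ = (∫ t in s, resolventKer W k x t * Z t) - ∫ t in s, volKernel W k x t * Z t :=
          integral_sub hintR hint1
  have hmain : (∫ y in s, volKernel W k x y * resolventH W k Z a y)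
      = ∫ y in s, resolventKer W k x y * Z y := by
    have hsplit : (∫ y in s, volKernel W k x y * resolventH W k Z a y)
        = (∫ y in s, volKernel W k x y * Z y)
          + ∫ y in s, volKernel W k x y * ∫ t in a..y, resolventKer W k y t * Z t := by
      rw [← integral_add hint1 hint2]
      refine setIntegral_congr_fun measurableSet_Ioc (fun y _ => ?_)
      rw [show resolventH W k Z a y
        = Z y + ∫ t in a..y, resolventKer W k y t * Z t from rfl, mul_add]
    rw [hsplit, hchain]
    ring
  show Z x + (∫ y in a..x, resolventKer W k x y * Z y)
      = Z x + ∫ y in a..x, W (x - y) * k y * resolventH W k Z a y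
  congr 1
  rw [intervalIntegral.integral_of_le hax, intervalIntegral.integral_of_le hax, ← hmain]
  refine setIntegral_congr_fun measurableSet_Ioc (fun y hy => ?_)
  show volKernel W k x y * resolventH W k Z a y = W (x - y) * k y * resolventH W k Z a y
  rw [show volKernel W k x y = W (x - y) * k y from if_pos hy.2]

end Volterra


section Continuity

variable {W k Z : ℝ → ℝ}

lemma resolventH_measurable (a : ℝ) (hW0 : ∀ x < (0:ℝ), W x = 0) (hWnn : ∀ x, 0 ≤ W x)
    (hWc : ContinuousOn W (Ici 0)) (hknn : ∀ y, 0 ≤ k y)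
    (hkbdd : ∃ C, ∀ y, k y ≤ C) (hkm : Measurable k) (hZc : Continuous Z) :
    Measurable (resolventH W k Z a) := by
  have hRmeas := resolventKer_measurable hW0 hWnn hWc hknn hkbdd hkm
  have hgrep : ∀ y : ℝ, (∫ t in a..y, resolventKer W k y t * Z t)
      = ∫ t, (Ioc a y).indicator (fun t => resolventKer W k y t * Z t) t := by
    intro y
    rcases le_or_gt a y with h | h
    · rw [intervalIntegral.integral_of_le h,
        ← MeasureTheory.integral_indicator measurableSet_Ioc]
    · have h1 : (∫ t in Ioc y a, resolventKer W k y t * Z t) = 0 :=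
        setIntegral_eq_zero_of_forall_eq_zero
          (fun t ht => by rw [resolventKer_zero_of_lt y t ht.1, zero_mul])
      rw [intervalIntegral.integral_symm, intervalIntegral.integral_of_le h.le, h1,
        neg_zero, Ioc_eq_empty (not_lt.mpr h.le)]
      simp
  have hGmeas : Measurable fun y : ℝ => ∫ t in a..y, resolventKer W k y t * Z t := by
    have hrw : (fun y : ℝ => ∫ t in a..y, resolventKer W k y t * Z t)
        = fun y => ∫ t, (Ioc a y).indicator (fun t => resolventKer W k y t * Z t) t :=
      funext hgrep
    rw [hrw]
    have hfm : Measurable fun q : ℝ × ℝ =>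
        (Ioc a q.1).indicator (fun t => resolventKer W k q.1 t * Z t) q.2 := by
      have heq : (fun q : ℝ × ℝ =>
          (Ioc a q.1).indicator (fun t => resolventKer W k q.1 t * Z t) q.2)
          = Set.indicator {q : ℝ × ℝ | a < q.2 ∧ q.2 ≤ q.1}
            (fun q => resolventKer W k q.1 q.2 * Z q.2) := by
        funext q
        by_cases hq : a < q.2 ∧ q.2 ≤ q.1
        · rw [Set.indicator_of_mem (mem_Ioc.mpr hq)]
          exact (Set.indicator_of_mem
            (show q ∈ {q : ℝ × ℝ | a < q.2 ∧ q.2 ≤ q.1} from hq)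
            (fun q => resolventKer W k q.1 q.2 * Z q.2)).symm
        · rw [Set.indicator_of_notMem (fun hmem => hq (mem_Ioc.mp hmem))]
          exact (Set.indicator_of_notMem
            (show q ∉ {q : ℝ × ℝ | a < q.2 ∧ q.2 ≤ q.1} from hq)
            (fun q => resolventKer W k q.1 q.2 * Z q.2)).symm
      rw [heq]
      exact Measurable.indicator (hRmeas.mul (hZc.measurable.comp measurable_snd))
        ((measurableSet_lt measurable_const measurable_snd).inter
          (measurableSet_le measurable_snd measurable_fst))
    exact (hfm.stronglyMeasurable.integral_prod_right').measurable
  have hrw : resolventH W k Z a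
      = fun y => Z y + ∫ t in a..y, resolventKer W k y t * Z t := rfl
  rw [hrw]
  exact hZc.measurable.add hGmeas

lemma resolventH_abs_le (a : ℝ) (hW0 : ∀ x < (0:ℝ), W x = 0) (hWnn : ∀ x, 0 ≤ W x)
    (hWc : ContinuousOn W (Ici 0)) (hknn : ∀ y, 0 ≤ k y)
    (hkbdd : ∃ C, ∀ y, k y ≤ C) (hkm : Measurable k)
    (hZc : Continuous Z) (hZnn : ∀ x, 0 ≤ Z x)
    (b : ℝ) (hab : a ≤ b) :
    ∃ D : ℝ, 0 ≤ D ∧ ∀ y ∈ Icc a b, |resolventH W k Z a y| ≤ D := by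
  have hRnn := resolventKer_nonneg hWnn hknn
  have hRmeas := resolventKer_measurable hW0 hWnn hWc hknn hkbdd hkm
  obtain ⟨C₀, hC₀⟩ := hkbdd
  set C : ℝ := max C₀ 0 with hCdef
  have hC : ∀ t, k t ≤ C := fun t => (hC₀ t).trans (le_max_left _ _)
  have hT : (0:ℝ) ≤ b - a := by linarith
  obtain ⟨M, hM'⟩ := (isCompact_Icc (a := (0:ℝ)) (b := b - a)).exists_bound_of_continuousOn
    (hWc.mono (fun t ht => ht.1))
  have hM : ∀ t ∈ Icc (0:ℝ) (b - a), W t ≤ M := fun t ht =>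
    (le_abs_self _).trans (by simpa [Real.norm_eq_abs] using hM' t ht)
  have hM0 : 0 ≤ M := le_trans (hWnn 0) (hM 0 ⟨le_rfl, hT⟩)
  have hC0 : 0 ≤ C := le_max_right _ _
  have hMC0 : 0 ≤ M * C := mul_nonneg hM0 hC0
  set SB : ℝ := ∑' m : ℕ, (M * C) ^ (m + 1) * (b - a) ^ m / m.factorial with hSBdef
  have hSB0 : 0 ≤ SB := tsum_nonneg (fun m =>
    div_nonneg (mul_nonneg (pow_nonneg hMC0 _) (pow_nonneg hT _)) (Nat.cast_nonneg _))
  have hRle : ∀ y t : ℝ, a ≤ t → y ≤ b → resolventKer W k y t ≤ SB := fun y t h1 h2 =>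
    resolventKer_le hW0 hWnn hWc hknn ⟨C₀, hC₀⟩ hkm hT hM hC y t (by linarith)
  obtain ⟨Zb, hZb'⟩ := (isCompact_Icc (a := a) (b := b)).exists_bound_of_continuousOn
    hZc.continuousOn
  have hZb : ∀ t ∈ Icc a b, Z t ≤ Zb := fun t ht =>
    (le_abs_self _).trans (by simpa [Real.norm_eq_abs] using hZb' t ht)
  have hZb0 : 0 ≤ Zb := le_trans (hZnn a) (hZb a ⟨le_rfl, hab⟩)
  have hGint : ∀ y ∈ Icc a b,
      IntervalIntegrable (fun t => resolventKer W k y t * Z t) volume a y := by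
    intro y hy
    rw [intervalIntegrable_iff_integrableOn_Ioc_of_le hy.1]
    refine Integrable.mono' (g := fun _ => SB * Zb)
      (integrableOn_const measure_Ioc_lt_top.ne)
      ((hRmeas.comp (measurable_const.prodMk measurable_id)).mul
        hZc.measurable).aestronglyMeasurable ?_
    filter_upwards [ae_restrict_mem measurableSet_Ioc] with t ht
    rw [Real.norm_eq_abs, abs_of_nonneg (mul_nonneg (hRnn y t) (hZnn t))]
    exact mul_le_mul (hRle y t ht.1.le hy.2) (hZb t ⟨ht.1.le, le_trans ht.2 hy.2⟩)
      (hZnn t) hSB0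
  have hGnn : ∀ y ∈ Icc a b, 0 ≤ ∫ t in a..y, resolventKer W k y t * Z t := fun y hy =>
    intervalIntegral.integral_nonneg hy.1 (fun t _ => mul_nonneg (hRnn y t) (hZnn t))
  have hGle : ∀ y ∈ Icc a b,
      (∫ t in a..y, resolventKer W k y t * Z t) ≤ (b - a) * (SB * Zb) := by
    intro y hy
    calc (∫ t in a..y, resolventKer W k y t * Z t)
        ≤ ∫ _ in a..y, SB * Zb :=
          intervalIntegral.integral_mono_on hy.1 (hGint y hy) intervalIntegrable_const
            (fun t ht => mul_le_mul (hRle y t ht.1 hy.2)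
              (hZb t ⟨ht.1, le_trans ht.2 hy.2⟩) (hZnn t) hSB0)
      _ = (y - a) * (SB * Zb) := by rw [intervalIntegral.integral_const, smul_eq_mul]
      _ ≤ (b - a) * (SB * Zb) :=
          mul_le_mul_of_nonneg_right (by linarith [hy.2]) (mul_nonneg hSB0 hZb0)
  refine ⟨Zb + (b - a) * (SB * Zb), by positivity, ?_⟩
  intro y hy
  have h1 : resolventH W k Z a y
      = Z y + ∫ t in a..y, resolventKer W k y t * Z t := rfl
  rw [h1, abs_of_nonneg (add_nonneg (hZnn y) (hGnn y hy))]
  exact add_le_add (hZb y hy) (hGle y hy)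

lemma resolventH_continuous (a : ℝ) (hW0 : ∀ x < (0:ℝ), W x = 0) (hWnn : ∀ x, 0 ≤ W x)
    (hWc : ContinuousOn W (Ici 0)) (hknn : ∀ y, 0 ≤ k y)
    (hkbdd : ∃ C, ∀ y, k y ≤ C) (hkm : Measurable k)
    (hZc : Continuous Z) (hZnn : ∀ x, 0 ≤ Z x) :
    Continuous (resolventH W k Z a) := by
  have hWm := W_measurable hW0 hWc
  have hHmeas := resolventH_measurable a hW0 hWnn hWc hknn hkbdd hkm hZc
  have hvolt := volterra a hW0 hWnn hWc hknn hkbdd hkm hZc hZnn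
  rw [continuous_iff_continuousAt]
  intro x₀
  have hzlt : ∀ x : ℝ, x < a →
      (∫ y in a..x, W (x - y) * k y * resolventH W k Z a y) = 0 := by
    intro x hx
    rw [intervalIntegral.integral_symm, intervalIntegral.integral_of_le hx.le,
      setIntegral_eq_zero_of_forall_eq_zero
        (fun y hy => by
          rw [hW0 (x - y) (by have := hy.1; linarith), zero_mul, zero_mul]), neg_zero]
  rcases lt_or_ge x₀ a with hx₀a | hx₀a
  · -- x₀ < a : H = Z near x₀
    have heq : Z =ᶠ[nhds x₀] resolventH W k Z a := by
      filter_upwards [Iio_mem_nhds hx₀a] with x hx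
      rw [hvolt x, hzlt x hx, add_zero]
    exact hZc.continuousAt.congr heq
  · -- a ≤ x₀
    set b : ℝ := x₀ + 1 with hbdef
    have hab : a ≤ b := by linarith
    have hx₀b : x₀ < b := by linarith
    obtain ⟨D, hD0, hD⟩ := resolventH_abs_le a hW0 hWnn hWc hknn hkbdd hkm hZc hZnn b hab
    obtain ⟨C₀, hC₀⟩ := hkbdd
    set C : ℝ := max C₀ 0 with hCdef
    have hC : ∀ t, k t ≤ C := fun t => (hC₀ t).trans (le_max_left _ _)
    have hT : (0:ℝ) ≤ b - a := by linarith
    obtain ⟨M, hM'⟩ := (isCompact_Icc (a := (0:ℝ)) (b := b - a)).exists_bound_of_continuousOn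
      (hWc.mono (fun t ht => ht.1))
    have hM : ∀ t ∈ Icc (0:ℝ) (b - a), W t ≤ M := fun t ht =>
      (le_abs_self _).trans (by simpa [Real.norm_eq_abs] using hM' t ht)
    have hM0 : 0 ≤ M := le_trans (hWnn 0) (hM 0 ⟨le_rfl, hT⟩)
    have hC0 : 0 ≤ C := le_max_right _ _
    have hWle : ∀ u : ℝ, u ≤ b - a → W u ≤ M := by
      intro u hu
      rcases lt_or_ge u 0 with h | h
      · rw [hW0 u h]; exact hM0
      · exact hM u ⟨h, hu⟩
    have hmeas : ∀ x : ℝ, Measurable fun y => W (x - y) * k y * resolventH W k Z a y :=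
      fun x => ((hWm.comp (measurable_const.sub measurable_id)).mul hkm).mul hHmeas
    have hIb : ∀ x : ℝ, x ≤ b → IntegrableOn
        (fun y => W (x - y) * k y * resolventH W k Z a y) (Ioc a b) volume := by
      intro x hx
      refine Integrable.mono' (g := fun _ => M * C * D)
        (integrableOn_const measure_Ioc_lt_top.ne)
        (hmeas x).aestronglyMeasurable ?_
      filter_upwards [ae_restrict_mem measurableSet_Ioc] with y hy
      rw [Real.norm_eq_abs, abs_mul, abs_mul, abs_of_nonneg (hWnn _), abs_of_nonneg (hknn _)]
      exact mul_le_mul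
        (mul_le_mul (hWle _ (by have := hy.1; linarith)) (hC y) (hknn y) hM0)
        (hD y ⟨hy.1.le, hy.2⟩) (abs_nonneg _) (mul_nonneg hM0 hC0)
    have hrep : ∀ x ∈ Iio b, resolventH W k Z a x
        = Z x + ∫ y in Ioc a b, W (x - y) * k y * resolventH W k Z a y := by
      intro x hx
      rw [hvolt x]
      congr 1
      rcases le_or_gt a x with haxx | haxx
      · rw [intervalIntegral.integral_of_le haxx]
        have huni : Ioc a x ∪ Ioc x b = Ioc a b :=
          Ioc_union_Ioc_eq_Ioc haxx (le_of_lt hx)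
        have hI := hIb x (le_of_lt hx)
        have h0 : (∫ y in Ioc x b, W (x - y) * k y * resolventH W k Z a y) = 0 :=
          setIntegral_eq_zero_of_forall_eq_zero
            (fun y hy => by
              rw [hW0 (x - y) (by have := hy.1; linarith), zero_mul, zero_mul])
        rw [← huni, setIntegral_union (Ioc_disjoint_Ioc_of_le le_rfl) measurableSet_Ioc
          (hI.mono_set (huni ▸ subset_union_left))
          (hI.mono_set (huni ▸ subset_union_right)), h0, add_zero]
      · rw [hzlt x haxx]
        exact (setIntegral_eq_zero_of_forall_eq_zero
          (fun y hy => by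
            rw [hW0 (x - y) (by have := hy.1; linarith), zero_mul, zero_mul])).symm
    have hcont : ContinuousAt
        (fun x => ∫ y in Ioc a b, W (x - y) * k y * resolventH W k Z a y) x₀ := by
      apply tendsto_integral_filter_of_dominated_convergence (bound := fun _ => M * C * D)
      · exact Filter.Eventually.of_forall (fun x => (hmeas x).aestronglyMeasurable)
      · refine Filter.eventually_of_mem (Iio_mem_nhds hx₀b) ?_
        intro x hx
        filter_upwards [ae_restrict_mem measurableSet_Ioc] with y hy
        rw [Real.norm_eq_abs, abs_mul, abs_mul, abs_of_nonneg (hWnn _),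
          abs_of_nonneg (hknn _)]
        exact mul_le_mul
          (mul_le_mul (hWle _ (by have h1 := hy.1; have h2 : x < b := hx; linarith))
            (hC y) (hknn y) hM0)
          (hD y ⟨hy.1.le, hy.2⟩) (abs_nonneg _) (mul_nonneg hM0 hC0)
      · exact integrableOn_const measure_Ioc_lt_top.ne
      · have hne : ∀ᵐ y : ℝ, y ∉ ({x₀} : Set ℝ) :=
          measure_eq_zero_iff_ae_notMem.mp (measure_singleton x₀)
        apply ae_restrict_of_ae
        filter_upwards [hne] with y hy
        have hy' : y ≠ x₀ := by simpa using hy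
        apply Filter.Tendsto.mul_const
        apply Filter.Tendsto.mul_const
        have hne0 : x₀ - y ≠ 0 := sub_ne_zero.mpr (Ne.symm hy')
        rcases hne0.lt_or_gt with h | h
        · have h0 : W (x₀ - y) = 0 := hW0 _ h
          rw [h0]
          have hev : ∀ᶠ x in nhds x₀, W (x - y) = 0 := by
            have hpre : {x : ℝ | x - y ∈ Iio 0} ∈ nhds x₀ :=
              (continuous_id.sub continuous_const).continuousAt.preimage_mem_nhds
                (Iio_mem_nhds h)
            filter_upwards [hpre] with x hx
            exact hW0 _ hx
          exact tendsto_const_nhds.congr' (hev.mono fun x hx => hx.symm)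
        · have hca : ContinuousAt W (x₀ - y) := hWc.continuousAt (Ici_mem_nhds h)
          exact Filter.Tendsto.comp hca ((continuous_id.sub continuous_const).tendsto x₀)
    have heq : (fun x => Z x + ∫ y in Ioc a b, W (x - y) * k y * resolventH W k Z a y)
        =ᶠ[nhds x₀] resolventH W k Z a := by
      filter_upwards [Iio_mem_nhds hx₀b] with x hx
      exact (hrep x hx).symm
    exact (hZc.continuousAt.add hcont).congr heq

end Continuity

end Stmt7Aux

/-- (a) the resolventKer series converges; (b) `H` is continuous; and
(c) `H` solves the Volterra equation `H(x) = Z(x) + ∫_a^x W(x-y) k(y) H(y) dy`. -/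
theorem stmt7 (a : ℝ) (ha : a ≤ 0)
    (W : ℝ → ℝ) (hW0 : ∀ x < (0:ℝ), W x = 0) (hWnonneg : ∀ x, 0 ≤ W x)
    (hWc : ContinuousOn W (Ici 0))
    (k : ℝ → ℝ) (hknonneg : ∀ y, 0 ≤ k y) (hkbdd : ∃ C, ∀ y, k y ≤ C)
    (hkmeas : Measurable k)
    (Z : ℝ → ℝ) (hZc : Continuous Z) (hZnonneg : ∀ x, 0 ≤ Z x) :
    (∀ x y : ℝ, y ≤ x →
        Summable (fun m : ℕ => iterK (volKernel W k) (m + 1) x y)) ∧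
      Continuous (resolventH W k Z a) ∧
      (∀ x : ℝ, resolventH W k Z a x =
        Z x + ∫ y in a..x, W (x - y) * k y * resolventH W k Z a y) := by
  refine ⟨?_, ?_, ?_⟩
  · intro x y _
    exact Stmt7Aux.summable_all hW0 hWnonneg hWc hknonneg hkbdd hkmeas x y
  · exact Stmt7Aux.resolventH_continuous a hW0 hWnonneg hWc hknonneg hkbdd hkmeas hZc hZnonneg
  · exact Stmt7Aux.volterra a hW0 hWnonneg hWc hknonneg hkbdd hkmeas hZc hZnonneg
end

section
/- Let a ∈ ℝ and let W : [0,∞) → ℝ be continuous on [0,∞), continuously differentiable on (0,∞), and such that W′ extends to a continuous function on [0,∞). Let k : ℝ → ℝ be bounded and measurable, let H : ℝ → ℝ be continuous, and define I(x) = ∫_a^x W(x−y) k(y) H(y) dy. If at a point x₀ > a the function k has finite one-sided limits k(x₀−) and k(x₀+) (and k is continuous on a punctured neighbourhood of x₀), then I has one-sided derivatives at x₀ and I′(x₀+) − I′(x₀−) = W(0) · H(x₀) · ( k(x₀+) − k(x₀−) ). -/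
open MeasureTheory Set Filter Topology

set_option maxHeartbeats 1000000

/-- The function `I(x) = ∫_a^x W(x-y) k(y) H(y) dy`. -/
noncomputable def volInt (W k H : ℝ → ℝ) (a : ℝ) (x : ℝ) : ℝ :=
  ∫ y in a..x, W (x - y) * k y * H y

/-- jump of the one-sided derivatives of `I(x) = ∫_a^x W(x-y) k(y) H(y) dy`
at a jump point `x₀` of `k`:
`I'(x₀+) - I'(x₀-) = W(0) · H(x₀) · (k(x₀+) - k(x₀-))`. -/
theorem stmt14 (a : ℝ) (W W' : ℝ → ℝ)
    (hWc : ContinuousOn W (Ici 0))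
    (hWd : ∀ x ∈ Ioi (0:ℝ), HasDerivAt W (W' x) x)
    (hW'c : ContinuousOn W' (Ici 0))
    (k : ℝ → ℝ) (hkmeas : Measurable k) (hkbdd : ∃ C, ∀ y, |k y| ≤ C)
    (H : ℝ → ℝ) (hH : Continuous H)
    (x₀ : ℝ) (hx₀ : a < x₀)
    (kp km : ℝ)
    (hkp : Tendsto k (nhdsWithin x₀ (Ioi x₀)) (nhds kp))
    (hkm : Tendsto k (nhdsWithin x₀ (Iio x₀)) (nhds km))
    (hkcont : ∃ ε > 0, ContinuousOn k (Ioo (x₀ - ε) (x₀ + ε) \ {x₀})) :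
    ∃ dp dm : ℝ,
      HasDerivWithinAt (volInt W k H a) dp (Ici x₀) x₀ ∧
      HasDerivWithinAt (volInt W k H a) dm (Iic x₀) x₀ ∧
      dp - dm = W 0 * H x₀ * (kp - km) := by
  clear hkcont
  obtain ⟨C, hC⟩ := hkbdd
  have hC0 : (0:ℝ) ≤ C := (abs_nonneg _).trans (hC 0)
  set R : ℝ := x₀ - a + 1 with hRdef
  have hR1 : x₀ - a ≤ R := by simp [hRdef]
  have hR0 : (0:ℝ) < R := by simp only [hRdef]; linarith
  obtain ⟨M', hM'⟩ := (isCompact_Icc : IsCompact (Icc (0:ℝ) R)).exists_bound_of_continuousOn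
      (hW'c.mono Icc_subset_Ici_self)
  have hM'0 : (0:ℝ) ≤ M' := (norm_nonneg _).trans (hM' 0 ⟨le_refl _, hR0.le⟩)
  obtain ⟨MH, hMH⟩ := (isCompact_Icc : IsCompact (Icc a x₀)).exists_bound_of_continuousOn
      hH.continuousOn
  have hMH0 : (0:ℝ) ≤ MH := (norm_nonneg _).trans (hMH a ⟨le_rfl, hx₀.le⟩)
  -- MVT-type bound for slopes of W
  have slopeW : ∀ u v : ℝ, 0 ≤ u → u < v → v ≤ R → |W v - W u| ≤ M' * (v - u) := by
    intro u v hu huv hv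
    obtain ⟨c, hc, hceq⟩ := exists_hasDerivAt_eq_slope W W' huv
      (hWc.mono (fun z hz => hu.trans hz.1))
      (fun z hz => hWd z (hu.trans_lt hz.1))
    have hne : v - u ≠ 0 := sub_ne_zero.2 huv.ne'
    have h1 : W v - W u = W' c * (v - u) := by
      rw [hceq]; field_simp
    rw [h1, abs_mul, abs_of_pos (sub_pos.2 huv)]
    have hcb : |W' c| ≤ M' := by
      have := hM' c ⟨hu.trans hc.1.le, hc.2.le.trans hv⟩
      simpa [Real.norm_eq_abs] using this
    exact mul_le_mul_of_nonneg_right hcb (sub_pos.2 huv).le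
  -- bound for the difference quotient
  have qbound : ∀ x y : ℝ, x ≠ x₀ → y ≤ x → y ≤ x₀ → x - y ≤ R → x₀ - y ≤ R →
      |(W (x - y) - W (x₀ - y)) / (x - x₀)| ≤ M' := by
    intro x y hne hyx hyx₀ h1 h2
    have habs : (0:ℝ) < |x - x₀| := abs_pos.2 (sub_ne_zero.2 hne)
    rcases lt_or_gt_of_ne hne with h | h
    · have hb := slopeW (x - y) (x₀ - y) (sub_nonneg.2 hyx) (by linarith) h2
      rw [abs_div, div_le_iff₀ habs, abs_sub_comm (W (x - y)),
        abs_sub_comm x x₀, abs_of_pos (by linarith : (0:ℝ) < x₀ - x)]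
      calc |W (x₀ - y) - W (x - y)| ≤ M' * ((x₀ - y) - (x - y)) := hb
        _ = M' * (x₀ - x) := by ring
    · have hb := slopeW (x₀ - y) (x - y) (sub_nonneg.2 hyx₀) (by linarith) h1
      rw [abs_div, div_le_iff₀ habs, abs_of_pos (by linarith : (0:ℝ) < x - x₀)]
      calc |W (x - y) - W (x₀ - y)| ≤ M' * ((x - y) - (x₀ - y)) := hb
        _ = M' * (x - x₀) := by ring
  -- measurability
  have aesmW : ∀ s t c : ℝ, t ≤ c →
      AEStronglyMeasurable (fun y => W (c - y)) (volume.restrict (Ioc s t)) := by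
    intro s t c htc
    refine ContinuousOn.aestronglyMeasurable ?_ measurableSet_Ioc
    refine hWc.comp (continuous_const.sub continuous_id).continuousOn ?_
    intro y hy
    exact sub_nonneg.2 (hy.2.trans htc)
  have aesmF : ∀ s t c : ℝ, t ≤ c →
      AEStronglyMeasurable (fun y => W (c - y) * k y * H y) (volume.restrict (Ioc s t)) := by
    intro s t c htc
    exact ((aesmW s t c htc).mul hkmeas.aestronglyMeasurable.restrict).mul
      hH.aestronglyMeasurable.restrict
  -- integrability
  have intgr : ∀ s t c : ℝ, s ≤ t → t ≤ c →
      IntervalIntegrable (fun y => W (c - y) * k y * H y) volume s t := by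
    intro s t c hst htc
    rw [intervalIntegrable_iff_integrableOn_Ioc_of_le hst]
    obtain ⟨Mw, hMw⟩ := (isCompact_Icc :
        IsCompact (Icc (c - t) (c - s))).exists_bound_of_continuousOn
      (hWc.mono (fun z hz => le_trans (sub_nonneg.2 htc) hz.1))
    obtain ⟨Mh, hMh⟩ := (isCompact_Icc : IsCompact (Icc s t)).exists_bound_of_continuousOn
      hH.continuousOn
    refine Integrable.mono' (integrable_const (Mw * C * Mh)) (aesmF s t c htc) ?_
    refine (ae_restrict_iff' measurableSet_Ioc).2 (ae_of_all _ fun y hy => ?_)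
    have h1 : |W (c - y)| ≤ Mw := by
      simpa [Real.norm_eq_abs] using hMw (c - y) ⟨by linarith [hy.2], by linarith [hy.1.le]⟩
    have h2 : |H y| ≤ Mh := by
      simpa [Real.norm_eq_abs] using hMh y ⟨hy.1.le, hy.2⟩
    have h3 : |k y| ≤ C := hC y
    rw [Real.norm_eq_abs, abs_mul, abs_mul]
    have n1 := abs_nonneg (W (c - y)); have n2 := abs_nonneg (k y); have n3 := abs_nonneg (H y)
    have hMw0 : 0 ≤ Mw := n1.trans h1
    have hMh0 : 0 ≤ Mh := n3.trans h2
    exact mul_le_mul (mul_le_mul h1 h3 n2 hMw0) h2 n3 (mul_nonneg hMw0 hC0)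
  -- the common limit of the "interior" part
  set J : ℝ := ∫ y in a..x₀, W' (x₀ - y) * k y * H y with hJ
  have hJeq : J = ∫ y in Ioc a x₀, W' (x₀ - y) * k y * H y := by
    rw [hJ, intervalIntegral.integral_of_le hx₀.le]
  have hae : ∀ᵐ y : ℝ, y ≠ x₀ := by
    refine ae_iff.2 ?_
    simp only [ne_eq, not_not, setOf_eq_eq_singleton]
    exact measure_singleton x₀
  -- pointwise convergence of the difference quotient
  have qtend : ∀ y : ℝ, y < x₀ →
      Tendsto (fun x => (W (x - y) - W (x₀ - y)) / (x - x₀) * k y * H y) (𝓝[≠] x₀)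
        (𝓝 (W' (x₀ - y) * k y * H y)) := by
    intro y hy
    have hd := hWd (x₀ - y) (by simp [mem_Ioi]; linarith)
    have hslope := hasDerivAt_iff_tendsto_slope.1 hd
    have hφ : Tendsto (fun x : ℝ => x - y) (𝓝[≠] x₀) (𝓝[≠] (x₀ - y)) := by
      rw [tendsto_nhdsWithin_iff]
      constructor
      · exact ((continuous_id.sub continuous_const).tendsto x₀).mono_left nhdsWithin_le_nhds
      · filter_upwards [self_mem_nhdsWithin] with x hx
        simp only [mem_compl_iff, mem_singleton_iff] at hx ⊢
        intro hcontra; exact hx (by linarith)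
    have h1 : Tendsto (fun x => (W (x - y) - W (x₀ - y)) / (x - x₀)) (𝓝[≠] x₀)
        (𝓝 (W' (x₀ - y))) := by
      refine (hslope.comp hφ).congr fun x => ?_
      have hxy : (x - y) - (x₀ - y) = x - x₀ := by ring
      simp only [Function.comp_apply, slope_def_field, hxy]
    exact (h1.mul_const (k y)).mul_const (H y)
  -- right-hand "interior" part
  have Aright : Tendsto (fun x => ∫ y in a..x₀,
      (W (x - y) - W (x₀ - y)) / (x - x₀) * k y * H y) (𝓝[>] x₀) (𝓝 J) := by
    rw [hJeq]
    have heq : (fun x => ∫ y in a..x₀, (W (x - y) - W (x₀ - y)) / (x - x₀) * k y * H y)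
        = fun x => ∫ y in Ioc a x₀, (W (x - y) - W (x₀ - y)) / (x - x₀) * k y * H y := by
      funext x; exact intervalIntegral.integral_of_le hx₀.le
    rw [heq]
    refine tendsto_integral_filter_of_dominated_convergence (fun _ => M' * (C * MH))
      ?_ ?_ ?_ ?_
    · filter_upwards [self_mem_nhdsWithin] with x hx
      have hx' : x₀ ≤ x := (mem_Ioi.1 hx).le
      simp only [div_eq_mul_inv]
      exact ((((aesmW a x₀ x hx').sub (aesmW a x₀ x₀ le_rfl)).mul aestronglyMeasurable_const).mul
        hkmeas.aestronglyMeasurable.restrict).mul hH.aestronglyMeasurable.restrict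
    · filter_upwards [Ioo_mem_nhdsGT_of_mem (⟨le_rfl, by linarith⟩ : x₀ ∈ Ico x₀ (x₀ + 1))]
        with x hx
      refine (ae_restrict_iff' measurableSet_Ioc).2 (ae_of_all _ fun y hy => ?_)
      have hq := qbound x y (ne_of_gt hx.1) (hy.2.trans hx.1.le) hy.2
        (by simp only [hRdef]; linarith [hy.1, hx.2]) (by simp only [hRdef]; linarith [hy.1])
      have hh : |H y| ≤ MH := by
        simpa [Real.norm_eq_abs] using hMH y ⟨hy.1.le, hy.2⟩
      rw [Real.norm_eq_abs, abs_mul, abs_mul, ← mul_assoc]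
      have n2 := abs_nonneg (k y); have n3 := abs_nonneg (H y)
      exact mul_le_mul (mul_le_mul hq (hC y) n2 hM'0) hh n3 (mul_nonneg hM'0 hC0)
    · exact integrableOn_const measure_Ioc_lt_top.ne
    · filter_upwards [ae_restrict_of_ae hae, ae_restrict_mem measurableSet_Ioc]
        with y hy1 hy2
      exact (qtend y (lt_of_le_of_ne hy2.2 hy1)).mono_left
        (nhdsWithin_mono x₀ (fun z hz => ne_of_gt hz))
  -- left-hand "interior" part
  have Aleft : Tendsto (fun x => ∫ y in a..x,
      (W (x - y) - W (x₀ - y)) / (x - x₀) * k y * H y) (𝓝[<] x₀) (𝓝 J) := by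
    rw [hJeq]
    have hmem : Ioo a x₀ ∈ 𝓝[<] x₀ := Ioo_mem_nhdsLT_of_mem ⟨hx₀, le_rfl⟩
    have heq : ∀ᶠ x in 𝓝[<] x₀, (∫ y in Ioc a x₀, (Ioc a x).indicator
        (fun y => (W (x - y) - W (x₀ - y)) / (x - x₀) * k y * H y) y)
        = ∫ y in a..x, (W (x - y) - W (x₀ - y)) / (x - x₀) * k y * H y := by
      filter_upwards [hmem] with x hx
      rw [setIntegral_indicator measurableSet_Ioc, intervalIntegral.integral_of_le hx.1.le,
        Ioc_inter_Ioc, max_self, min_eq_right hx.2.le]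
    refine Tendsto.congr' heq ?_
    refine tendsto_integral_filter_of_dominated_convergence (fun _ => M' * (C * MH))
      ?_ ?_ ?_ ?_
    · filter_upwards [hmem] with x hx
      rw [aestronglyMeasurable_indicator_iff measurableSet_Ioc,
        Measure.restrict_restrict measurableSet_Ioc,
        Ioc_inter_Ioc, max_self, min_eq_left hx.2.le]
      simp only [div_eq_mul_inv]
      exact ((((aesmW a x x le_rfl).sub (aesmW a x x₀ hx.2.le)).mul aestronglyMeasurable_const).mul
        hkmeas.aestronglyMeasurable.restrict).mul hH.aestronglyMeasurable.restrict
    · filter_upwards [hmem] with x hx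
      refine ae_of_all _ fun y => ?_
      by_cases hy : y ∈ Ioc a x
      · rw [indicator_of_mem hy]
        have hq := qbound x y (ne_of_lt hx.2) hy.2 (hy.2.trans hx.2.le)
          (by simp only [hRdef]; linarith [hy.1, hx.2]) (by simp only [hRdef]; linarith [hy.1])
        have hh : |H y| ≤ MH := by
          simpa [Real.norm_eq_abs] using hMH y ⟨hy.1.le, hy.2.trans hx.2.le⟩
        rw [Real.norm_eq_abs, abs_mul, abs_mul, ← mul_assoc]
        have n2 := abs_nonneg (k y); have n3 := abs_nonneg (H y)
        exact mul_le_mul (mul_le_mul hq (hC y) n2 hM'0) hh n3 (mul_nonneg hM'0 hC0)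
      · rw [indicator_of_notMem hy]
        simp only [norm_zero]
        positivity
    · exact integrableOn_const measure_Ioc_lt_top.ne
    · filter_upwards [ae_restrict_of_ae hae, ae_restrict_mem measurableSet_Ioc] with y hy1 hy2
      have hylt : y < x₀ := lt_of_le_of_ne hy2.2 hy1
      have hev : (fun x => (Ioc a x).indicator
            (fun y => (W (x - y) - W (x₀ - y)) / (x - x₀) * k y * H y) y)
            =ᶠ[𝓝[<] x₀] fun x => (W (x - y) - W (x₀ - y)) / (x - x₀) * k y * H y := by
        filter_upwards [nhdsWithin_le_nhds (Ioi_mem_nhds hylt)] with x hx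
        have hmem' : y ∈ Ioc a x := ⟨hy2.1, (mem_Ioi.1 hx).le⟩
        exact indicator_of_mem hmem' _
      refine Tendsto.congr' hev.symm ?_
      exact (qtend y hylt).mono_left (nhdsWithin_mono x₀ (fun z hz => ne_of_lt hz))
    -- right-hand "boundary" part
  have Bright : Tendsto (fun x => (∫ y in x₀..x, W (x - y) * k y * H y) / (x - x₀)) (𝓝[>] x₀)
      (𝓝 (W 0 * kp * H x₀)) := by
    rw [Metric.tendsto_nhdsWithin_nhds]
    intro ε hε
    set P : ℝ := |H x₀| + 1 with hP
    have hP0 : (0:ℝ) < P := by positivity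
    set D : ℝ := C * P + |W 0| * P + |W 0| * |kp| with hD
    have hD0 : (0:ℝ) ≤ D := by positivity
    set ε₁ : ℝ := ε / (2 * (D + 1)) with hε₁
    have hε₁0 : (0:ℝ) < ε₁ := by positivity
    have hW0 : Tendsto W (𝓝[Ici 0] 0) (𝓝 (W 0)) := hWc 0 (mem_Ici.2 le_rfl)
    rw [Metric.tendsto_nhdsWithin_nhds] at hW0
    obtain ⟨δ₁, hδ₁0, hδ₁⟩ := hW0 ε₁ hε₁0
    rw [Metric.tendsto_nhdsWithin_nhds] at hkp
    obtain ⟨δ₂, hδ₂0, hδ₂⟩ := hkp ε₁ hε₁0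
    have hHx := hH.continuousAt (x := x₀)
    rw [Metric.continuousAt_iff] at hHx
    obtain ⟨δ₃, hδ₃0, hδ₃⟩ := hHx (min ε₁ 1) (lt_min_iff.2 ⟨hε₁0, one_pos⟩ : (0:ℝ) < min ε₁ 1)
    refine ⟨min δ₁ (min δ₂ δ₃), by positivity, ?_⟩
    intro x hxmem hxd
    have hxgt : x₀ < x := hxmem
    rw [Real.dist_eq] at hxd
    have hxd1 : x - x₀ < δ₁ :=
      lt_of_le_of_lt (le_abs_self _) (hxd.trans_le (min_le_left _ _))
    have hxd2 : x - x₀ < δ₂ :=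
      lt_of_le_of_lt (le_abs_self _) (hxd.trans_le ((min_le_right _ _).trans (min_le_left _ _)))
    have hxd3 : x - x₀ < δ₃ :=
      lt_of_le_of_lt (le_abs_self _) (hxd.trans_le ((min_le_right _ _).trans (min_le_right _ _)))
    have key : ∀ y ∈ Set.uIoc x₀ x, ‖W (x - y) * k y * H y - W 0 * kp * H x₀‖ ≤ ε₁ * D := by
      intro y hy
      rw [uIoc_of_le hxgt.le] at hy
      obtain ⟨hy1, hy2⟩ := hy
      have e1 : |W (x - y) - W 0| ≤ ε₁ := by
        have := hδ₁ (mem_Ici.2 (by linarith : (0:ℝ) ≤ x - y))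
          (by rw [Real.dist_eq, sub_zero, abs_of_nonneg (by linarith : (0:ℝ) ≤ x - y)]; linarith)
        rw [Real.dist_eq] at this; exact this.le
      have e2 : |k y - kp| ≤ ε₁ := by
        have := hδ₂ (mem_Ioi.2 hy1)
          (by rw [Real.dist_eq, abs_of_pos (by linarith : (0:ℝ) < y - x₀)]; linarith)
        rw [Real.dist_eq] at this; exact this.le
      have e3' := hδ₃ (x := y)
        (by rw [Real.dist_eq, abs_of_pos (by linarith : (0:ℝ) < y - x₀)]; linarith)
      rw [Real.dist_eq] at e3'
      have e3 : |H y - H x₀| ≤ ε₁ := (e3'.trans_le (min_le_left _ _)).le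
      have e4 : |H y| ≤ P := by
        have h1 : |H y - H x₀| ≤ 1 := (e3'.trans_le (min_le_right _ _)).le
        have h2 : |H y| ≤ |H y - H x₀| + |H x₀| := by
          calc |H y| = |H y - H x₀ + H x₀| := by ring_nf
            _ ≤ |H y - H x₀| + |H x₀| := abs_add_le _ _
        rw [hP]; linarith
      have E : W (x - y) * k y * H y - W 0 * kp * H x₀ =
          (W (x - y) - W 0) * (k y * H y) + W 0 * ((k y - kp) * H y)
            + W 0 * kp * (H y - H x₀) := by ring
      rw [Real.norm_eq_abs, E]
      have t1 : |(W (x - y) - W 0) * (k y * H y)| ≤ ε₁ * (C * P) := by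
        rw [abs_mul]
        have hkH : |k y * H y| ≤ C * P := by
          rw [abs_mul]; exact mul_le_mul (hC y) e4 (abs_nonneg _) hC0
        exact mul_le_mul e1 hkH (abs_nonneg _) hε₁0.le
      have t2 : |W 0 * ((k y - kp) * H y)| ≤ |W 0| * (ε₁ * P) := by
        rw [abs_mul]
        exact mul_le_mul_of_nonneg_left
          (by rw [abs_mul]; exact mul_le_mul e2 e4 (abs_nonneg _) hε₁0.le) (abs_nonneg _)
      have t3 : |W 0 * kp * (H y - H x₀)| ≤ |W 0| * |kp| * ε₁ := by
        rw [abs_mul, abs_mul]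
        exact mul_le_mul_of_nonneg_left e3 (mul_nonneg (abs_nonneg _) (abs_nonneg _))
      have habs2 := abs_add_le ((W (x - y) - W 0) * (k y * H y)) (W 0 * ((k y - kp) * H y))
      have habs1 := abs_add_le ((W (x - y) - W 0) * (k y * H y) + W 0 * ((k y - kp) * H y))
        (W 0 * kp * (H y - H x₀))
      have : |(W (x - y) - W 0) * (k y * H y) + W 0 * ((k y - kp) * H y)
          + W 0 * kp * (H y - H x₀)| ≤ ε₁ * (C * P) + |W 0| * (ε₁ * P) + |W 0| * |kp| * ε₁ := by
        linarith
      calc |(W (x - y) - W 0) * (k y * H y) + W 0 * ((k y - kp) * H y)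
            + W 0 * kp * (H y - H x₀)|
          ≤ ε₁ * (C * P) + |W 0| * (ε₁ * P) + |W 0| * |kp| * ε₁ := this
        _ = ε₁ * D := by rw [hD]; ring
    have hne : x - x₀ ≠ 0 := sub_ne_zero.2 (ne_of_gt hxgt)
    have hsub : (∫ y in x₀..x, W (x - y) * k y * H y) / (x - x₀) - W 0 * kp * H x₀
        = (∫ y in x₀..x, (W (x - y) * k y * H y - W 0 * kp * H x₀)) / (x - x₀) := by
      rw [intervalIntegral.integral_sub (intgr x₀ x x hxgt.le le_rfl) intervalIntegrable_const,
        intervalIntegral.integral_const, smul_eq_mul]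
      field_simp
    rw [Real.dist_eq, hsub, abs_div]
    have hb := intervalIntegral.norm_integral_le_of_norm_le_const key
    rw [Real.norm_eq_abs] at hb
    have habs : (0:ℝ) < |x - x₀| := abs_pos.2 hne
    have hfin : ε₁ * D < ε := by
      have h1 : ε₁ * D ≤ ε₁ * (D + 1) := by nlinarith
      have h2 : ε₁ * (D + 1) = ε / 2 := by rw [hε₁]; field_simp
      have h3 : ε / 2 < ε := by linarith
      exact lt_of_le_of_lt (h1.trans h2.le) h3
    calc |∫ y in x₀..x, (W (x - y) * k y * H y - W 0 * kp * H x₀)| / |x - x₀|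
        ≤ (ε₁ * D * |x - x₀|) / |x - x₀| := by
          exact (div_le_div_iff_of_pos_right habs).2 hb
      _ = ε₁ * D := by field_simp
      _ < ε := hfin
  -- left-hand "boundary" part
  have Bleft : Tendsto (fun x => (∫ y in x₀..x, W (x₀ - y) * k y * H y) / (x - x₀)) (𝓝[<] x₀)
      (𝓝 (W 0 * km * H x₀)) := by
    rw [Metric.tendsto_nhdsWithin_nhds]
    intro ε hε
    set P : ℝ := |H x₀| + 1 with hP
    have hP0 : (0:ℝ) < P := by positivity
    set D : ℝ := C * P + |W 0| * P + |W 0| * |km| with hD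
    have hD0 : (0:ℝ) ≤ D := by positivity
    set ε₁ : ℝ := ε / (2 * (D + 1)) with hε₁
    have hε₁0 : (0:ℝ) < ε₁ := by positivity
    have hW0 : Tendsto W (𝓝[Ici 0] 0) (𝓝 (W 0)) := hWc 0 (mem_Ici.2 le_rfl)
    rw [Metric.tendsto_nhdsWithin_nhds] at hW0
    obtain ⟨δ₁, hδ₁0, hδ₁⟩ := hW0 ε₁ hε₁0
    rw [Metric.tendsto_nhdsWithin_nhds] at hkm
    obtain ⟨δ₂, hδ₂0, hδ₂⟩ := hkm ε₁ hε₁0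
    have hHx := hH.continuousAt (x := x₀)
    rw [Metric.continuousAt_iff] at hHx
    obtain ⟨δ₃, hδ₃0, hδ₃⟩ := hHx (min ε₁ 1) (lt_min_iff.2 ⟨hε₁0, one_pos⟩ : (0:ℝ) < min ε₁ 1)
    refine ⟨min δ₁ (min δ₂ δ₃), by positivity, ?_⟩
    intro x hxmem hxd
    have hxlt : x < x₀ := hxmem
    rw [Real.dist_eq] at hxd
    have hxabs : |x - x₀| = x₀ - x := by
      rw [abs_sub_comm, abs_of_pos (by linarith : (0:ℝ) < x₀ - x)]
    rw [hxabs] at hxd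
    have hxd1 : x₀ - x < δ₁ := hxd.trans_le (min_le_left _ _)
    have hxd2 : x₀ - x < δ₂ := hxd.trans_le ((min_le_right _ _).trans (min_le_left _ _))
    have hxd3 : x₀ - x < δ₃ := hxd.trans_le ((min_le_right _ _).trans (min_le_right _ _))
    have key : ∀ᵐ y : ℝ, y ∈ Set.uIoc x₀ x → ‖W (x₀ - y) * k y * H y - W 0 * km * H x₀‖ ≤ ε₁ * D := by
      filter_upwards [hae] with y hyne hy
      rw [uIoc_comm, uIoc_of_le hxlt.le] at hy
      obtain ⟨hy1, hy2⟩ := hy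
      have hy2' : y < x₀ := lt_of_le_of_ne hy2 hyne
      have e1 : |W (x₀ - y) - W 0| ≤ ε₁ := by
        have := hδ₁ (mem_Ici.2 (by linarith : (0:ℝ) ≤ x₀ - y))
          (by rw [Real.dist_eq, sub_zero, abs_of_nonneg (by linarith : (0:ℝ) ≤ x₀ - y)]; linarith)
        rw [Real.dist_eq] at this; exact this.le
      have e2 : |k y - km| ≤ ε₁ := by
        have := hδ₂ (mem_Iio.2 hy2')
          (by rw [Real.dist_eq, abs_sub_comm, abs_of_pos (by linarith : (0:ℝ) < x₀ - y)]; linarith)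
        rw [Real.dist_eq] at this; exact this.le
      have e3' := hδ₃ (x := y)
        (by rw [Real.dist_eq, abs_sub_comm, abs_of_pos (by linarith : (0:ℝ) < x₀ - y)]; linarith)
      rw [Real.dist_eq] at e3'
      have e3 : |H y - H x₀| ≤ ε₁ := (e3'.trans_le (min_le_left _ _)).le
      have e4 : |H y| ≤ P := by
        have h1 : |H y - H x₀| ≤ 1 := (e3'.trans_le (min_le_right _ _)).le
        have h2 : |H y| ≤ |H y - H x₀| + |H x₀| := by
          calc |H y| = |H y - H x₀ + H x₀| := by ring_nf
            _ ≤ |H y - H x₀| + |H x₀| := abs_add_le _ _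
        rw [hP]; linarith
      have E : W (x₀ - y) * k y * H y - W 0 * km * H x₀ =
          (W (x₀ - y) - W 0) * (k y * H y) + W 0 * ((k y - km) * H y)
            + W 0 * km * (H y - H x₀) := by ring
      rw [Real.norm_eq_abs, E]
      have t1 : |(W (x₀ - y) - W 0) * (k y * H y)| ≤ ε₁ * (C * P) := by
        rw [abs_mul]
        have hkH : |k y * H y| ≤ C * P := by
          rw [abs_mul]; exact mul_le_mul (hC y) e4 (abs_nonneg _) hC0
        exact mul_le_mul e1 hkH (abs_nonneg _) hε₁0.le
      have t2 : |W 0 * ((k y - km) * H y)| ≤ |W 0| * (ε₁ * P) := by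
        rw [abs_mul]
        exact mul_le_mul_of_nonneg_left
          (by rw [abs_mul]; exact mul_le_mul e2 e4 (abs_nonneg _) hε₁0.le) (abs_nonneg _)
      have t3 : |W 0 * km * (H y - H x₀)| ≤ |W 0| * |km| * ε₁ := by
        rw [abs_mul, abs_mul]
        exact mul_le_mul_of_nonneg_left e3 (mul_nonneg (abs_nonneg _) (abs_nonneg _))
      have habs2 := abs_add_le ((W (x₀ - y) - W 0) * (k y * H y)) (W 0 * ((k y - km) * H y))
      have habs1 := abs_add_le ((W (x₀ - y) - W 0) * (k y * H y) + W 0 * ((k y - km) * H y))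
        (W 0 * km * (H y - H x₀))
      have hmain : |(W (x₀ - y) - W 0) * (k y * H y) + W 0 * ((k y - km) * H y)
          + W 0 * km * (H y - H x₀)| ≤ ε₁ * (C * P) + |W 0| * (ε₁ * P) + |W 0| * |km| * ε₁ := by
        linarith
      calc |(W (x₀ - y) - W 0) * (k y * H y) + W 0 * ((k y - km) * H y)
            + W 0 * km * (H y - H x₀)|
          ≤ ε₁ * (C * P) + |W 0| * (ε₁ * P) + |W 0| * |km| * ε₁ := hmain
        _ = ε₁ * D := by rw [hD]; ring
    have hne : x - x₀ ≠ 0 := sub_ne_zero.2 (ne_of_lt hxlt)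
    have hsub : (∫ y in x₀..x, W (x₀ - y) * k y * H y) / (x - x₀) - W 0 * km * H x₀
        = (∫ y in x₀..x, (W (x₀ - y) * k y * H y - W 0 * km * H x₀)) / (x - x₀) := by
      rw [intervalIntegral.integral_sub (intgr x x₀ x₀ hxlt.le le_rfl).symm
        intervalIntegrable_const, intervalIntegral.integral_const, smul_eq_mul]
      field_simp
    rw [Real.dist_eq, hsub, abs_div]
    have hb := intervalIntegral.norm_integral_le_of_norm_le_const_ae key
    rw [Real.norm_eq_abs] at hb
    have habs : (0:ℝ) < |x - x₀| := abs_pos.2 hne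
    have hfin : ε₁ * D < ε := by
      have h1 : ε₁ * D ≤ ε₁ * (D + 1) := by nlinarith
      have h2 : ε₁ * (D + 1) = ε / 2 := by rw [hε₁]; field_simp
      have h3 : ε / 2 < ε := by linarith
      exact lt_of_le_of_lt (h1.trans h2.le) h3
    calc |∫ y in x₀..x, (W (x₀ - y) * k y * H y - W 0 * km * H x₀)| / |x - x₀|
        ≤ (ε₁ * D * |x - x₀|) / |x - x₀| := (div_le_div_iff_of_pos_right habs).2 hb
      _ = ε₁ * D := by field_simp
      _ < ε := hfin
  -- assemble
  refine ⟨J + W 0 * kp * H x₀, J + W 0 * km * H x₀, ?_, ?_, by ring⟩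
  · rw [hasDerivWithinAt_iff_tendsto_slope, Ici_sdiff_left]
    have heq : (fun x => (∫ y in a..x₀, (W (x - y) - W (x₀ - y)) / (x - x₀) * k y * H y)
          + (∫ y in x₀..x, W (x - y) * k y * H y) / (x - x₀))
        =ᶠ[𝓝[>] x₀] slope (volInt W k H a) x₀ := by
      filter_upwards [self_mem_nhdsWithin] with x hx
      have hlt : x₀ < x := hx
      have hne : x - x₀ ≠ 0 := sub_ne_zero.2 (ne_of_gt hlt)
      have i1 := intgr a x₀ x hx₀.le hlt.le
      have i2 := intgr x₀ x x hlt.le le_rfl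
      have i3 := intgr a x₀ x₀ hx₀.le le_rfl
      have h4 : (∫ y in a..x₀, (W (x - y) - W (x₀ - y)) / (x - x₀) * k y * H y)
          = ((∫ y in a..x₀, W (x - y) * k y * H y)
            - ∫ y in a..x₀, W (x₀ - y) * k y * H y) / (x - x₀) := by
        rw [← intervalIntegral.integral_sub i1 i3, ← intervalIntegral.integral_div]
        congr 1; funext y; ring
      have hsplit : (∫ y in a..x, W (x - y) * k y * H y)
          = (∫ y in a..x₀, W (x - y) * k y * H y) + ∫ y in x₀..x, W (x - y) * k y * H y :=
        (intervalIntegral.integral_add_adjacent_intervals i1 i2).symm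
      rw [slope_def_field]
      simp only [volInt]
      rw [hsplit, h4]
      ring
    exact (Aright.add Bright).congr' heq
  · rw [hasDerivWithinAt_iff_tendsto_slope, Iic_diff_right]
    have heq : (fun x => (∫ y in a..x, (W (x - y) - W (x₀ - y)) / (x - x₀) * k y * H y)
          + (∫ y in x₀..x, W (x₀ - y) * k y * H y) / (x - x₀))
        =ᶠ[𝓝[<] x₀] slope (volInt W k H a) x₀ := by
      filter_upwards [Ioo_mem_nhdsLT_of_mem (⟨hx₀, le_rfl⟩ : x₀ ∈ Ioc a x₀)] with x hx
      have hne : x - x₀ ≠ 0 := sub_ne_zero.2 (ne_of_lt hx.2)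
      have i1 := intgr a x x hx.1.le le_rfl
      have i3a := intgr a x x₀ hx.1.le hx.2.le
      have i3b := intgr x x₀ x₀ hx.2.le le_rfl
      have h4 : (∫ y in a..x, (W (x - y) - W (x₀ - y)) / (x - x₀) * k y * H y)
          = ((∫ y in a..x, W (x - y) * k y * H y)
            - ∫ y in a..x, W (x₀ - y) * k y * H y) / (x - x₀) := by
        rw [← intervalIntegral.integral_sub i1 i3a, ← intervalIntegral.integral_div]
        congr 1; funext y; ring
      have hsplit : (∫ y in a..x₀, W (x₀ - y) * k y * H y)
          = (∫ y in a..x, W (x₀ - y) * k y * H y) + ∫ y in x..x₀, W (x₀ - y) * k y * H y :=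
        (intervalIntegral.integral_add_adjacent_intervals i3a i3b).symm
      have hsymm : (∫ y in x₀..x, W (x₀ - y) * k y * H y)
          = - ∫ y in x..x₀, W (x₀ - y) * k y * H y := intervalIntegral.integral_symm x x₀
      rw [slope_def_field]
      simp only [volInt]
      rw [hsplit, h4, hsymm]
      ring
    exact (Aleft.add Bleft).congr' heq
end

section
/- Let a ∈ ℝ and let W : [0,∞) → ℝ be such that W(0) = 0, W is continuously differentiable on [0,∞), twice continuously differentiable on (0,∞), and W″ extends to a continuous function on [0,∞). Let k : ℝ → ℝ be bounded and measurable, let H : ℝ → ℝ be continuous, and define I(x) = ∫_a^x W(x−y) k(y) H(y) dy. Then at every point x₀ > a at which k is continuous, I is twice differentiable and I″(x₀) = W′(0) · k(x₀) · H(x₀) + ∫_a^{x₀} W″(x₀−y) k(y) H(y) dy. -/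
open MeasureTheory Set Filter
open Topology

/-- local boundedness predicate -/
def LocBdd (g : ℝ → ℝ) : Prop := ∀ s : Set ℝ, IsCompact s → ∃ C : ℝ, 0 ≤ C ∧ ∀ y ∈ s, |g y| ≤ C

lemma locBdd_of (g : ℝ → ℝ) (hc : Continuous g) : LocBdd g := by
  intro s hs
  obtain ⟨C, hC⟩ := hs.exists_bound_of_continuousOn hc.continuousOn
  exact ⟨max C 0, le_max_right _ _, fun y hy => le_trans (hC y hy) (le_max_left _ _)⟩

lemma locBdd_mul {k H : ℝ → ℝ} (hk : ∃ C, ∀ y, |k y| ≤ C) (hH : Continuous H) :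
    LocBdd (fun y => k y * H y) := by
  intro s hs
  obtain ⟨C, hC⟩ := hk
  obtain ⟨D, hD0, hD⟩ := locBdd_of H hH s hs
  have hC0 : 0 ≤ C := le_trans (abs_nonneg _) (hC 0)
  refine ⟨C * D, mul_nonneg hC0 hD0, fun y hy => ?_⟩
  rw [abs_mul]
  exact mul_le_mul (hC y) (hD y hy) (abs_nonneg _) hC0

lemma intInt {F g : ℝ → ℝ} (hF : Continuous F) (hg : Measurable g) (hloc : LocBdd g)
    (a b : ℝ) : IntervalIntegrable (fun y => F y * g y) volume a b := by
  rw [intervalIntegrable_iff]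
  obtain ⟨CF, _, hCF⟩ := locBdd_of F hF (uIcc a b) isCompact_uIcc
  obtain ⟨Cg, hCg0, hCg⟩ := hloc (uIcc a b) isCompact_uIcc
  haveI : IsFiniteMeasure (volume.restrict (uIoc a b)) :=
    ⟨by simpa [Measure.restrict_apply_univ, Set.uIoc] using measure_Ioc_lt_top⟩
  refine (integrable_const (CF * Cg)).mono'
    ((hF.measurable.mul hg).aestronglyMeasurable) ?_
  rw [ae_restrict_iff' measurableSet_uIoc]
  filter_upwards with y hy
  have hy' : y ∈ uIcc a b := uIoc_subset_uIcc hy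
  have : ‖F y * g y‖ = |F y| * |g y| := abs_mul _ _
  rw [this]
  exact mul_le_mul (hCF y hy') (hCg y hy') (abs_nonneg _)
    (le_trans (abs_nonneg _) (hCF y hy'))

lemma contM {ψ g : ℝ → ℝ} (hψ : Continuous ψ) (hg : Measurable g) (hloc : LocBdd g) (a : ℝ) :
    ContinuousOn (fun x => ∫ y in a..x, ψ (x - y) * g y) (Ici a) := by
  intro x₀ hx₀
  set F : ℝ → ℝ → ℝ := fun x y => Set.indicator (Ioc a x) (fun y => ψ (x - y) * g y) y with hF
  have hFx : ∀ x ∈ Ici a, (∫ y, F x y) = ∫ y in a..x, ψ (x - y) * g y := by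
    intro x hx
    rw [integral_indicator measurableSet_Ioc, intervalIntegral.integral_of_le hx]
  obtain ⟨Cψ, hCψ0, hCψ⟩ := locBdd_of ψ hψ (Icc 0 (x₀ + 1 - a)) isCompact_Icc
  obtain ⟨Cg, hCg0, hCg⟩ := hloc (Icc a (x₀ + 1)) isCompact_Icc
  have hA : ∀ᶠ x in nhdsWithin x₀ (Ici a), x ≤ x₀ + 1 :=
    Eventually.filter_mono nhdsWithin_le_nhds
      (eventually_of_mem (Iic_mem_nhds (by linarith)) fun z hz => hz)
  have key : Tendsto (fun x => ∫ y, F x y) (nhdsWithin x₀ (Ici a)) (𝓝 (∫ y, F x₀ y)) := by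
    apply tendsto_integral_filter_of_dominated_convergence
      (bound := Set.indicator (Icc a (x₀ + 1)) (fun _ => Cψ * Cg))
    · filter_upwards with x
      exact (((hψ.comp (continuous_const.sub continuous_id)).measurable.mul hg).indicator
        measurableSet_Ioc).aestronglyMeasurable
    · filter_upwards [hA] with x hx1
      refine ae_of_all _ (fun y => ?_)
      by_cases hy : y ∈ Ioc a x
      · rw [hF]
        simp only [indicator_of_mem hy]
        have h1 : |ψ (x - y)| ≤ Cψ :=
          hCψ _ ⟨by linarith [hy.2], by linarith [hy.1, hy.2]⟩
        have h2 : |g y| ≤ Cg := hCg _ ⟨le_of_lt hy.1, le_trans hy.2 hx1⟩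
        have hmem : y ∈ Icc a (x₀ + 1) := ⟨le_of_lt hy.1, le_trans hy.2 hx1⟩
        rw [indicator_of_mem hmem]
        calc ‖ψ (x - y) * g y‖ = |ψ (x - y)| * |g y| := abs_mul _ _
          _ ≤ Cψ * Cg := mul_le_mul h1 h2 (abs_nonneg _) hCψ0
      · rw [hF]
        simp only [indicator_of_notMem hy]
        simpa using Set.indicator_nonneg (fun _ _ => mul_nonneg hCψ0 hCg0) y
    · rw [integrable_indicator_iff measurableSet_Icc]
      exact integrableOn_const measure_Icc_lt_top.ne
    · have hae : ∀ᵐ y : ℝ, y ≠ x₀ := by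
        rw [ae_iff]
        simp only [not_not]
        rw [show {y : ℝ | y = x₀} = {x₀} by ext; simp]
        exact measure_singleton x₀
      filter_upwards [hae] with y hy
      by_cases hy1 : y ∈ Ioc a x₀
      · have hylt : y < x₀ := lt_of_le_of_ne hy1.2 hy
        have hev : ∀ᶠ x in nhdsWithin x₀ (Ici a), ψ (x - y) * g y = F x y := by
          filter_upwards [Eventually.filter_mono nhdsWithin_le_nhds
            (eventually_of_mem (Ioi_mem_nhds hylt) fun z hz => hz)] with x hx
          exact (Set.indicator_of_mem (show y ∈ Ioc a x from ⟨hy1.1, le_of_lt hx⟩) (fun y => ψ (x - y) * g y)).symm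
        have hval : F x₀ y = ψ (x₀ - y) * g y := indicator_of_mem hy1 (fun y => ψ (x₀ - y) * g y)
        rw [hval]
        have base : Tendsto (fun x => ψ (x - y) * g y) (nhdsWithin x₀ (Ici a))
            (𝓝 (ψ (x₀ - y) * g y)) :=
          (((hψ.comp (continuous_id.sub continuous_const)).tendsto x₀).mono_left
            nhdsWithin_le_nhds).mul tendsto_const_nhds
        exact base.congr' hev
      · have hzero : F x₀ y = 0 := indicator_of_notMem hy1 (fun y => ψ (x₀ - y) * g y)
        rw [hzero]
        by_cases hya : a < y
        · have hygt : x₀ < y := lt_of_not_ge (fun h => hy1 ⟨hya, h⟩)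
          have hev : ∀ᶠ x in nhdsWithin x₀ (Ici a), (0:ℝ) = F x y := by
            filter_upwards [Eventually.filter_mono nhdsWithin_le_nhds
              (eventually_of_mem (Iio_mem_nhds hygt) fun z hz => hz)] with x hx
            exact (Set.indicator_of_notMem (fun (hc : y ∈ Ioc a x) => absurd hc.2 (not_le.2 hx)) (fun y => ψ (x - y) * g y)).symm
          exact tendsto_const_nhds.congr' hev
        · have hev : ∀ x, F x y = 0 := fun x => indicator_of_notMem (fun (hc : y ∈ Ioc a x) => hya hc.1) (fun y => ψ (x - y) * g y)
          simpa [hev] using (tendsto_const_nhds :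
            Tendsto (fun _ : ℝ => (0:ℝ)) (nhdsWithin x₀ (Ici a)) (𝓝 0))
  have key2 := key.congr'
    (by filter_upwards [self_mem_nhdsWithin] with x hx using hFx x hx)
  rw [hFx x₀ hx₀] at key2
  exact key2

lemma fubini {ψ g : ℝ → ℝ} (hψ : Continuous ψ) (hg : Measurable g) (hloc : LocBdd g)
    {a x : ℝ} (hax : a ≤ x) :
    ∫ s in a..x, (∫ y in a..s, ψ (s - y) * g y) =
      ∫ y in a..x, (∫ t in (0:ℝ)..(x - y), ψ t) * g y := by
  set S : Set (ℝ × ℝ) := {p | p.2 ∈ Ioc a p.1 ∧ p.1 ∈ Ioc a x} with hS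
  have hSm : MeasurableSet S := by
    have hSeq : S = ({p : ℝ × ℝ | a < p.2} ∩ {p | p.2 ≤ p.1}) ∩
        ({p | a < p.1} ∩ {p | p.1 ≤ x}) := by
      ext p
      simp only [hS, mem_setOf_eq, mem_Ioc, mem_inter_iff]
    rw [hSeq]
    exact ((measurableSet_lt measurable_const measurable_snd).inter
      (measurableSet_le measurable_snd measurable_fst)).inter
      ((measurableSet_lt measurable_const measurable_fst).inter
      (measurableSet_le measurable_fst measurable_const))
  set F : ℝ × ℝ → ℝ := S.indicator (fun p => ψ (p.1 - p.2) * g p.2) with hFdef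
  have hFmeas : Measurable F :=
    ((hψ.comp (continuous_fst.sub continuous_snd)).measurable.mul
      (hg.comp measurable_snd)).indicator hSm
  obtain ⟨Cψ, hCψ0, hCψ⟩ := locBdd_of ψ hψ (Icc (a - x) (x - a)) isCompact_Icc
  obtain ⟨Cg, hCg0, hCg⟩ := hloc (Icc a x) isCompact_Icc
  have hFint : Integrable F ((volume : Measure ℝ).prod volume) := by
    have hbint : Integrable ((Icc a x ×ˢ Icc a x).indicator (fun _ => Cψ * Cg))
        ((volume : Measure ℝ).prod volume) := by
      rw [integrable_indicator_iff (measurableSet_Icc.prod measurableSet_Icc)]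
      refine integrableOn_const (hs := ?_)
      rw [Measure.prod_prod]
      exact (ENNReal.mul_lt_top measure_Icc_lt_top measure_Icc_lt_top).ne
    refine hbint.mono' hFmeas.aestronglyMeasurable (ae_of_all _ fun p => ?_)
    by_cases hp : p ∈ S
    · rw [hFdef, indicator_of_mem hp]
      have hp1 : p.1 ∈ Icc a x := ⟨le_of_lt hp.2.1, hp.2.2⟩
      have hp2 : p.2 ∈ Icc a x := ⟨le_of_lt hp.1.1, le_trans hp.1.2 hp.2.2⟩
      have hmem : p ∈ Icc a x ×ˢ Icc a x := ⟨hp1, hp2⟩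
      rw [indicator_of_mem hmem]
      have h1 : |ψ (p.1 - p.2)| ≤ Cψ := hCψ _
        ⟨by linarith [hp1.1, hp2.2], by linarith [hp1.2, hp2.1]⟩
      have h2 : |g p.2| ≤ Cg := hCg _ hp2
      calc ‖ψ (p.1 - p.2) * g p.2‖ = |ψ (p.1 - p.2)| * |g p.2| := abs_mul _ _
        _ ≤ Cψ * Cg := mul_le_mul h1 h2 (abs_nonneg _) hCψ0
    · rw [hFdef, indicator_of_notMem hp]
      simpa using Set.indicator_nonneg
        (fun (_ : ℝ × ℝ) _ => mul_nonneg hCψ0 hCg0) p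
  have lhs1 : (∫ s in a..x, (∫ y in a..s, ψ (s - y) * g y)) = ∫ s, ∫ y, F (s, y) := by
    rw [intervalIntegral.integral_of_le hax, ← integral_indicator measurableSet_Ioc]
    congr 1
    funext s
    by_cases hs : s ∈ Ioc a x
    · rw [indicator_of_mem hs, intervalIntegral.integral_of_le (le_of_lt hs.1),
        ← integral_indicator measurableSet_Ioc]
      congr 1
      funext y
      simp only [hFdef, hS, Set.indicator_apply, mem_setOf_eq]
      by_cases hy : y ∈ Ioc a s
      · rw [if_pos hy, if_pos ⟨hy, hs⟩]
      · rw [if_neg hy, if_neg (fun hc => hy hc.1)]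
    · rw [indicator_of_notMem hs]
      have hfs : ∀ y, F (s, y) = 0 := fun y =>
        indicator_of_notMem (fun (hc : (s, y) ∈ S) => hs hc.2) _
      simp [hfs]
  have swap : (∫ s, ∫ y, F (s, y)) = ∫ y, ∫ s, F (s, y) :=
    MeasureTheory.integral_integral_swap (f := fun s y => F (s, y)) hFint
  have rhs1 : (∫ y, ∫ s, F (s, y)) = ∫ y in a..x, (∫ t in (0:ℝ)..(x - y), ψ t) * g y := by
    rw [intervalIntegral.integral_of_le hax, ← integral_indicator measurableSet_Ioc]
    congr 1
    funext y
    by_cases hy : y ∈ Ioc a x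
    · rw [indicator_of_mem hy]
      have hfs : ∀ s, F (s, y) = (Icc y x).indicator (fun s => ψ (s - y) * g y) s := by
        intro s
        simp only [hFdef, hS, Set.indicator_apply, mem_setOf_eq, mem_Ioc, mem_Icc]
        by_cases h1 : y ≤ s ∧ s ≤ x
        · rw [if_pos ⟨⟨hy.1, h1.1⟩, ⟨lt_of_lt_of_le hy.1 h1.1, h1.2⟩⟩, if_pos h1]
        · rw [if_neg (fun hc => h1 ⟨hc.1.2, hc.2.2⟩), if_neg h1]
      calc (∫ s, F (s, y)) = ∫ s, (Icc y x).indicator (fun s => ψ (s - y) * g y) s := by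
            simp only [hfs]
        _ = ∫ s in Icc y x, ψ (s - y) * g y := integral_indicator measurableSet_Icc
        _ = ∫ s in Ioc y x, ψ (s - y) * g y := by rw [integral_Icc_eq_integral_Ioc]
        _ = ∫ s in y..x, ψ (s - y) * g y :=
            (intervalIntegral.integral_of_le hy.2).symm
        _ = (∫ s in y..x, ψ (s - y)) * g y := intervalIntegral.integral_mul_const _ _
        _ = (∫ t in (0:ℝ)..(x - y), ψ t) * g y := by
            rw [intervalIntegral.integral_comp_sub_right (fun t => ψ t) y, sub_self]
    · rw [indicator_of_notMem hy]
      have hfs : ∀ s, F (s, y) = 0 := by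
        intro s
        refine indicator_of_notMem (fun (hc : (s, y) ∈ S) => ?_) _
        exact hy ⟨hc.1.1, le_trans hc.1.2 hc.2.2⟩
      simp [hfs]
  rw [lhs1, swap, rhs1]

lemma lemA {ψ g : ℝ → ℝ} (hψ : Continuous ψ) (hg : Measurable g) (hloc : LocBdd g)
    {a x : ℝ} (hax : a < x) :
    HasDerivAt (fun u => ∫ y in a..u, (∫ t in (0:ℝ)..(u - y), ψ t) * g y)
      (∫ y in a..x, ψ (x - y) * g y) x := by
  set M : ℝ → ℝ := fun s => ∫ y in a..s, ψ (s - y) * g y with hM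
  have hMc : ContinuousOn M (Ici a) := contM hψ hg hloc a
  have hMint : IntervalIntegrable M volume a x := by
    apply ContinuousOn.intervalIntegrable
    rw [uIcc_of_le (le_of_lt hax)]
    exact hMc.mono Icc_subset_Ici_self
  have hmeasAt : StronglyMeasurableAtFilter M (𝓝 x) :=
    ⟨Ioi a, Ioi_mem_nhds hax,
      (hMc.mono Ioi_subset_Ici_self).aestronglyMeasurable measurableSet_Ioi⟩
  have hMca : ContinuousAt M x :=
    hMc.continuousAt (mem_of_superset (Ioi_mem_nhds hax) Ioi_subset_Ici_self)
  have hP : HasDerivAt (fun u => ∫ s in a..u, M s) (M x) x :=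
    intervalIntegral.integral_hasDerivAt_right hMint hmeasAt hMca
  refine hP.congr_of_eventuallyEq ?_
  filter_upwards [Ioi_mem_nhds hax] with u hu
  exact (fubini hψ hg hloc (le_of_lt hu)).symm

/-- second-derivative Leibniz rule: with `W(0) = 0`, `W` continuously
differentiable on `[0,∞)`, twice continuously differentiable on `(0,∞)` with second
derivative extending continuously to `[0,∞)`, `k` bounded measurable and `H`
continuous, at every `x₀ > a` where `k` is continuous, `I` is twice differentiable and
`I''(x₀) = W'(0) k(x₀) H(x₀) + ∫_a^{x₀} W''(x₀-y) k(y) H(y) dy`. -/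
theorem stmt15 (a : ℝ) (W W' W'' : ℝ → ℝ)
    (hW0 : W 0 = 0)
    (hWd : ∀ x ∈ Ici (0:ℝ), HasDerivWithinAt W (W' x) (Ici 0) x)
    (hW'c : ContinuousOn W' (Ici 0))
    (hW'd : ∀ x ∈ Ioi (0:ℝ), HasDerivAt W' (W'' x) x)
    (hW''c : ContinuousOn W'' (Ici 0))
    (k : ℝ → ℝ) (hkmeas : Measurable k) (hkbdd : ∃ C, ∀ y, |k y| ≤ C)
    (H : ℝ → ℝ) (hH : Continuous H)
    (x₀ : ℝ) (hx₀ : a < x₀) (hkcont : ContinuousAt k x₀) :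
    ∃ I' : ℝ → ℝ,
      (∀ᶠ x in nhds x₀, HasDerivAt (volInt W k H a) (I' x) x) ∧
      HasDerivAt I'
        (W' 0 * k x₀ * H x₀ + ∫ y in a..x₀, W'' (x₀ - y) * k y * H y) x₀ := by
  set g : ℝ → ℝ := fun y => k y * H y with hgdef
  have hgm : Measurable g := hkmeas.mul hH.measurable
  have hgl : LocBdd g := locBdd_mul hkbdd hH
  set ψ₁ : ℝ → ℝ := fun u => W' (max u 0) with hψ₁
  set ψ₂ : ℝ → ℝ := fun u => W'' (max u 0) with hψ₂
  have hψ₁c : Continuous ψ₁ :=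
    hW'c.comp_continuous (continuous_id.max continuous_const) (fun u => mem_Ici.2 (le_max_right _ _))
  have hψ₂c : Continuous ψ₂ :=
    hW''c.comp_continuous (continuous_id.max continuous_const) (fun u => mem_Ici.2 (le_max_right _ _))
  have hWcont : ContinuousOn W (Ici 0) := fun t ht => (hWd t ht).continuousWithinAt
  have hφ₁ : ∀ u : ℝ, 0 ≤ u → (∫ t in (0:ℝ)..u, ψ₁ t) = W u := by
    intro u hu
    have h1 : (∫ t in (0:ℝ)..u, ψ₁ t) = ∫ t in (0:ℝ)..u, W' t := by
      apply intervalIntegral.integral_congr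
      intro t ht
      rw [uIcc_of_le hu] at ht
      simp [hψ₁, max_eq_left ht.1]
    have h2 : (∫ t in (0:ℝ)..u, W' t) = W u - W 0 := by
      apply intervalIntegral.integral_eq_sub_of_hasDeriv_right_of_le hu
        (hWcont.mono Icc_subset_Ici_self)
      · intro t ht
        exact (hWd t (le_of_lt ht.1)).mono (fun z hz => le_of_lt (lt_trans ht.1 hz))
      · apply ContinuousOn.intervalIntegrable
        rw [uIcc_of_le hu]
        exact hW'c.mono Icc_subset_Ici_self
    rw [h1, h2, hW0, sub_zero]
  have hφ₂ : ∀ u : ℝ, 0 ≤ u → (∫ t in (0:ℝ)..u, ψ₂ t) = W' u - W' 0 := by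
    intro u hu
    have h1 : (∫ t in (0:ℝ)..u, ψ₂ t) = ∫ t in (0:ℝ)..u, W'' t := by
      apply intervalIntegral.integral_congr
      intro t ht
      rw [uIcc_of_le hu] at ht
      simp [hψ₂, max_eq_left ht.1]
    have h2 : (∫ t in (0:ℝ)..u, W'' t) = W' u - W' 0 := by
      apply intervalIntegral.integral_eq_sub_of_hasDeriv_right_of_le hu
        (hW'c.mono Icc_subset_Ici_self)
      · intro t ht
        exact (hW'd t ht.1).hasDerivWithinAt
      · apply ContinuousOn.intervalIntegrable
        rw [uIcc_of_le hu]
        exact hW''c.mono Icc_subset_Ici_self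
    rw [h1, h2]
  set M₁ : ℝ → ℝ := fun x => ∫ y in a..x, ψ₁ (x - y) * g y with hM₁
  refine ⟨M₁, ?_, ?_⟩
  · filter_upwards [Ioi_mem_nhds hx₀] with x hx
    have hd := lemA hψ₁c hgm hgl (show a < x from hx)
    refine hd.congr_of_eventuallyEq ?_
    filter_upwards [Ioi_mem_nhds (show a < x from hx)] with z hz
    show volInt W k H a z = ∫ y in a..z, (∫ t in (0:ℝ)..(z - y), ψ₁ t) * g y
    unfold volInt
    apply intervalIntegral.integral_congr
    intro y hy
    rw [uIcc_of_le (le_of_lt hz)] at hy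
    show W (z - y) * k y * H y = (∫ t in (0:ℝ)..(z - y), ψ₁ t) * g y
    rw [hφ₁ (z - y) (by linarith [hy.2])]
    simp only [hgdef]
    ring
  · have hGint : IntervalIntegrable g volume a x₀ := by
      have h1 : (fun y => (1:ℝ) * g y) = g := by funext y; ring
      rw [← h1]
      exact intInt continuous_const hgm hgl a x₀
    have hG : HasDerivAt (fun x => ∫ y in a..x, g y) (g x₀) x₀ := by
      apply intervalIntegral.integral_hasDerivAt_right hGint
        ⟨univ, univ_mem, hgm.aestronglyMeasurable.restrict⟩
      exact hkcont.mul hH.continuousAt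
    have hL2 := lemA hψ₂c hgm hgl hx₀
    have hcomb := (hG.const_mul (W' 0)).add hL2
    have heq : M₁ =ᶠ[𝓝 x₀] fun x => W' 0 * (∫ y in a..x, g y) +
        ∫ y in a..x, (∫ t in (0:ℝ)..(x - y), ψ₂ t) * g y := by
      filter_upwards [Ioi_mem_nhds hx₀] with x hx
      have hψ₂prim : Continuous fun u : ℝ => ∫ t in (0:ℝ)..u, ψ₂ t :=
        intervalIntegral.continuous_primitive (fun c d => hψ₂c.intervalIntegrable c d) 0
      have hint2 : IntervalIntegrable (fun y => (∫ t in (0:ℝ)..(x - y), ψ₂ t) * g y)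
          volume a x :=
        intInt (hψ₂prim.comp (continuous_const.sub continuous_id)) hgm hgl a x
      have hint1 : IntervalIntegrable (fun y => W' 0 * g y) volume a x :=
        intInt continuous_const hgm hgl a x
      have hsplit : M₁ x =
          ∫ y in a..x, (W' 0 * g y + (∫ t in (0:ℝ)..(x - y), ψ₂ t) * g y) := by
        apply intervalIntegral.integral_congr
        intro y hy
        rw [uIcc_of_le (le_of_lt hx)] at hy
        have h0 : (0:ℝ) ≤ x - y := by linarith [hy.2]
        show ψ₁ (x - y) * g y = W' 0 * g y + (∫ t in (0:ℝ)..(x - y), ψ₂ t) * g y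
        rw [hφ₂ (x - y) h0]
        simp only [hψ₁, max_eq_left h0]
        ring
      rw [hsplit, intervalIntegral.integral_add hint1 hint2,
        intervalIntegral.integral_const_mul]
    have hfinal := hcomb.congr_of_eventuallyEq heq
    have hval : W' 0 * g x₀ + (∫ y in a..x₀, ψ₂ (x₀ - y) * g y)
        = W' 0 * k x₀ * H x₀ + ∫ y in a..x₀, W'' (x₀ - y) * k y * H y := by
      congr 1
      · simp only [hgdef]; ring
      · apply intervalIntegral.integral_congr
        intro y hy
        rw [uIcc_of_le (le_of_lt hx₀)] at hy
        have h0 : (0:ℝ) ≤ x₀ - y := by linarith [hy.2]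
        simp only [hψ₂, hgdef, max_eq_left h0]
        ring
    rw [← hval]
    exact hfinal
end
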